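/- arXiv:2311.04117 — 8 statements merged into one kernel-verified Lean document; each statement's English description precedes it below -/
import Mathlib

section
/- Let H be a real Hilbert space and T : H → H a nonexpansive (1-Lipschitz) and cyclically monotone map (i.e., for every n ≥ 2 and every finite cycle x₁,…,xₙ₊₁ in H with xₙ₊₁ = x₁, one has ∑_{k=1}^n ⟨x_{k+1} − x_k, T x_k⟩ ≤ 0). Then there exists a proper lower semicontinuous convex function f : H → ℝ ∪ {+∞} such that T is the proximity operator of f, i.e., for every x ∈ H, T x is the unique minimizer of y ↦ f(y) + ‖x − y‖²/2. -/
open RealInnerProductSpace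

/-- `f : H → EReal` is proper, lower semicontinuous, and convex. -/
def ProperLscConvex {H : Type*} [NormedAddCommGroup H] [InnerProductSpace ℝ H]
    (f : H → EReal) : Prop :=
  (∃ x, f x ≠ ⊤) ∧ (∀ x, f x ≠ ⊥) ∧ LowerSemicontinuous f ∧
    ∀ x y : H, ∀ t : ℝ, 0 ≤ t → t ≤ 1 →
      f (t • x + (1 - t) • y) ≤ (t : EReal) * f x + ((1 - t : ℝ) : EReal) * f y

section Aux

variable {H : Type*} [NormedAddCommGroup H] [InnerProductSpace ℝ H]

noncomputable def chainSumAux (T : H → H) (n : ℕ) (c : ℕ → H) : ℝ :=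
  ∑ k ∈ Finset.range n, ⟪c (k+1) - c k, T (c k)⟫

def chainSetAux (T : H → H) (x : H) : Set ℝ :=
  {r | ∃ n : ℕ, ∃ c : ℕ → H, c 0 = 0 ∧ c n = x ∧ chainSumAux T n c = r}

noncomputable def rockAux (T : H → H) (x : H) : ℝ := sSup (chainSetAux T x)

lemma chainSetAux_nonempty (T : H → H) (x : H) : (chainSetAux T x).Nonempty := by
  refine ⟨⟪x - 0, T 0⟫, 1, fun k => if k = 0 then 0 else x, by simp, by simp, ?_⟩
  simp [chainSumAux]

lemma chainSetAux_le (T : H → H)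
    (hcyc : ∀ n : ℕ, 2 ≤ n → ∀ x : ℕ → H, x n = x 0 →
      ∑ k ∈ Finset.range n, ⟪x (k + 1) - x k, T (x k)⟫ ≤ 0)
    (x : H) : ∀ r ∈ chainSetAux T x, r ≤ ⟪x, T x⟫ := by
  rintro r ⟨n, c, hc0, hcn, rfl⟩
  rcases Nat.eq_zero_or_pos n with hn | hn
  · subst hn
    rw [hc0] at hcn
    simp [chainSumAux, ← hcn]
  · have key := hcyc (n+1) (by omega) (fun k => if k ≤ n then c k else 0)
      (by simp [hc0])
    simp only [Finset.sum_range_succ] at key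
    have h1 : ∑ k ∈ Finset.range n,
        ⟪(if k+1 ≤ n then c (k+1) else 0) - (if k ≤ n then c k else 0),
          T (if k ≤ n then c k else 0)⟫ = chainSumAux T n c := by
      apply Finset.sum_congr rfl
      intro k hk
      have hk' := Finset.mem_range.mp hk
      rw [if_pos (by omega), if_pos (by omega)]
    rw [h1] at key
    have h2 : ((if n+1 ≤ n then c (n+1) else 0) : H) = 0 := by rw [if_neg (by omega)]
    rw [h2, if_pos le_rfl, hcn] at key
    rw [zero_sub, inner_neg_left] at key
    linarith

lemma chainSetAux_bddAbove (T : H → H)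
    (hcyc : ∀ n : ℕ, 2 ≤ n → ∀ x : ℕ → H, x n = x 0 →
      ∑ k ∈ Finset.range n, ⟪x (k + 1) - x k, T (x k)⟫ ≤ 0)
    (x : H) : BddAbove (chainSetAux T x) :=
  ⟨⟪x, T x⟫, fun r hr => chainSetAux_le T hcyc x r hr⟩

lemma rockAux_subgrad (T : H → H)
    (hcyc : ∀ n : ℕ, 2 ≤ n → ∀ x : ℕ → H, x n = x 0 →
      ∑ k ∈ Finset.range n, ⟪x (k + 1) - x k, T (x k)⟫ ≤ 0)
    (x z : H) : rockAux T x + ⟪z - x, T x⟫ ≤ rockAux T z := by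
  have hb := chainSetAux_bddAbove T hcyc z
  have : rockAux T x ≤ rockAux T z - ⟪z - x, T x⟫ := by
    apply csSup_le (chainSetAux_nonempty T x)
    rintro r ⟨n, c, hc0, hcn, rfl⟩
    have hmem : chainSumAux T n c + ⟪z - x, T x⟫ ∈ chainSetAux T z := by
      refine ⟨n+1, fun k => if k ≤ n then c k else z, by simp [hc0], by show (if n+1 ≤ n then c (n+1) else z) = z; rw [if_neg (by omega)], ?_⟩
      rw [chainSumAux, Finset.sum_range_succ]
      congr 1
      · apply Finset.sum_congr rfl
        intro k hk
        have hk' := Finset.mem_range.mp hk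
        rw [if_pos (by omega), if_pos (by omega)]
      · rw [if_neg (by omega), if_pos le_rfl, hcn]
    have := le_csSup hb hmem
    rw [rockAux]
    linarith
  linarith



lemma smooth_step (T : H → H) (hne : ∀ x y : H, ‖T x - T y‖ ≤ ‖x - y‖) (h : H → ℝ)
    (c : ℝ) (hc0 : 0 ≤ c)
    (hind : ∀ x w, h x + ⟪w - x, T x⟫ + c * ‖T w - T x‖^2 ≤ h w) :
    ∀ x w, h x + ⟪w - x, T x⟫ + (c/2 + 1/4) * ‖T w - T x‖^2 ≤ h w := by
  intro x w
  set d : H := T w - T x with hd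
  set z : H := w - (2:ℝ)⁻¹ • d with hz
  set u : H := T z - T w with hu
  have h1 := hind x z
  have h2 := hind z w
  -- rewrite inner products
  have e1 : ⟪z - x, T x⟫ = ⟪w - x, T x⟫ - 2⁻¹ * ⟪d, T x⟫ := by
    rw [hz, sub_right_comm, inner_sub_left, real_inner_smul_left]
  have e2 : ⟪w - z, T z⟫ = 2⁻¹ * ⟪d, T x⟫ + 2⁻¹ * (‖d‖^2 + ⟪d, u⟫) := by
    have hwz : w - z = (2:ℝ)⁻¹ • d := by rw [hz]; abel
    have hTz : T z = T x + (d + u) := by rw [hu, hd]; abel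
    rw [hwz, real_inner_smul_left, hTz, inner_add_right, inner_add_right,
      real_inner_self_eq_norm_sq]
    ring
  have e3 : ‖T z - T x‖^2 = ‖d‖^2 + 2*⟪d,u⟫ + ‖u‖^2 := by
    have : T z - T x = d + u := by rw [hu, hd]; abel
    rw [this, norm_add_sq_real]
  have e4 : ‖T w - T z‖^2 = ‖u‖^2 := by rw [← norm_neg]; congr 1; rw [hu]; abel
  -- nonexpansiveness bound
  have e5 : ‖u‖ ≤ 2⁻¹ * ‖d‖ := by
    have := hne z w
    rwa [show z - w = -((2:ℝ)⁻¹ • d) by rw [hz]; abel, norm_neg, norm_smul,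
      show ‖((2:ℝ)⁻¹ : ℝ)‖ = 2⁻¹ by norm_num, show T z - T w = u from rfl] at this
  have e6 : -(‖d‖ * ‖u‖) ≤ ⟪d, u⟫ :=
    le_trans (neg_le_neg (abs_real_inner_le_norm d u)) (neg_abs_le _)
  rw [e1] at h1; rw [e2, e4] at h2; rw [e3] at h1
  have hq : (0:ℝ) ≤ ‖d‖ := norm_nonneg _
  have hp : (0:ℝ) ≤ ‖u‖ := norm_nonneg _
  have key : (0:ℝ) ≤ (2⁻¹*‖d‖ - ‖u‖) * ((2⁻¹ + c) * ‖d‖ - 2*c*‖u‖) := by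
    apply mul_nonneg (by linarith)
    nlinarith
  nlinarith [key, e6, mul_nonneg hc0 (sq_nonneg (‖d‖ - ‖u‖))]

lemma smooth_all (T : H → H) (hne : ∀ x y : H, ‖T x - T y‖ ≤ ‖x - y‖) (h : H → ℝ)
    (hsub : ∀ x z : H, h x + ⟪z - x, T x⟫ ≤ h z) :
    ∀ x w : H, h x + ⟪w - x, T x⟫ + ‖T w - T x‖^2/2 ≤ h w := by
  have key : ∀ n : ℕ, ∀ x w : H,
      h x + ⟪w - x, T x⟫ + (1/2 - (1/2)^(n+1)) * ‖T w - T x‖^2 ≤ h w := by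
    intro n
    induction n with
    | zero =>
      intro x w
      have := hsub x w
      norm_num
      linarith [hsub x w]
    | succ m ih =>
      have hc0 : (0:ℝ) ≤ 1/2 - (1/2)^(m+1) := by
        have : ((1:ℝ)/2)^(m+1) ≤ (1/2)^1 :=
          pow_le_pow_of_le_one (by norm_num) (by norm_num) (by omega)
        simpa using this
      have step := smooth_step T hne h _ hc0 ih
      intro x w
      have := step x w
      have heq : (1/2 - (1/2:ℝ)^(m+1))/2 + 1/4 = 1/2 - (1/2)^(m+1+1) := by
        rw [pow_succ]; ring
      rw [heq] at this
      exact this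
  intro x w
  by_contra hcon
  push_neg at hcon
  set Q : ℝ := ‖T w - T x‖^2 with hQ
  have hQ0 : 0 ≤ Q := sq_nonneg _
  set δ : ℝ := h x + ⟪w - x, T x⟫ + Q/2 - h w with hδ
  have hδ0 : 0 < δ := by rw [hδ]; linarith
  obtain ⟨n, hn⟩ := exists_pow_lt_of_lt_one (show (0:ℝ) < δ / (Q + 1) by positivity)
    (show (1:ℝ)/2 < 1 by norm_num)
  have hε0 : (0:ℝ) ≤ (1/2)^n := by positivity
  have hlt : (1/2:ℝ)^n * (Q + 1) < δ := by
    rw [← lt_div_iff₀ (by linarith : (0:ℝ) < Q + 1)]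
    exact hn
  have hkey := key n x w
  have hpow : ((1:ℝ)/2)^(n+1) = (1/2)^n * (1/2) := pow_succ _ _
  nlinarith [hkey, hlt, mul_nonneg hε0 hQ0]

end Aux

theorem nonexpansive_cyclically_monotone_is_prox
    {H : Type*} [NormedAddCommGroup H] [InnerProductSpace ℝ H] [CompleteSpace H]
    (T : H → H)
    (hne : ∀ x y : H, ‖T x - T y‖ ≤ ‖x - y‖)
    (hcyc : ∀ n : ℕ, 2 ≤ n → ∀ x : ℕ → H, x n = x 0 →
      ∑ k ∈ Finset.range n, ⟪x (k + 1) - x k, T (x k)⟫ ≤ 0) :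
    ∃ f : H → EReal, ProperLscConvex f ∧
      ∀ x y : H,
        (f (T x) + ((‖x - T x‖ ^ 2 / 2 : ℝ) : EReal)
          ≤ f y + ((‖x - y‖ ^ 2 / 2 : ℝ) : EReal)) ∧
        (f y + ((‖x - y‖ ^ 2 / 2 : ℝ) : EReal)
            = f (T x) + ((‖x - T x‖ ^ 2 / 2 : ℝ) : EReal) → y = T x) := by
  have hsm := smooth_all T hne (rockAux T) (rockAux_subgrad T hcyc)
  set h : H → ℝ := rockAux T with hh
  set a : H → H → ℝ := fun w y => ⟪w - T w, y⟫ + ‖T w‖^2/2 - h w with ha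
  have ha' : ∀ w y : H, a w y = ⟪w - T w, y⟫ + ‖T w‖^2/2 - h w := fun w y => rfl
  set f : H → EReal := fun y => ⨆ w : H, ((a w y : ℝ) : EReal) with hf
  have F1 : ∀ w y : H, ((a w y : ℝ) : EReal) ≤ f y := by
    intro w y
    exact le_iSup (fun w => ((a w y : ℝ) : EReal)) w
  -- the value of f at T x
  have Freal : ∀ x w : H, a w (T x) ≤ ⟪x, T x⟫ - ‖T x‖^2/2 - h x := by
    intro x w
    have hs := hsm x w
    have n1 : ‖T w - T x‖^2 = ‖T w‖^2 - 2*⟪T w, T x⟫ + ‖T x‖^2 := by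
      rw [norm_sub_sq_real]
    rw [ha' w (T x)]
    simp only [inner_sub_left]
    rw [n1] at hs
    rw [inner_sub_left] at hs
    linarith
  have F2 : ∀ x : H, f (T x) = ((⟪x, T x⟫ - ‖T x‖^2/2 - h x : ℝ) : EReal) := by
    intro x
    apply le_antisymm
    · exact iSup_le fun w => EReal.coe_le_coe_iff.mpr (Freal x w)
    · have : a x (T x) = ⟪x, T x⟫ - ‖T x‖^2/2 - h x := by
        rw [ha]; simp only [inner_sub_left, real_inner_self_eq_norm_sq]; ring
      rw [← this]; exact F1 x (T x)
  -- key real identity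
  have Fid : ∀ x y : H, a x y + ‖x - y‖^2/2
      = (⟪x, T x⟫ - ‖T x‖^2/2 - h x) + ‖x - T x‖^2/2 + ‖y - T x‖^2/2 := by
    intro x y
    rw [ha' x y]
    simp only [inner_sub_left]
    rw [norm_sub_sq_real x y, norm_sub_sq_real x (T x), norm_sub_sq_real y (T x),
      real_inner_comm y (T x)]
    ring
  refine ⟨f, ⟨⟨T 0, ?_⟩, ?_, ?_, ?_⟩, ?_⟩
  · rw [F2 0]; exact EReal.coe_ne_top _
  · intro y
    exact ((EReal.bot_lt_coe _).trans_le (F1 0 y)).ne'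
  · apply lowerSemicontinuous_iSup
    intro w
    apply Continuous.lowerSemicontinuous
    exact continuous_coe_real_ereal.comp
      (((continuous_const.inner continuous_id).add continuous_const).sub continuous_const)
  · intro x y t ht0 ht1
    apply iSup_le
    intro w
    have hcomb : a w (t • x + (1-t) • y) = t * a w x + (1-t) * a w y := by
      rw [ha' w _, ha' w x, ha' w y]
      simp only [inner_add_right, real_inner_smul_right]
      ring
    rw [hcomb]
    push_cast
    exact add_le_add
      (mul_le_mul_of_nonneg_left (F1 w x) (by exact_mod_cast ht0))
      (mul_le_mul_of_nonneg_left (F1 w y) (by exact_mod_cast (by linarith : (0:ℝ) ≤ 1 - t)))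
  · intro x y
    constructor
    · rw [F2 x, ← EReal.coe_add]
      calc ((⟪x, T x⟫ - ‖T x‖^2/2 - h x + ‖x - T x‖^2/2 : ℝ) : EReal)
          ≤ ((a x y + ‖x - y‖^2/2 : ℝ) : EReal) := by
            apply EReal.coe_le_coe_iff.mpr
            have := Fid x y
            nlinarith [sq_nonneg ‖y - T x‖]
        _ = ((a x y : ℝ) : EReal) + ((‖x - y‖^2/2 : ℝ) : EReal) := by rw [EReal.coe_add]
        _ ≤ f y + ((‖x - y‖^2/2 : ℝ) : EReal) := add_le_add (F1 x y) le_rfl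
    · intro heq
      rw [F2 x, ← EReal.coe_add] at heq
      have hnt : f y ≠ ⊤ := by
        intro htop
        rw [htop, EReal.top_add_coe] at heq
        exact EReal.coe_ne_top _ heq.symm
      have hnb : f y ≠ ⊥ := ((EReal.bot_lt_coe _).trans_le (F1 0 y)).ne'
      set r : ℝ := (f y).toReal with hr
      have hfy : f y = (r : EReal) := (EReal.coe_toReal hnt hnb).symm
      rw [hfy, ← EReal.coe_add] at heq
      have heqr : r + ‖x - y‖^2/2 = ⟪x, T x⟫ - ‖T x‖^2/2 - h x + ‖x - T x‖^2/2 :=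
        EReal.coe_eq_coe_iff.mp heq
      have hge : a x y ≤ r := EReal.coe_le_coe_iff.mp (hfy ▸ F1 x y)
      have hid := Fid x y
      clear_value h a f r
      have hzero : ‖y - T x‖^2 ≤ 0 := by linarith
      have : ‖y - T x‖ = 0 := by
        have := sq_nonneg ‖y - T x‖
        nlinarith
      rw [norm_eq_zero, sub_eq_zero] at this
      exact this
end

section
/- Let H be a real Hilbert space and T : H → H. Then there exists a nonempty closed convex subset C of H such that T = proj_C (the metric projection onto C) if and only if for all x, y ∈ H, ⟨T y − T x, x − T x⟩ ≤ 0. -/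
open RealInnerProductSpace

theorem projection_characterization
    {H : Type*} [NormedAddCommGroup H] [InnerProductSpace ℝ H] [CompleteSpace H]
    (T : H → H) :
    (∃ C : Set H, C.Nonempty ∧ IsClosed C ∧ Convex ℝ C ∧
        ∀ x : H, T x ∈ C ∧ ∀ c ∈ C, ⟪c - T x, x - T x⟫ ≤ 0) ↔
      ∀ x y : H, ⟪T y - T x, x - T x⟫ ≤ 0 := by
  constructor
  · rintro ⟨C, -, -, -, hC⟩ x y
    exact (hC x).2 _ (hC y).1
  · intro h
    refine ⟨closure (convexHull ℝ (Set.range T)), ?_, isClosed_closure,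
      (convex_convexHull ℝ _).closure, fun x => ⟨?_, ?_⟩⟩
    · exact ⟨T 0, subset_closure (subset_convexHull ℝ _ ⟨0, rfl⟩)⟩
    · exact subset_closure (subset_convexHull ℝ _ ⟨x, rfl⟩)
    · intro c hc
      set S : Set H := {c : H | ⟪c, x - T x⟫ ≤ ⟪T x, x - T x⟫} with hS
      have hlin : IsLinearMap ℝ (fun c : H => ⟪c, x - T x⟫) :=
        ⟨fun a b => inner_add_left _ _ _, fun r a => real_inner_smul_left _ _ _⟩
      have hconv : Convex ℝ S := convex_halfSpace_le hlin _
      have hclosed : IsClosed S :=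
        isClosed_le (Continuous.inner continuous_id continuous_const) continuous_const
      have hsub : closure (convexHull ℝ (Set.range T)) ⊆ S := by
        apply closure_minimal _ hclosed
        apply convexHull_min _ hconv
        rintro _ ⟨y, rfl⟩
        have := h x y
        rw [inner_sub_left] at this
        simpa [hS, sub_nonpos] using this
      have hcS := hsub hc
      rw [inner_sub_left]
      simpa [hS, sub_nonpos] using hcS
end

section
/- Let (Ω, F, μ) be a σ-finite measure space, H a separable real Hilbert space, and for each ω ∈ Ω let f_ω : H → ℝ ∪ {+∞} be proper lsc convex. Suppose: (i) for every x ∈ L²(Ω, μ; H) the function ω ↦ f_ω(x(ω)) is measurable; (ii) there is r ∈ L²(Ω, μ; H) with ω ↦ f_ω(r(ω)) integrable; (iii) there exist s* ∈ L²(Ω, μ; H) and integrable θ : Ω → ℝ with f_ω(u) ≥ ⟨u, s*(ω)⟩ + θ(ω) for all u ∈ H and μ-a.e. ω. Then the integral functional f : L²(Ω, μ; H) → ℝ ∪ {+∞}, f(x) = ∫_Ω f_ω(x(ω)) dμ(ω), is proper, convex, and lower semicontinuous (for the L² norm topology). -/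
open MeasureTheory RealInnerProductSpace Filter Topology
open scoped ENNReal NNReal

/-- The integral functional `x ↦ ∫ f_ω(x(ω)) dμ(ω)`, with the convention that the
integral is `+∞` unless the integrand is a.e. finite and integrable. -/
noncomputable def intFun {Ω H : Type*} [MeasurableSpace Ω] (μ : Measure Ω)
    [NormedAddCommGroup H] [InnerProductSpace ℝ H]
    (f : Ω → H → EReal) (x : Ω → H) : EReal :=
  open scoped Classical in
  if (∀ᵐ ω ∂μ, f ω (x ω) ≠ ⊤) ∧ Integrable (fun ω => (f ω (x ω)).toReal) μ
  then ((∫ ω, (f ω (x ω)).toReal ∂μ : ℝ) : EReal) else ⊤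

section Aux

variable {Ω H : Type*} [MeasurableSpace Ω] {μ : Measure Ω}
  [NormedAddCommGroup H] [InnerProductSpace ℝ H]

lemma intFun_ne_bot (f : Ω → H → EReal) (x : Ω → H) : intFun μ f x ≠ ⊥ := by
  unfold intFun
  split_ifs
  · exact EReal.coe_ne_bot _
  · simp

lemma intFun_of_cond {f : Ω → H → EReal} {x : Ω → H}
    (h : (∀ᵐ ω ∂μ, f ω (x ω) ≠ ⊤) ∧ Integrable (fun ω => (f ω (x ω)).toReal) μ) :
    intFun μ f x = ((∫ ω, (f ω (x ω)).toReal ∂μ : ℝ) : EReal) := by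
  unfold intFun
  exact if_pos h

lemma intFun_of_not_cond {f : Ω → H → EReal} {x : Ω → H}
    (h : ¬ ((∀ᵐ ω ∂μ, f ω (x ω) ≠ ⊤) ∧ Integrable (fun ω => (f ω (x ω)).toReal) μ)) :
    intFun μ f x = ⊤ := by
  unfold intFun
  exact if_neg h

lemma intFun_congr {f : Ω → H → EReal} {x y : Ω → H} (h : x =ᵐ[μ] y) :
    intFun μ f x = intFun μ f y := by
  have he : (fun ω => f ω (x ω)) =ᵐ[μ] fun ω => f ω (y ω) := h.mono fun ω hω => by dsimp only; rw [hω]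
  have ht : (fun ω => (f ω (x ω)).toReal) =ᵐ[μ] fun ω => (f ω (y ω)).toReal :=
    he.mono fun ω hω => by dsimp only at hω ⊢; rw [hω]
  have h1 : ((∀ᵐ ω ∂μ, f ω (x ω) ≠ ⊤) ∧ Integrable (fun ω => (f ω (x ω)).toReal) μ) ↔
      ((∀ᵐ ω ∂μ, f ω (y ω) ≠ ⊤) ∧ Integrable (fun ω => (f ω (y ω)).toReal) μ) := by
    constructor
    · rintro ⟨ha, hb⟩
      refine ⟨(ha.and he).mono fun ω hω => ?_, hb.congr ht⟩
      have h2 : f ω (x ω) = f ω (y ω) := hω.2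
      exact h2 ▸ hω.1
    · rintro ⟨ha, hb⟩
      refine ⟨(ha.and he).mono fun ω hω => ?_, hb.congr ht.symm⟩
      have h2 : f ω (x ω) = f ω (y ω) := hω.2
      exact h2.symm ▸ hω.1
  unfold intFun
  split_ifs with hx hy hy
  · exact congrArg _ (integral_congr_ae ht)
  · exact absurd (h1.1 hx) hy
  · exact absurd (h1.2 hy) hx
  · rfl

lemma aux_coe_mul_ne_bot {c : ℝ} (hc : 0 ≤ c) {a : EReal} (ha : a ≠ ⊥) :
    (c : EReal) * a ≠ ⊥ := by
  rcases eq_or_lt_of_le hc with h0 | h0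
  · rw [← h0]
    simp [EReal.zero_mul]
  · induction a using EReal.rec with
    | bot => exact absurd rfl ha
    | coe r => rw [← EReal.coe_mul]; exact EReal.coe_ne_bot _
    | top => rw [EReal.coe_mul_top_of_pos h0]; exact top_ne_bot

end Aux

theorem integral_functional_proper_convex_lsc
    {Ω H : Type*} [MeasurableSpace Ω] {μ : Measure Ω} [SigmaFinite μ]
    [NormedAddCommGroup H] [InnerProductSpace ℝ H] [CompleteSpace H]
    [SecondCountableTopology H]
    (f : Ω → H → EReal) (hf : ∀ ω, ProperLscConvex (f ω))
    (hmeas : ∀ x : Ω → H, MemLp x 2 μ → AEMeasurable (fun ω => f ω (x ω)) μ)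
    (hr : ∃ r : Ω → H, MemLp r 2 μ ∧ (∀ᵐ ω ∂μ, f ω (r ω) ≠ ⊤) ∧
      Integrable (fun ω => (f ω (r ω)).toReal) μ)
    (hmin : ∃ s : Ω → H, MemLp s 2 μ ∧ ∃ θ : Ω → ℝ, Integrable θ μ ∧
      ∀ᵐ ω ∂μ, ∀ u : H, ((⟪u, s ω⟫ + θ ω : ℝ) : EReal) ≤ f ω u) :
    (∃ x : Lp H 2 μ, intFun μ f x ≠ ⊤) ∧
      (∀ x : Lp H 2 μ, intFun μ f x ≠ ⊥) ∧
      LowerSemicontinuous (fun x : Lp H 2 μ => intFun μ f x) ∧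
      ∀ x y : Lp H 2 μ, ∀ t : ℝ, 0 ≤ t → t ≤ 1 →
        intFun μ f (t • x + (1 - t) • y) ≤
          (t : EReal) * intFun μ f x + ((1 - t : ℝ) : EReal) * intFun μ f y := by
  obtain ⟨r, hrm, hr1, hr2⟩ := hr
  obtain ⟨s, hsm, θ, hθ, hbound⟩ := hmin
  set S : Lp H 2 μ := hsm.toLp s with hSdef
  have hS : ⇑S =ᵐ[μ] s := hsm.coeFn_toLp
  -- integrability of inner products against `s`
  have hinner : ∀ x : Lp H 2 μ, Integrable (fun ω => (⟪x ω, s ω⟫ : ℝ)) μ := by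
    intro x
    exact (L2.integrable_inner (𝕜 := ℝ) x S).congr (hS.mono fun ω hω => by dsimp only; rw [hω])
  -- properness
  have hproper : ∃ x : Lp H 2 μ, intFun μ f ⇑x ≠ ⊤ := by
    refine ⟨hrm.toLp r, ?_⟩
    rw [intFun_congr (hrm.coeFn_toLp), intFun_of_cond ⟨hr1, hr2⟩]
    exact EReal.coe_ne_top _
  -- the key sequential lower semicontinuity lemma
  have key : ∀ (x : Lp H 2 μ) (u : ℕ → Lp H 2 μ) (C : ℝ),
      (∀ n, intFun μ f ⇑(u n) ≤ (C : EReal)) → Tendsto u atTop (𝓝 x) →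
      intFun μ f ⇑x ≤ (C : EReal) := by
    intro x u C hC hu
    have hcond : ∀ n, (∀ᵐ ω ∂μ, f ω (u n ω) ≠ ⊤) ∧
        Integrable (fun ω => (f ω (u n ω)).toReal) μ := by
      intro n
      by_contra hc
      have := hC n
      rw [intFun_of_not_cond hc] at this
      exact (EReal.coe_lt_top C).not_ge this
    have hint : ∀ n, ∫ ω, (f ω (u n ω)).toReal ∂μ ≤ C := by
      intro n
      have := hC n
      rwa [intFun_of_cond (hcond n), EReal.coe_le_coe_iff] at this
    -- extract an a.e. convergent subsequence
    have htm : TendstoInMeasure μ (fun n => ⇑(u n)) atTop ⇑x := by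
      apply tendstoInMeasure_of_tendsto_eLpNorm (p := 2) two_ne_zero
        (fun n => Lp.aestronglyMeasurable _) (Lp.aestronglyMeasurable _)
      have h1 : ∀ n, eLpNorm (⇑(u n) - ⇑x) 2 μ = ENNReal.ofReal ‖u n - x‖ := by
        intro n
        rw [← eLpNorm_congr_ae (Lp.coeFn_sub (u n) x), Lp.norm_def,
          ENNReal.ofReal_toReal (Lp.eLpNorm_ne_top _)]
      simp_rw [h1]
      have h2 : Tendsto (fun n => ‖u n - x‖) atTop (𝓝 0) :=
        tendsto_iff_norm_sub_tendsto_zero.mp hu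
      simpa using ENNReal.tendsto_ofReal h2
    obtain ⟨k, hk, haeconv⟩ := htm.exists_seq_tendsto_ae
    set g : ℕ → Ω → ℝ := fun n ω => (f ω (u (k n) ω)).toReal with hgdef
    set ln : ℕ → Ω → ℝ := fun n ω => ⟪(u (k n)) ω, s ω⟫ + θ ω with hlndef
    set l0 : Ω → ℝ := fun ω => ⟪x ω, s ω⟫ + θ ω with hl0def
    set ψ : ℕ → Ω → ℝ≥0∞ := fun n ω => ENNReal.ofReal (g n ω - ln n ω) with hψdef
    have hln_int : ∀ n, Integrable (ln n) μ := fun n => (hinner (u (k n))).add hθ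
    have hl0_int : Integrable l0 μ := (hinner x).add hθ
    -- convergence of the linear lower bound integrals
    have hIn : Tendsto (fun n => ∫ ω, (⟪(u (k n)) ω, s ω⟫ : ℝ) ∂μ) atTop
        (𝓝 (∫ ω, (⟪x ω, s ω⟫ : ℝ) ∂μ)) := by
      have h2 : ∀ y : Lp H 2 μ, (⟪y, S⟫ : ℝ) = ∫ ω, (⟪y ω, s ω⟫ : ℝ) ∂μ := by
        intro y
        rw [L2.inner_def]
        exact integral_congr_ae (hS.mono fun ω hω => by dsimp only; rw [hω])
      have h1 : Tendsto (fun n => (⟪u (k n), S⟫ : ℝ)) atTop (𝓝 (⟪x, S⟫ : ℝ)) :=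
        Filter.Tendsto.inner (hu.comp hk.tendsto_atTop) tendsto_const_nhds
      simp_rw [h2] at h1
      exact h1
    have hln_tend : Tendsto (fun n => ∫ ω, ln n ω ∂μ) atTop (𝓝 (∫ ω, l0 ω ∂μ)) := by
      have h1 : ∀ n, ∫ ω, ln n ω ∂μ = (∫ ω, (⟪(u (k n)) ω, s ω⟫ : ℝ) ∂μ) + ∫ ω, θ ω ∂μ :=
        fun n => integral_add (hinner (u (k n))) hθ
      have h0 : ∫ ω, l0 ω ∂μ = (∫ ω, (⟪x ω, s ω⟫ : ℝ) ∂μ) + ∫ ω, θ ω ∂μ :=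
        integral_add (hinner x) hθ
      simp_rw [h1, h0]
      exact hIn.add_const _
    -- a.e. lower bounds
    have hlb : ∀ n, ∀ᵐ ω ∂μ, ln n ω ≤ g n ω := by
      intro n
      filter_upwards [hbound, (hcond (k n)).1] with ω h1 h2
      have h3 := h1 (u (k n) ω)
      have h4 := EReal.toReal_le_toReal h3 (EReal.coe_ne_bot _) h2
      rwa [EReal.toReal_coe] at h4
    have hφ_nonneg : ∀ n, 0 ≤ᵐ[μ] fun ω => g n ω - ln n ω := by
      intro n
      filter_upwards [hlb n] with ω h1
      simpa using h1
    have hφ_int : ∀ n, Integrable (fun ω => g n ω - ln n ω) μ :=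
      fun n => ((hcond (k n)).2).sub (hln_int n)
    have hlnC : ∀ n, ∫ ω, ln n ω ∂μ ≤ C := fun n =>
      le_trans (integral_mono_ae (hln_int n) (hcond (k n)).2 (hlb n)) (hint (k n))
    have hl0C : ∫ ω, l0 ω ∂μ ≤ C := le_of_tendsto hln_tend (Eventually.of_forall hlnC)
    -- the liminf bound on the lintegrals
    have hlint : ∀ n, ∫⁻ ω, ψ n ω ∂μ = ENNReal.ofReal (∫ ω, (g n ω - ln n ω) ∂μ) :=
      fun n => (ofReal_integral_eq_lintegral_ofReal (hφ_int n) (hφ_nonneg n)).symm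
    have hliminf : liminf (fun n => ∫⁻ ω, ψ n ω ∂μ) atTop ≤
        ENNReal.ofReal (C - ∫ ω, l0 ω ∂μ) := by
      have h1 : ∀ n, ∫⁻ ω, ψ n ω ∂μ ≤ ENNReal.ofReal (C - ∫ ω, ln n ω ∂μ) := by
        intro n
        rw [hlint n]
        apply ENNReal.ofReal_le_ofReal
        rw [integral_sub (hcond (k n)).2 (hln_int n)]
        have := hint (k n)
        linarith
      have h2 : Tendsto (fun n => ENNReal.ofReal (C - ∫ ω, ln n ω ∂μ)) atTop
          (𝓝 (ENNReal.ofReal (C - ∫ ω, l0 ω ∂μ))) :=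
        ENNReal.tendsto_ofReal (tendsto_const_nhds.sub hln_tend)
      calc liminf (fun n => ∫⁻ ω, ψ n ω ∂μ) atTop
          ≤ liminf (fun n => ENNReal.ofReal (C - ∫ ω, ln n ω ∂μ)) atTop :=
            liminf_le_liminf (Eventually.of_forall h1)
        _ = _ := h2.liminf_eq
    -- pointwise claim
    have hae1 : ∀ᵐ ω ∂μ, ∀ n, f ω (u (k n) ω) ≠ ⊤ := ae_all_iff.2 fun n => (hcond (k n)).1
    have hptwise : ∀ᵐ ω ∂μ, ∀ c : ℝ, (c : EReal) < f ω (x ω) →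
        ENNReal.ofReal (c - l0 ω) ≤ liminf (fun n => ψ n ω) atTop := by
      filter_upwards [hae1, haeconv, hbound] with ω h1 h2 h3
      intro c hc
      have hlsc := (hf ω).2.2.1 (x ω) (c : EReal) hc
      have hev : ∀ᶠ n in atTop, (c : EReal) < f ω (u (k n) ω) := h2.eventually hlsc
      have hten : Tendsto (fun n => ln n ω) atTop (𝓝 (l0 ω)) := by
        exact Tendsto.add_const _ (Filter.Tendsto.inner h2 tendsto_const_nhds)
      have hev2 : ∀ᶠ n in atTop, ENNReal.ofReal (c - ln n ω) ≤ ψ n ω := by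
        filter_upwards [hev] with n hn
        apply ENNReal.ofReal_le_ofReal
        have h4 := EReal.toReal_le_toReal hn.le (EReal.coe_ne_bot _) (h1 n)
        rw [EReal.toReal_coe] at h4
        have : c ≤ g n ω := h4
        linarith
      calc ENNReal.ofReal (c - l0 ω)
          = liminf (fun n => ENNReal.ofReal (c - ln n ω)) atTop :=
            (Filter.Tendsto.liminf_eq (ENNReal.tendsto_ofReal
              (tendsto_const_nhds.sub hten))).symm
        _ ≤ liminf (fun n => ψ n ω) atTop := liminf_le_liminf hev2
    -- Fatou
    have hψ_meas : ∀ n, AEMeasurable (ψ n) μ := by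
      intro n
      apply ENNReal.measurable_ofReal.comp_aemeasurable
      exact (((hmeas _ (Lp.memLp (u (k n)))).ereal_toReal).sub (hln_int n).1.aemeasurable)
    have hFatou : ∫⁻ ω, liminf (fun n => ψ n ω) atTop ∂μ ≤
        ENNReal.ofReal (C - ∫ ω, l0 ω ∂μ) :=
      le_trans (lintegral_liminf_le' hψ_meas) hliminf
    -- the limit candidate
    set Ψ : Ω → ℝ≥0∞ := fun ω =>
      if f ω (x ω) = ⊤ then ⊤ else ENNReal.ofReal ((f ω (x ω)).toReal - l0 ω) with hΨdef
    have hΨ_le : ∀ᵐ ω ∂μ, Ψ ω ≤ liminf (fun n => ψ n ω) atTop := by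
      filter_upwards [hptwise] with ω hω
      by_cases htop : f ω (x ω) = ⊤
      · simp only [hΨdef, if_pos htop]
        set L := liminf (fun n => ψ n ω) atTop with hL
        by_contra hlt
        have hLne : L ≠ ⊤ := fun h => hlt (h ▸ le_rfl)
        have h5 := hω (L.toReal + 1 + l0 ω) (by rw [htop]; exact EReal.coe_lt_top _)
        have h6 : ENNReal.ofReal (L.toReal + 1) ≤ L := by
          have : L.toReal + 1 + l0 ω - l0 ω = L.toReal + 1 := by ring
          rwa [this] at h5
        have h7 : L < ENNReal.ofReal (L.toReal + 1) :=
          (ENNReal.lt_ofReal_iff_toReal_lt hLne).2 (by linarith)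
        exact absurd h6 h7.not_ge
      · simp only [hΨdef, if_neg htop]
        have hne : f ω (x ω) ≠ ⊥ := (hf ω).2.1 _
        have hseq : Tendsto (fun m : ℕ => ENNReal.ofReal
            (((f ω (x ω)).toReal - 1 / (m + 1)) - l0 ω)) atTop
            (𝓝 (ENNReal.ofReal ((f ω (x ω)).toReal - l0 ω))) := by
          apply ENNReal.tendsto_ofReal
          have h8 : Tendsto (fun m : ℕ => (f ω (x ω)).toReal - 1 / (m + 1) - l0 ω) atTop
              (𝓝 ((f ω (x ω)).toReal - 0 - l0 ω)) :=
            Tendsto.sub_const ((tendsto_const_nhds).sub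
              tendsto_one_div_add_atTop_nhds_zero_nat) _
          simpa using h8
        refine le_of_tendsto hseq (Eventually.of_forall fun m => hω _ ?_)
        conv_rhs => rw [← EReal.coe_toReal htop hne]
        rw [EReal.coe_lt_coe_iff]
        have : (0 : ℝ) < 1 / (m + 1) := by positivity
        linarith
    have hΨ_lt : ∫⁻ ω, Ψ ω ∂μ ≤ ENNReal.ofReal (C - ∫ ω, l0 ω ∂μ) :=
      le_trans (lintegral_mono_ae hΨ_le) hFatou
    have hΨ_netop : ∫⁻ ω, Ψ ω ∂μ ≠ ⊤ :=
      (lt_of_le_of_lt hΨ_lt ENNReal.ofReal_lt_top).ne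
    -- measurability of Ψ
    have hF : AEMeasurable (fun ω => f ω (x ω)) μ := hmeas _ (Lp.memLp x)
    have hΨm : AEMeasurable Ψ μ := by
      obtain ⟨F', hF'm, hF'eq⟩ := hF
      obtain ⟨l', hl'm, hl'eq⟩ := hl0_int.1.aemeasurable
      refine ⟨fun ω => if F' ω = ⊤ then ⊤ else ENNReal.ofReal ((F' ω).toReal - l' ω), ?_, ?_⟩
      · apply Measurable.ite (hF'm (measurableSet_singleton ⊤)) measurable_const
        exact ENNReal.measurable_ofReal.comp ((hF'm.ereal_toReal).sub hl'm)
      · filter_upwards [hF'eq, hl'eq] with ω h1 h2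
        simp only [hΨdef, h1, h2]
    have hae_fin : ∀ᵐ ω ∂μ, f ω (x ω) ≠ ⊤ := by
      filter_upwards [ae_lt_top' hΨm hΨ_netop] with ω hω
      intro htop
      rw [hΨdef] at hω
      simp only [htop, if_pos rfl] at hω
      exact absurd hω (lt_irrefl _)
    -- integrability of the integrand at x
    have hg0m : AEStronglyMeasurable (fun ω => (f ω (x ω)).toReal) μ :=
      hF.ereal_toReal.aestronglyMeasurable
    have hlow0 : ∀ᵐ ω ∂μ, l0 ω ≤ (f ω (x ω)).toReal := by
      filter_upwards [hbound, hae_fin] with ω h1 h2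
      have h3 := h1 (x ω)
      have h4 := EReal.toReal_le_toReal h3 (EReal.coe_ne_bot _) h2
      rwa [EReal.toReal_coe] at h4
    have hΨ_eq : (fun ω => ENNReal.ofReal ((f ω (x ω)).toReal - l0 ω)) =ᵐ[μ] Ψ := by
      filter_upwards [hae_fin] with ω h1
      simp only [hΨdef, if_neg h1]
    have hφ0 : Integrable (fun ω => (f ω (x ω)).toReal - l0 ω) μ := by
      refine ⟨hg0m.sub hl0_int.1, ?_⟩
      rw [hasFiniteIntegral_iff_ofReal (hlow0.mono fun ω h => sub_nonneg.2 h)]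
      rw [lintegral_congr_ae hΨ_eq]
      exact lt_of_le_of_lt hΨ_lt ENNReal.ofReal_lt_top
    have hg0_int : Integrable (fun ω => (f ω (x ω)).toReal) μ := by
      have h9 := hφ0.add hl0_int
      exact h9.congr (Eventually.of_forall fun ω => by simp)
    -- the value bound
    have hφ0_nonneg : 0 ≤ᵐ[μ] fun ω => (f ω (x ω)).toReal - l0 ω :=
      hlow0.mono fun ω h => by simpa using h
    have hintphi0 : ∫ ω, ((f ω (x ω)).toReal - l0 ω) ∂μ ≤ C - ∫ ω, l0 ω ∂μ := by
      have h1 : ENNReal.ofReal (∫ ω, ((f ω (x ω)).toReal - l0 ω) ∂μ) ≤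
          ENNReal.ofReal (C - ∫ ω, l0 ω ∂μ) := by
        rw [ofReal_integral_eq_lintegral_ofReal hφ0 hφ0_nonneg, lintegral_congr_ae hΨ_eq]
        exact hΨ_lt
      exact (ENNReal.ofReal_le_ofReal_iff (by linarith)).1 h1
    have hval : ∫ ω, (f ω (x ω)).toReal ∂μ ≤ C := by
      have h2 := integral_sub hg0_int hl0_int
      rw [h2] at hintphi0
      linarith
    rw [intFun_of_cond ⟨hae_fin, hg0_int⟩]
    exact EReal.coe_le_coe_iff.2 hval
  -- lower semicontinuity
  have hlsc : LowerSemicontinuous (fun x : Lp H 2 μ => intFun μ f ⇑x) := by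
    rw [lowerSemicontinuous_iff_isClosed_preimage]
    intro y
    induction y using EReal.rec with
    | bot =>
      convert isClosed_empty
      ext x
      simp only [Set.mem_preimage, Set.mem_Iic, le_bot_iff, Set.mem_empty_iff_false, iff_false]
      exact intFun_ne_bot f ⇑x
    | coe C =>
      refine isClosed_of_closure_subset fun x hx => ?_
      obtain ⟨u, hu_mem, hu_tend⟩ := mem_closure_iff_seq_limit.1 hx
      exact key x u C (fun n => hu_mem n) hu_tend
    | top =>
      convert isClosed_univ
      ext x
      simp [le_top]
  -- convexity
  have hconv : ∀ x y : Lp H 2 μ, ∀ t : ℝ, 0 ≤ t → t ≤ 1 →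
      intFun μ f (t • ⇑x + (1 - t) • ⇑y) ≤
        (t : EReal) * intFun μ f ⇑x + ((1 - t : ℝ) : EReal) * intFun μ f ⇑y := by
    intro x y t ht0 ht1
    show intFun μ f (fun ω => t • x ω + (1 - t) • y ω) ≤
      (t : EReal) * intFun μ f ⇑x + ((1 - t : ℝ) : EReal) * intFun μ f ⇑y
    have hz : ⇑(t • x + (1 - t) • y) =ᵐ[μ] fun ω => t • x ω + (1 - t) • y ω := by
      filter_upwards [Lp.coeFn_add (t • x) ((1 - t) • y), Lp.coeFn_smul t x,
        Lp.coeFn_smul (1 - t) y] with ω h1 h2 h3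
      simp only [h1, Pi.add_apply, h2, h3, Pi.smul_apply]
    by_cases hx : (∀ᵐ ω ∂μ, f ω (x ω) ≠ ⊤) ∧ Integrable (fun ω => (f ω (x ω)).toReal) μ
    · by_cases hy : (∀ᵐ ω ∂μ, f ω (y ω) ≠ ⊤) ∧ Integrable (fun ω => (f ω (y ω)).toReal) μ
      · -- both finite: the main convexity estimate
        set zf : Ω → H := fun ω => t • x ω + (1 - t) • y ω with hzf
        have hzmem : MemLp zf 2 μ := (Lp.memLp (t • x + (1 - t) • y)).ae_eq hz
        have hup : ∀ᵐ ω ∂μ, f ω (zf ω) ≤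
            ((t * (f ω (x ω)).toReal + (1 - t) * (f ω (y ω)).toReal : ℝ) : EReal) := by
          filter_upwards [hx.1, hy.1] with ω hxω hyω
          have h1 := (hf ω).2.2.2 (x ω) (y ω) t ht0 ht1
          refine le_trans h1 (le_of_eq ?_)
          conv_lhs => rw [← EReal.coe_toReal hxω ((hf ω).2.1 _),
            ← EReal.coe_toReal hyω ((hf ω).2.1 _)]
          rw [← EReal.coe_mul, ← EReal.coe_mul, ← EReal.coe_add]
        have hztop : ∀ᵐ ω ∂μ, f ω (zf ω) ≠ ⊤ :=
          hup.mono fun ω h => ne_top_of_le_ne_top (EReal.coe_ne_top _) h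
        have hgz_le : (fun ω => (f ω (zf ω)).toReal) ≤ᵐ[μ]
            fun ω => t * (f ω (x ω)).toReal + (1 - t) * (f ω (y ω)).toReal := by
          filter_upwards [hup] with ω h1
          have h2 := EReal.toReal_le_toReal h1 ((hf ω).2.1 _) (EReal.coe_ne_top _)
          rwa [EReal.toReal_coe] at h2
        have hgz_ge : ∀ᵐ ω ∂μ, ⟪zf ω, s ω⟫ + θ ω ≤ (f ω (zf ω)).toReal := by
          filter_upwards [hbound, hztop] with ω h1 h2
          have h3 := h1 (zf ω)
          have h4 := EReal.toReal_le_toReal h3 (EReal.coe_ne_bot _) h2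
          rwa [EReal.toReal_coe] at h4
        have hlz_int : Integrable (fun ω => (⟪zf ω, s ω⟫ : ℝ) + θ ω) μ := by
          refine Integrable.add ?_ hθ
          exact (hinner (t • x + (1 - t) • y)).congr (hz.mono fun ω hω => by dsimp only; rw [hω])
        have hup_int : Integrable
            (fun ω => t * (f ω (x ω)).toReal + (1 - t) * (f ω (y ω)).toReal) μ :=
          (hx.2.const_mul t).add (hy.2.const_mul (1 - t))
        have hgzm : AEStronglyMeasurable (fun ω => (f ω (zf ω)).toReal) μ :=
          (hmeas zf hzmem).ereal_toReal.aestronglyMeasurable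
        have hgz_int : Integrable (fun ω => (f ω (zf ω)).toReal) μ := by
          refine Integrable.mono' (g := fun ω =>
            |t * (f ω (x ω)).toReal + (1 - t) * (f ω (y ω)).toReal| +
              |(⟪zf ω, s ω⟫ : ℝ) + θ ω|) (hup_int.abs.add hlz_int.abs) hgzm ?_
          filter_upwards [hgz_le, hgz_ge] with ω h1 h2
          rw [Real.norm_eq_abs, abs_le]
          constructor
          · have h3 := neg_abs_le ((⟪zf ω, s ω⟫ : ℝ) + θ ω)
            have h4 := abs_nonneg (t * (f ω (x ω)).toReal + (1 - t) * (f ω (y ω)).toReal)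
            linarith
          · have h3 := le_abs_self (t * (f ω (x ω)).toReal + (1 - t) * (f ω (y ω)).toReal)
            have h4 := abs_nonneg ((⟪zf ω, s ω⟫ : ℝ) + θ ω)
            linarith
        rw [intFun_of_cond ⟨hztop, hgz_int⟩, intFun_of_cond hx, intFun_of_cond hy,
          ← EReal.coe_mul, ← EReal.coe_mul, ← EReal.coe_add, EReal.coe_le_coe_iff]
        calc ∫ ω, (f ω (zf ω)).toReal ∂μ
            ≤ ∫ ω, (t * (f ω (x ω)).toReal + (1 - t) * (f ω (y ω)).toReal) ∂μ :=
              integral_mono_ae hgz_int hup_int hgz_le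
          _ = t * ∫ ω, (f ω (x ω)).toReal ∂μ + (1 - t) * ∫ ω, (f ω (y ω)).toReal ∂μ := by
              rw [integral_add (hx.2.const_mul t) (hy.2.const_mul (1 - t)),
                integral_const_mul, integral_const_mul]
      · -- intFun at y is ⊤
        rw [intFun_of_not_cond hy]
        rcases eq_or_lt_of_le ht1 with h1 | h1
        · -- t = 1
          rw [h1]
          have hz1 : (fun ω => (1:ℝ) • x ω + (1 - (1:ℝ)) • y ω) =ᵐ[μ] ⇑x :=
            Eventually.of_forall fun ω => by simp
          rw [intFun_congr hz1]
          simp only [sub_self, EReal.coe_zero, EReal.zero_mul, EReal.coe_one, EReal.one_mul,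
            add_zero]
          exact le_rfl
        · -- t < 1
          have h2 : ((1 - t : ℝ) : EReal) * (⊤ : EReal) = ⊤ :=
            EReal.coe_mul_top_of_pos (by linarith)
          rw [h2, EReal.add_top_of_ne_bot (aux_coe_mul_ne_bot ht0 (intFun_ne_bot f ⇑x))]
          exact le_top
    · -- intFun at x is ⊤
      rw [intFun_of_not_cond hx]
      rcases eq_or_lt_of_le ht0 with h1 | h1
      · -- t = 0
        rw [← h1]
        have hz0 : (fun ω => (0:ℝ) • x ω + (1 - (0:ℝ)) • y ω) =ᵐ[μ] ⇑y :=
          Eventually.of_forall fun ω => by simp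
        rw [intFun_congr hz0]
        simp only [EReal.coe_zero, EReal.zero_mul, sub_zero, EReal.coe_one, EReal.one_mul,
          zero_add]
        exact le_rfl
      · -- 0 < t
        have h2 : ((t : ℝ) : EReal) * (⊤ : EReal) = ⊤ := EReal.coe_mul_top_of_pos h1
        rw [h2, EReal.top_add_of_ne_bot (aux_coe_mul_ne_bot (by linarith)
          (intFun_ne_bot f ⇑y))]
        exact le_top
  exact ⟨hproper, fun x => intFun_ne_bot f ⇑x, hlsc, hconv⟩
end

section
/- Under the assumptions of the previous statement (f_ω proper lsc convex on a separable Hilbert space H satisfying (i)–(iii), f(x) = ∫ f_ω(x(ω)) dμ on L²(Ω, μ; H)): for x, x* ∈ L²(Ω, μ; H), if x*(ω) ∈ ∂f_ω(x(ω)) for μ-a.e. ω, then x* ∈ ∂f(x), where ∂ denotes the convex subdifferential. -/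
open MeasureTheory RealInnerProductSpace

/-- The convex subdifferential of an extended-real-valued function. -/
def InSubdiff {H : Type*} [NormedAddCommGroup H] [InnerProductSpace ℝ H]
    (g : H → EReal) (u u' : H) : Prop :=
  ∀ v : H, g u + ((⟪v - u, u'⟫ : ℝ) : EReal) ≤ g v

/-- The pointwise inner product of two `L²` functions is integrable. -/
lemma memLp_integrable_inner {Ω H : Type*} [MeasurableSpace Ω] {μ : Measure Ω}
    [NormedAddCommGroup H] [InnerProductSpace ℝ H]
    {u v : Ω → H} (hu : MemLp u 2 μ) (hv : MemLp v 2 μ) :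
    Integrable (fun ω => (⟪u ω, v ω⟫ : ℝ)) μ := by
  have h := L2.integrable_inner (𝕜 := ℝ) (hu.toLp u) (hv.toLp v)
  refine h.congr ?_
  filter_upwards [hu.coeFn_toLp, hv.coeFn_toLp] with ω h1 h2
  rw [h1, h2]

theorem fiberwise_subgradient_is_subgradient
    {Ω H : Type*} [MeasurableSpace Ω] {μ : Measure Ω} [SigmaFinite μ]
    [NormedAddCommGroup H] [InnerProductSpace ℝ H] [CompleteSpace H]
    [SecondCountableTopology H]
    (f : Ω → H → EReal) (hf : ∀ ω, ProperLscConvex (f ω))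
    (hmeas : ∀ x : Ω → H, MemLp x 2 μ → AEMeasurable (fun ω => f ω (x ω)) μ)
    (hr : ∃ r : Ω → H, MemLp r 2 μ ∧ (∀ᵐ ω ∂μ, f ω (r ω) ≠ ⊤) ∧
      Integrable (fun ω => (f ω (r ω)).toReal) μ)
    (hmin : ∃ s : Ω → H, MemLp s 2 μ ∧ ∃ θ : Ω → ℝ, Integrable θ μ ∧
      ∀ᵐ ω ∂μ, ∀ u : H, ((⟪u, s ω⟫ + θ ω : ℝ) : EReal) ≤ f ω u)
    (x x' : Ω → H) (hx : MemLp x 2 μ) (hx' : MemLp x' 2 μ)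
    (hsub : ∀ᵐ ω ∂μ, InSubdiff (f ω) (x ω) (x' ω)) :
    ∀ y : Ω → H, MemLp y 2 μ →
      intFun μ f x + ((∫ ω, ⟪y ω - x ω, x' ω⟫ ∂μ : ℝ) : EReal) ≤ intFun μ f y := by
  intro y hy
  classical
  by_cases hyfin : (∀ᵐ ω ∂μ, f ω (y ω) ≠ ⊤) ∧
      Integrable (fun ω => (f ω (y ω)).toReal) μ
  · obtain ⟨s, hs, θ, hθ, hminae⟩ := hmin
    have hinner : Integrable (fun ω => (⟪y ω - x ω, x' ω⟫ : ℝ)) μ :=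
      memLp_integrable_inner (hy.sub hx) hx'
    have hixs : Integrable (fun ω => (⟪x ω, s ω⟫ : ℝ)) μ :=
      memLp_integrable_inner hx hs
    -- a.e. f ω (x ω) ≠ ⊤
    have hxtop : ∀ᵐ ω ∂μ, f ω (x ω) ≠ ⊤ := by
      filter_upwards [hsub, hyfin.1] with ω h1 h2 htop
      have h := h1 (y ω)
      rw [htop, EReal.top_add_coe] at h
      exact h2 (top_le_iff.mp h)
    -- pointwise real inequality
    have hptwise : ∀ᵐ ω ∂μ,
        (f ω (x ω)).toReal + (⟪y ω - x ω, x' ω⟫ : ℝ) ≤ (f ω (y ω)).toReal := by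
      filter_upwards [hsub, hyfin.1, hxtop] with ω h1 h2 h3
      have h := h1 (y ω)
      have hb := (hf ω).2.1 (x ω)
      have hne : f ω (x ω) + ((⟪y ω - x ω, x' ω⟫ : ℝ) : EReal) ≠ ⊥ := by
        rw [Ne, EReal.add_eq_bot_iff]
        push_neg
        exact ⟨hb, EReal.coe_ne_bot _⟩
      have := EReal.toReal_le_toReal h hne h2
      rwa [EReal.toReal_add h3 hb (EReal.coe_ne_top _) (EReal.coe_ne_bot _),
        EReal.toReal_coe] at this
    -- lower bound
    have hlow : (fun ω => (⟪x ω, s ω⟫ : ℝ) + θ ω) ≤ᵐ[μ]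
        fun ω => (f ω (x ω)).toReal := by
      filter_upwards [hminae, hxtop] with ω h1 h2
      have h := h1 (x ω)
      have := EReal.toReal_le_toReal h (EReal.coe_ne_bot _) h2
      rwa [EReal.toReal_coe] at this
    -- upper bound
    have hupp : (fun ω => (f ω (x ω)).toReal) ≤ᵐ[μ]
        fun ω => (f ω (y ω)).toReal - (⟪y ω - x ω, x' ω⟫ : ℝ) := by
      filter_upwards [hptwise] with ω h
      linarith
    have hmx : AEStronglyMeasurable (fun ω => (f ω (x ω)).toReal) μ :=
      ((hmeas x hx).ereal_toReal).aestronglyMeasurable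
    have intx : Integrable (fun ω => (f ω (x ω)).toReal) μ :=
      integrable_of_le_of_le hmx hlow hupp (hixs.add hθ) (hyfin.2.sub hinner)
    rw [intFun, intFun, if_pos ⟨hxtop, intx⟩, if_pos hyfin, ← EReal.coe_add,
      EReal.coe_le_coe_iff, ← integral_add intx hinner]
    exact integral_mono_ae (intx.add hinner) hyfin.2 hptwise
  · rw [show intFun μ f y = ⊤ from by rw [intFun, if_neg hyfin]]
    exact le_top
end

section
/- Let (Ω, F, μ) be a σ-finite measure space, H a separable real Hilbert space, and (f_ω)_{ω∈Ω} proper lsc convex functions on H satisfying the integrability assumptions: ω ↦ f_ω(x(ω)) is measurable for each x ∈ L², there is r ∈ L² with ω ↦ f_ω(r(ω)) integrable, and there is an L² affine minorant. Define f(x) = ∫_Ω f_ω(x(ω)) dμ(ω) on L²(Ω, μ; H). Then the Legendre–Fenchel conjugate satisfies f*(x*) = ∫_Ω f_ω*(x*(ω)) dμ(ω) for every x* ∈ L²(Ω, μ; H). -/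
open MeasureTheory RealInnerProductSpace

/-- `p` is the proximal point of `g` at `u` with index `γ`. -/
def IsProxPt {H : Type*} [NormedAddCommGroup H] [InnerProductSpace ℝ H]
    (γ : ℝ) (g : H → EReal) (u p : H) : Prop :=
  ∀ v : H, g p + ((‖u - p‖ ^ 2 / (2 * γ) : ℝ) : EReal) ≤
    g v + ((‖u - v‖ ^ 2 / (2 * γ) : ℝ) : EReal)

/-- The Legendre–Fenchel conjugate of an extended-real-valued function. -/
noncomputable def conjFn {H : Type*} [NormedAddCommGroup H] [InnerProductSpace ℝ H]
    (g : H → EReal) (u' : H) : EReal :=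
  ⨆ u : H, ((⟪u, u'⟫ : ℝ) : EReal) - g u

set_option linter.unusedSectionVars false

namespace CJ
variable {H : Type*} [NormedAddCommGroup H] [InnerProductSpace ℝ H]

noncomputable def phi (f : H → EReal) (P : H → H) (u : H) : ℝ := (f (P u)).toReal

noncomputable def env (f : H → EReal) (P : H → H) (u : H) : ℝ :=
  phi f P u + ‖u - P u‖ ^ 2 / 2

section
variable {f : H → EReal} {P : H → H}
  (hf : ProperLscConvex f) (hP : ∀ u, IsProxPt 1 f u (P u))

include hf hP

lemma prox_ne_top (u : H) : f (P u) ≠ ⊤ := by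
  obtain ⟨x₀, hx₀⟩ := hf.1
  have h := hP u x₀
  intro htop
  rw [htop, EReal.top_add_of_ne_bot (EReal.coe_ne_bot _), top_le_iff] at h
  exact (EReal.add_lt_top hx₀ (EReal.coe_ne_top _)).ne h

lemma prox_eq_coe (u : H) : f (P u) = ((phi f P u : ℝ) : EReal) := by
  rw [phi, EReal.coe_toReal (prox_ne_top hf hP u) (hf.2.1 _)]

/-- prox inequality in real form against a finite value of `f`. -/
lemma prox_ineq_real (u v : H) (hv : f v ≠ ⊤) :
    phi f P u + ‖u - P u‖ ^ 2 / 2 ≤ (f v).toReal + ‖u - v‖ ^ 2 / 2 := by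
  have h := hP u v
  rw [prox_eq_coe hf hP (u := u), ← EReal.coe_toReal hv (hf.2.1 v), ← EReal.coe_add,
    ← EReal.coe_add, EReal.coe_le_coe_iff] at h
  norm_num at h
  linarith


/-- subgradient inequality: `u - P u ∈ ∂f(P u)`, real form. -/
lemma subgrad_real (u v : H) (hv : f v ≠ ⊤) :
    phi f P u + ⟪u - P u, v - P u⟫ ≤ (f v).toReal := by
  set c := (f v).toReal with hc
  set p := P u with hp
  set K := ‖v - p‖ ^ 2 / 2 with hK
  have key : ∀ t : ℝ, 0 < t → t ≤ 1 →
      phi f P u + ⟪u - p, v - p⟫ ≤ c + t * K := by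
    intro t ht ht1
    have hcvx := hf.2.2.2 v p t ht.le ht1
    -- f (t•v + (1-t)•p) ≤ t f v + (1-t) f p
    rw [← EReal.coe_toReal hv (hf.2.1 v), prox_eq_coe hf hP (u := u),
      ← EReal.coe_mul, ← EReal.coe_mul, ← EReal.coe_add] at hcvx
    have hwt : f (t • v + (1 - t) • p) ≠ ⊤ :=
      ne_top_of_le_ne_top (EReal.coe_ne_top _) hcvx
    have h1 := prox_ineq_real hf hP u (t • v + (1 - t) • p) hwt
    have h2 : (f (t • v + (1 - t) • p)).toReal ≤ t * c + (1 - t) * phi f P u := by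
      have := EReal.toReal_le_toReal hcvx (hf.2.1 _) (EReal.coe_ne_top _)
      rw [EReal.toReal_coe] at this
      exact this
    have hexp : ‖u - (t • v + (1 - t) • p)‖ ^ 2
        = ‖u - p‖ ^ 2 - 2 * t * ⟪u - p, v - p⟫ + t ^ 2 * ‖v - p‖ ^ 2 := by
      have : u - (t • v + (1 - t) • p) = (u - p) - t • (v - p) := by
        rw [sub_smul, one_smul, smul_sub]; abel
      rw [this, norm_sub_sq_real, real_inner_smul_right, norm_smul]
      simp [mul_pow, abs_of_nonneg ht.le]
      ring
    rw [hexp] at h1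
    have h3 : phi f P u + ‖u - p‖^2/2 ≤ t * c + (1 - t) * phi f P u
        + (‖u - p‖ ^ 2 - 2 * t * ⟪u - p, v - p⟫ + t ^ 2 * ‖v - p‖ ^ 2)/2 :=
      le_trans h1 (by linarith)
    have h4 : t * (phi f P u + ⟪u - p, v - p⟫) ≤ t * (c + t * K) := by
      rw [hK]; ring_nf; ring_nf at h3; linarith
    exact le_of_mul_le_mul_left (by linarith) ht
  have hK0 : 0 ≤ K := by positivity
  refine le_of_forall_pos_le_add fun ε hε => ?_
  have ht0 : 0 < min 1 (ε / (K + 1)) := lt_min one_pos (by positivity)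
  have := key _ ht0 (min_le_left _ _)
  have h5 : min 1 (ε / (K + 1)) * K ≤ ε := by
    have h6 : min 1 (ε / (K + 1)) ≤ ε / (K + 1) := min_le_right _ _
    have h7 : min 1 (ε / (K + 1)) * K ≤ (ε / (K + 1)) * K :=
      mul_le_mul_of_nonneg_right h6 hK0
    have h8 : (ε / (K + 1)) * K ≤ ε := by
      rw [div_mul_eq_mul_div, div_le_iff₀ (by linarith)]
      nlinarith
    linarith
  linarith

/-- subgradient inequality, EReal form. -/
lemma subgrad (u v : H) :
    ((phi f P u + ⟪u - P u, v - P u⟫ : ℝ) : EReal) ≤ f v := by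
  rcases eq_or_ne (f v) ⊤ with h | h
  · simp [h]
  · rw [← EReal.coe_toReal h (hf.2.1 v), EReal.coe_le_coe_iff]
    exact subgrad_real hf hP u v h

lemma env_le_real (u v : H) (hv : f v ≠ ⊤) :
    env f P u ≤ (f v).toReal + ‖u - v‖ ^ 2 / 2 :=
  prox_ineq_real hf hP u v hv

lemma env_sandwich_lower (u w : H) :
    ⟪u - w, w - P w⟫ ≤ env f P u - env f P w := by
  have h := subgrad_real hf hP w (P u) (prox_ne_top hf hP u)
  rw [← phi] at h
  have e1 : ‖(u - P u) - (w - P w)‖^2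
      = ‖u - P u‖^2 - 2*⟪u - P u, w - P w⟫ + ‖w - P w‖^2 := norm_sub_sq_real _ _
  have e2 : ⟪u - w, w - P w⟫ = ⟪(u - P u) - (w - P w), w - P w⟫
      + ⟪P u - P w, w - P w⟫ := by
    rw [← inner_add_left]; congr 1; abel
  have e3 : ⟪(u - P u) - (w - P w), w - P w⟫
      = ⟪u - P u, w - P w⟫ - ‖w - P w‖^2 := by
    rw [inner_sub_left, real_inner_self_eq_norm_sq]
  have e4 : ⟪w - P w, P u - P w⟫ = ⟪P u - P w, w - P w⟫ := real_inner_comm _ _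
  have pos : (0:ℝ) ≤ ‖(u - P u) - (w - P w)‖^2 := sq_nonneg _
  rw [e4] at h
  rw [env, env]
  linarith
 
lemma env_sandwich_upper (u w : H) :
    env f P u - env f P w ≤ ⟪u - w, w - P w⟫ + ‖u - w‖ ^ 2 / 2 := by
  have h := env_le_real hf hP u (P w) (prox_ne_top hf hP w)
  rw [← phi] at h
  have hexp : ‖u - P w‖^2 = ‖(u - w) + (w - P w)‖^2 := by
    rw [show u - P w = (u - w) + (w - P w) by abel]
  rw [hexp, norm_add_sq_real] at h
  rw [env] at h
  rw [env, env]
  linarith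

lemma env_diff_abs (u w : H) :
    |env f P u - env f P w| ≤ ‖u - w‖ * ‖w - P w‖ + ‖u - w‖ ^ 2 / 2 := by
  have h1 := env_sandwich_lower hf hP u w
  have h2 := env_sandwich_upper hf hP u w
  have h3 := abs_real_inner_le_norm (u - w) (w - P w)
  rw [abs_le] at *
  constructor <;> nlinarith [h3.1, h3.2]

lemma prox_firm (u w : H) : ‖P u - P w‖ ^ 2 ≤ ⟪u - w, P u - P w⟫ := by
  have h1 := subgrad_real hf hP u (P w) (prox_ne_top hf hP w)
  have h2 := subgrad_real hf hP w (P u) (prox_ne_top hf hP u)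
  rw [← phi] at h1 h2
  have h3 : ⟪u - P u, P w - P u⟫ + ⟪w - P w, P u - P w⟫ ≤ 0 := by linarith
  have h4 : ⟪u - P u, P w - P u⟫ = - ⟪u - P u, P u - P w⟫ := by
    rw [← inner_neg_right]; congr 1; abel
  have h5 : ⟪u - w, P u - P w⟫ - ⟪u - P u, P u - P w⟫ + ⟪w - P w, P u - P w⟫
      = ‖P u - P w‖^2 := by
    rw [← inner_sub_left, ← inner_add_left, ← real_inner_self_eq_norm_sq]
    congr 1
    abel
  linarith

lemma prox_nonexpansive (u w : H) : ‖P u - P w‖ ≤ ‖u - w‖ := by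
  rcases eq_or_lt_of_le (norm_nonneg (P u - P w)) with h | h
  · rw [← h]; exact norm_nonneg _
  have h1 := prox_firm hf hP u w
  have h2 := real_inner_le_norm (u - w) (P u - P w)
  have := le_trans h1 h2
  rw [pow_two] at this
  exact le_of_mul_le_mul_right (by linarith) h

lemma env_riemann (n : ℕ) (hn : 0 < n) (a b : H) :
    |env f P b - env f P a - ∑ i ∈ Finset.range n,
      ⟪((n:ℝ))⁻¹ • (b - a), (a + ((i:ℝ)/(n:ℝ)) • (b - a))
        - P (a + ((i:ℝ)/(n:ℝ)) • (b - a))⟫|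
      ≤ ‖b - a‖^2 / (2*n) := by
  set δ : H := ((n:ℝ))⁻¹ • (b - a) with hδ
  set γ : ℕ → H := fun i => a + ((i:ℝ)/(n:ℝ)) • (b - a) with hγ
  have hn' : ((n:ℝ)) ≠ 0 := Nat.cast_ne_zero.mpr hn.ne'
  have hγ0 : γ 0 = a := by simp [hγ]
  have hγn : γ n = b := by
    simp only [hγ, div_self hn', one_smul]
    abel
  have hstep : ∀ i : ℕ, γ (i+1) = γ i + δ := by
    intro i
    simp only [hγ, hδ]
    have : ((i:ℝ)+1)/(n:ℝ) = (i:ℝ)/(n:ℝ) + ((n:ℝ))⁻¹ := by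
      field_simp
    push_cast
    rw [this, add_smul]
    abel
  have hdiff : ∀ i : ℕ, γ (i+1) - γ i = δ := by
    intro i; rw [hstep i]; abel
  have key : ∀ i : ℕ,
      0 ≤ env f P (γ (i+1)) - env f P (γ i) - ⟪δ, γ i - P (γ i)⟫ ∧
      env f P (γ (i+1)) - env f P (γ i) - ⟪δ, γ i - P (γ i)⟫ ≤ ‖δ‖^2/2 := by
    intro i
    have h1 := env_sandwich_lower hf hP (γ (i+1)) (γ i)
    have h2 := env_sandwich_upper hf hP (γ (i+1)) (γ i)
    rw [hdiff i] at h1 h2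
    constructor <;> linarith
  have htel : env f P b - env f P a
      = ∑ i ∈ Finset.range n, (env f P (γ (i+1)) - env f P (γ i)) := by
    rw [Finset.sum_range_sub (fun i => env f P (γ i)) n, hγ0, hγn]
  have hsplit : env f P b - env f P a - ∑ i ∈ Finset.range n, ⟪δ, γ i - P (γ i)⟫
      = ∑ i ∈ Finset.range n,
        (env f P (γ (i+1)) - env f P (γ i) - ⟪δ, γ i - P (γ i)⟫) := by
    rw [htel, ← Finset.sum_sub_distrib]
  rw [hsplit]
  have h0 : 0 ≤ ∑ i ∈ Finset.range n,
      (env f P (γ (i+1)) - env f P (γ i) - ⟪δ, γ i - P (γ i)⟫) :=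
    Finset.sum_nonneg fun i _ => (key i).1
  have h1 : ∑ i ∈ Finset.range n,
      (env f P (γ (i+1)) - env f P (γ i) - ⟪δ, γ i - P (γ i)⟫)
      ≤ n * (‖δ‖^2/2) := by
    calc _ ≤ ∑ _i ∈ Finset.range n, (‖δ‖^2/2) :=
          Finset.sum_le_sum fun i _ => (key i).2
      _ = n * (‖δ‖^2/2) := by rw [Finset.sum_const, Finset.card_range]; ring
  have hδnorm : ‖δ‖^2 = ‖b - a‖^2 / (n:ℝ)^2 := by
    have h9 : ‖δ‖ = (n:ℝ)⁻¹ * ‖b - a‖ := by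
      rw [hδ, norm_smul, norm_inv, Real.norm_natCast]
    rw [h9, mul_pow]
    field_simp
  rw [abs_of_nonneg h0]
  rw [hδnorm] at h1
  have hnpos : (0:ℝ) < (n:ℝ) := Nat.cast_pos.mpr hn
  calc _ ≤ (n:ℝ) * (‖b - a‖^2 / (n:ℝ)^2 / 2) := h1
    _ = ‖b - a‖^2 / (2*n) := by field_simp

end

section HB
variable [CompleteSpace H] {f : H → EReal} {P : H → H}
  (hf : ProperLscConvex f) (hP : ∀ u, IsProxPt 1 f u (P u))

omit [CompleteSpace H] in
lemma epi_closed (hf : ProperLscConvex f) :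
    IsClosed {p : H × ℝ | f p.1 ≤ ((p.2 : ℝ) : EReal)} := by
  rw [← isOpen_compl_iff, isOpen_iff_mem_nhds]
  intro p hp
  have hp' : ((p.2 : ℝ) : EReal) < f p.1 := lt_of_not_ge hp
  obtain ⟨q, hq1, hq2⟩ := EReal.exists_between_coe_real hp'
  have hU : ∀ᶠ v in nhds p.1, ((q : ℝ) : EReal) < f v := hf.2.2.1 p.1 q hq2
  have hprod : {v : H | ((q : ℝ) : EReal) < f v} ×ˢ Set.Iio q ∈ nhds p := by
    rw [nhds_prod_eq]
    exact Filter.prod_mem_prod hU (Iio_mem_nhds (EReal.coe_lt_coe_iff.mp hq1))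
  refine Filter.mem_of_superset hprod ?_
  rintro ⟨v, t⟩ ⟨hv, ht⟩
  simp only [Set.mem_compl_iff, Set.mem_setOf_eq, not_le]
  exact lt_trans (EReal.coe_lt_coe_iff.mpr ht) hv

omit [CompleteSpace H] in
lemma epi_convex (hf : ProperLscConvex f) :
    Convex ℝ {p : H × ℝ | f p.1 ≤ ((p.2 : ℝ) : EReal)} := by
  rintro ⟨v₁, t₁⟩ h₁ ⟨v₂, t₂⟩ h₂ a b ha hb hab
  simp only [Set.mem_setOf_eq] at h₁ h₂ ⊢
  have hne₁ : f v₁ ≠ ⊤ := ne_top_of_le_ne_top (EReal.coe_ne_top _) h₁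
  have hne₂ : f v₂ ≠ ⊤ := ne_top_of_le_ne_top (EReal.coe_ne_top _) h₂
  have hc₁ := EReal.coe_toReal hne₁ (hf.2.1 v₁)
  have hc₂ := EReal.coe_toReal hne₂ (hf.2.1 v₂)
  have hcvx := hf.2.2.2 v₁ v₂ a ha (by linarith)
  rw [show (1 : ℝ) - a = b by linarith] at hcvx
  rw [← hc₁, ← hc₂, ← EReal.coe_mul, ← EReal.coe_mul, ← EReal.coe_add] at hcvx
  refine le_trans hcvx (EReal.coe_le_coe_iff.mpr ?_)
  have e₁ : (f v₁).toReal ≤ t₁ := by rw [← EReal.coe_le_coe_iff, hc₁]; exact h₁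
  have e₂ : (f v₂).toReal ≤ t₂ := by rw [← EReal.coe_le_coe_iff, hc₂]; exact h₂
  show a * (f v₁).toReal + b * (f v₂).toReal ≤ a * t₁ + b * t₂
  have := mul_le_mul_of_nonneg_left e₁ ha
  have := mul_le_mul_of_nonneg_left e₂ hb
  linarith

include hf in
lemma exists_affine_minorant (x : H) (hx : f x ≠ ⊤) (α : ℝ) (hα : ((α : ℝ) : EReal) < f x) :
    ∃ w : H, ∃ β : ℝ, (∀ v, ((⟪v, w⟫ + β : ℝ) : EReal) ≤ f v) ∧ α < ⟪x, w⟫ + β := by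
  classical
  set C : Set (H × ℝ) := {p | f p.1 ≤ ((p.2 : ℝ) : EReal)} with hC
  have hxC : (x, α) ∉ C := by
    simp only [hC, Set.mem_setOf_eq]
    exact not_le.mpr hα
  obtain ⟨g, s, hgC, hgx⟩ := geometric_hahn_banach_closed_point
    (epi_convex hf) (epi_closed hf) hxC
  set c : ℝ := g (0, 1) with hcdef
  set gH : H →L[ℝ] ℝ := g.comp (ContinuousLinearMap.inl ℝ H ℝ) with hgH
  have hg_eq : ∀ (v : H) (t : ℝ), g (v, t) = gH v + t * c := by
    intro v t
    have hsplit : ((v, t) : H × ℝ) = (v, 0) + t • ((0 : H), (1 : ℝ)) := by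
      simp [Prod.ext_iff]
    rw [hsplit, map_add, g.map_smul]
    simp only [hgH, hcdef, ContinuousLinearMap.comp_apply, ContinuousLinearMap.inl_apply,
      smul_eq_mul]
  have hfx := EReal.coe_toReal hx (hf.2.1 x)
  have hmemx : ∀ t : ℝ, (f x).toReal ≤ t → (x, t) ∈ C := by
    intro t ht
    simp only [hC, Set.mem_setOf_eq]
    exact hfx.symm.trans_le (EReal.coe_le_coe_iff.mpr ht)
  have hc_neg : c < 0 := by
    rcases lt_trichotomy c 0 with h | h | h
    · exact h
    · exfalso
      have h1 := hgC _ (hmemx ((f x).toReal) le_rfl)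
      rw [hg_eq, h, mul_zero] at h1
      have h2 := hgx
      rw [hg_eq, h, mul_zero] at h2
      linarith
    · exfalso
      set t₀ : ℝ := max ((f x).toReal) ((s - gH x) / c) + 1 with ht₀
      have h1 := hgC _ (hmemx t₀ (by rw [ht₀]; nlinarith [le_max_left ((f x).toReal) ((s - gH x) / c)]))
      rw [hg_eq] at h1
      have h3 : (s - gH x) / c + 1 ≤ t₀ := by
        rw [ht₀]
        have := le_max_right ((f x).toReal) ((s - gH x) / c)
        linarith
      have h4 : ((s - gH x) / c + 1) * c ≤ t₀ * c := mul_le_mul_of_nonneg_right h3 h.le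
      rw [add_mul, div_mul_cancel₀ _ h.ne', one_mul] at h4
      linarith
  set z : H := (InnerProductSpace.toDual ℝ H).symm gH with hz
  have hz_eq : ∀ v : H, gH v = ⟪v, z⟫ := by
    intro v
    rw [hz, real_inner_comm]
    exact (InnerProductSpace.toDual_symm_apply).symm
  refine ⟨(-(1/c)) • z, s / c, ?_, ?_⟩
  · intro v
    rcases eq_or_ne (f v) ⊤ with hv | hv
    · simp [hv]
    · have hfv := EReal.coe_toReal hv (hf.2.1 v)
      rw [← hfv, EReal.coe_le_coe_iff]
      have hmem : (v, (f v).toReal) ∈ C := by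
        simp only [hC, Set.mem_setOf_eq]
        exact le_of_eq hfv.symm
      have h1 := hgC _ hmem
      rw [hg_eq, hz_eq] at h1
      rw [real_inner_smul_right]
      have h2 : s / c < (⟪v, z⟫ + (f v).toReal * c) / c := div_lt_div_of_neg_of_lt hc_neg h1
      rw [add_div, mul_div_cancel_right₀ _ hc_neg.ne] at h2
      have h5 : ⟪v, z⟫ / c = -(-(1/c) * ⟪v, z⟫) := by field_simp
      linarith [h2, h5.le, h5.ge]
  · have h2 := hgx
    rw [hg_eq, hz_eq] at h2
    -- s < ⟪x,z⟫ + α c, c < 0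
    have h3 : (⟪x, z⟫ + α * c) / c < s / c := div_lt_div_of_neg_of_lt hc_neg h2
    rw [add_div, mul_div_cancel_right₀ _ hc_neg.ne] at h3
    rw [real_inner_smul_right]
    have h5 : ⟪x, z⟫ / c = -(-(1/c) * ⟪x, z⟫) := by field_simp
    linarith [h3, h5.le, h5.ge]

include hf hP in
lemma env_sup_ge (x : H) (hx : f x ≠ ⊤) (α : ℝ) (hα : ((α : ℝ) : EReal) < f x) :
    ∃ u : H, α < env f P u - ‖u - x‖ ^ 2 / 2 := by
  obtain ⟨w, β, hmin, hval⟩ := exists_affine_minorant hf x hx α hα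
  refine ⟨x + w, ?_⟩
  set p := P (x + w) with hpdef
  have h1 : ⟪p, w⟫ + β ≤ phi f P (x + w) := by
    have := hmin p
    rw [prox_eq_coe hf hP, EReal.coe_le_coe_iff] at this
    exact this
  set a := (x + w) - p with hadef
  have h2 : (0:ℝ) ≤ ‖a - w‖ ^ 2 := sq_nonneg _
  have e1 : ‖a - w‖ ^ 2 = ‖a‖ ^ 2 - 2 * ⟪a, w⟫ + ‖w‖ ^ 2 := norm_sub_sq_real _ _
  have e2 : ⟪a, w⟫ = ⟪x, w⟫ + ‖w‖ ^ 2 - ⟪p, w⟫ := by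
    rw [hadef, inner_sub_left, inner_add_left, real_inner_self_eq_norm_sq]
  have e3 : ‖(x + w) - x‖ ^ 2 = ‖w‖ ^ 2 := by rw [add_sub_cancel_left]
  rw [env, e3, ← hpdef, ← hadef]
  linarith

include hf hP in
lemma anchor_sup (d : ℕ → H) (hd : DenseRange d) (x : H) (hx : f x ≠ ⊤) :
    ⨆ k, (((env f P (x + d k) - env f P x - ‖d k‖^2/2 : ℝ)) : EReal)
      = (((f x).toReal - env f P x : ℝ) : EReal) := by
  apply le_antisymm
  · refine iSup_le fun k => EReal.coe_le_coe_iff.mpr ?_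
    have h := env_le_real hf hP (x + d k) x hx
    have e : ‖x + d k - x‖ = ‖d k‖ := by rw [add_sub_cancel_left]
    rw [e] at h
    linarith
  · refine le_of_forall_lt fun c hc => ?_
    induction c with
    | bot =>
        exact lt_of_lt_of_le (bot_lt_iff_ne_bot.mpr (EReal.coe_ne_bot _))
          (le_iSup (fun k => (((env f P (x + d k) - env f P x - ‖d k‖^2/2 : ℝ)) : EReal)) 0)
    | coe α =>
        rw [EReal.coe_lt_coe_iff] at hc
        have hc2 : ((α + env f P x : ℝ) : EReal) < f x := by
          rw [← EReal.coe_toReal hx (hf.2.1 x), EReal.coe_lt_coe_iff]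
          linarith
        obtain ⟨u, hu⟩ := env_sup_ge hf hP x hx (α + env f P x) hc2
        set M := ‖u - P u‖ with hM
        set N := ‖u - x‖ with hN
        have hMN : (0:ℝ) < M + N + 2 := by positivity
        set ε := env f P u - ‖u - x‖^2/2 - (α + env f P x) with hε
        have hεpos : 0 < ε := by rw [hε]; linarith
        set dl := min 1 (ε / (M + N + 2)) with hdl
        have hdlpos : 0 < dl := lt_min one_pos (div_pos hεpos hMN)
        obtain ⟨k, hk⟩ := hd.exists_dist_lt (u - x) hdlpos
        refine lt_of_lt_of_le ?_ (le_iSup _ k)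
        rw [EReal.coe_lt_coe_iff]
        set e := ‖(x + d k) - u‖ with he
        have he_eq : e = dist (u - x) (d k) := by
          rw [he, dist_eq_norm, ← norm_neg]
          congr 1
          abel
        have he1 : e < dl := he_eq ▸ hk
        have he0 : 0 ≤ e := he ▸ norm_nonneg _
        have hed : e ≤ 1 := le_trans he1.le (min_le_left _ _)
        have hee : e * (M + N + 2) < ε := by
          have : dl ≤ ε / (M + N + 2) := min_le_right _ _
          calc e * (M + N + 2) < dl * (M + N + 2) :=
                mul_lt_mul_of_pos_right he1 hMN
            _ ≤ (ε / (M + N + 2)) * (M + N + 2) :=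
                mul_le_mul_of_nonneg_right this hMN.le
            _ = ε := by field_simp
        have henv := env_diff_abs hf hP (x + d k) u
        rw [← he, ← hM] at henv
        have hdk : ‖d k‖ ≤ N + e := by
          have : d k = (u - x) + ((x + d k) - u) := by abel
          rw [this]
          calc ‖(u - x) + ((x + d k) - u)‖ ≤ ‖u - x‖ + ‖(x + d k) - u‖ :=
                norm_add_le _ _
            _ = N + e := by rw [← hN, ← he]
        have hdksq : ‖d k‖^2 ≤ N^2 + 2*N*e + e^2 := by
          have h2 : ‖d k‖^2 ≤ (N + e)^2 :=
            pow_le_pow_left₀ (norm_nonneg _) hdk 2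
          nlinarith
        have habs := abs_le.mp henv
        have hN2 : N^2 = ‖u - x‖^2 := by rw [hN]
        have hsq : (0:ℝ) ≤ e * (2 - e) :=
          mul_nonneg he0 (by linarith : (0:ℝ) ≤ 2 - e)
        clear_value M N ε dl e
        nlinarith [habs.1, hdksq, hee, hN2, hε, hsq]
    | top => exact absurd hc (not_lt.mpr le_top)

end HB

section Conj
variable {f : H → EReal} {P : H → H}
  (hf : ProperLscConvex f) (hP : ∀ u, IsProxPt 1 f u (P u))
include hf hP

lemma le_conj (y u : H) :
    ((⟪P u, y⟫ - phi f P u : ℝ) : EReal) ≤ conjFn f y := by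
  have h := le_iSup (fun v : H => ((⟪v, y⟫ : ℝ) : EReal) - f v) (P u)
  rw [prox_eq_coe hf hP (u := u)] at h
  rw [EReal.coe_sub]
  exact h

lemma F4_real (y c v : H) (hv : f v ≠ ⊤) :
    ⟪v, y⟫ - (f v).toReal - ‖v - c‖ ^ 2 / 2
      ≤ ⟪P (c + y), y⟫ - phi f P (c + y) := by
  set p := P (c + y) with hpdef
  have hprox := prox_ineq_real hf hP (c + y) v hv
  have e1 : ‖c + y - v‖ ^ 2 = ‖c - v‖ ^ 2 + 2 * ⟪c - v, y⟫ + ‖y‖ ^ 2 := by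
    rw [show c + y - v = (c - v) + y by abel, norm_add_sq_real]
  have e2 : ‖c + y - p‖ ^ 2 = ‖c - p‖ ^ 2 + 2 * ⟪c - p, y⟫ + ‖y‖ ^ 2 := by
    rw [show c + y - p = (c - p) + y by abel, norm_add_sq_real]
  have e3 : ⟪c - v, y⟫ = ⟪c, y⟫ - ⟪v, y⟫ := inner_sub_left _ _ _
  have e4 : ⟪c - p, y⟫ = ⟪c, y⟫ - ⟪p, y⟫ := inner_sub_left _ _ _
  have e5 : ‖v - c‖ ^ 2 = ‖c - v‖ ^ 2 := by rw [norm_sub_rev]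
  have pos : (0:ℝ) ≤ ‖c - p‖ ^ 2 := sq_nonneg _
  linarith

lemma F4 (y c v : H) :
    ((⟪v, y⟫ : ℝ) : EReal) - f v - ((‖v - c‖ ^ 2 / 2 : ℝ) : EReal)
      ≤ ((⟪P (c + y), y⟫ - phi f P (c + y) : ℝ) : EReal) := by
  rcases eq_or_ne (f v) ⊤ with hv | hv
  · rw [hv]
    rw [show ((⟪v, y⟫ : ℝ) : EReal) - ⊤ = ⊥ by rfl]
    simp
  · rw [← EReal.coe_toReal hv (hf.2.1 v), ← EReal.coe_sub, ← EReal.coe_sub,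
      EReal.coe_le_coe_iff]
    exact F4_real hf hP y c v hv

include hf hP in
lemma conj_pointwise (c : ℕ → H) (hc : DenseRange c) (ρ y : H) :
    (⨆ k, ((⟪P (ρ + c k + y), y⟫ - phi f P (ρ + c k + y) : ℝ) : EReal)) = conjFn f y := by
  apply le_antisymm
  · exact iSup_le fun k => le_conj hf hP y (ρ + c k + y)
  · refine iSup_le fun v => ?_
    rcases eq_or_ne (f v) ⊤ with hv | hv
    · rw [hv, show ((⟪v, y⟫ : ℝ) : EReal) - ⊤ = ⊥ from rfl]
      exact bot_le
    · refine le_of_forall_lt fun b hb => ?_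
      induction b with
      | bot =>
          exact lt_of_lt_of_le (bot_lt_iff_ne_bot.mpr (EReal.coe_ne_bot _))
            (le_iSup (fun k => ((⟪P (ρ + c k + y), y⟫ - phi f P (ρ + c k + y) : ℝ) : EReal)) 0)
      | coe α =>
          rw [← EReal.coe_toReal hv (hf.2.1 v), ← EReal.coe_sub, EReal.coe_lt_coe_iff] at hb
          set ε := ⟪v, y⟫ - (f v).toReal - α with hε
          have hεpos : 0 < ε := by rw [hε]; linarith
          obtain ⟨k, hk⟩ := hc.exists_dist_lt (v - ρ) (Real.sqrt_pos.mpr hεpos)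
          refine lt_of_lt_of_le ?_
            (le_iSup (fun k => ((⟪P (ρ + c k + y), y⟫ - phi f P (ρ + c k + y) : ℝ) : EReal)) k)
          rw [EReal.coe_lt_coe_iff]
          have h4 := F4_real hf hP y (ρ + c k) v hv
          have h5 : ‖v - (ρ + c k)‖ < Real.sqrt ε := by
            rw [show v - (ρ + c k) = (v - ρ) - c k by abel, ← dist_eq_norm]
            exact hk
          have h6 : ‖v - (ρ + c k)‖^2 < ε := by
            have h7 := Real.sq_sqrt hεpos.le
            nlinarith [norm_nonneg (v - (ρ + c k)), Real.sqrt_nonneg ε]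
          linarith
      | top => exact absurd hb (not_lt.mpr le_top)

end Conj

lemma sup'_range_succ {g : ℕ → ℝ} (n : ℕ) :
    (Finset.range (n+2)).sup' (by simp) g
      = max ((Finset.range (n+1)).sup' (by simp) g) (g (n+1)) := by
  have hsub : (Finset.range (n+1)) ⊆ (Finset.range (n+2)) :=
    Finset.range_subset_range.mpr (by omega)
  have hne : (Finset.range (n+1)).Nonempty := Finset.nonempty_range_iff.mpr (by omega)
  apply le_antisymm
  · refine Finset.sup'_le _ _ fun k hk => ?_
    rcases Nat.lt_succ_iff_lt_or_eq.mp (Finset.mem_range.mp hk) with h | h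
    · exact le_max_of_le_left (Finset.le_sup' g (Finset.mem_range.mpr h))
    · subst h
      exact le_max_right _ _
  · refine max_le ?_ (Finset.le_sup' g (Finset.self_mem_range_succ (n+1)))
    exact Finset.sup'_mono g hsub hne

lemma coe_ciSup {A : ℕ → ℝ} (hb : BddAbove (Set.range A)) :
    (⨆ j, ((A j : ℝ) : EReal)) = ((⨆ j, A j : ℝ) : EReal) := by
  apply le_antisymm
  · exact iSup_le fun j => EReal.coe_le_coe_iff.mpr (le_ciSup hb j)
  · refine le_of_forall_lt fun b hb' => ?_
    induction b with
    | bot =>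
        exact lt_of_lt_of_le (bot_lt_iff_ne_bot.mpr (EReal.coe_ne_bot _))
          (le_iSup (fun j => ((A j : ℝ) : EReal)) 0)
    | coe α =>
        rw [EReal.coe_lt_coe_iff] at hb'
        obtain ⟨j, hj⟩ := exists_lt_of_lt_ciSup hb'
        exact lt_of_lt_of_le (EReal.coe_lt_coe_iff.mpr hj)
          (le_iSup (fun j => ((A j : ℝ) : EReal)) j)
    | top => exact absurd hb' (not_lt.mpr le_top)

section Glob
open Filter
variable {Ω : Type*} [MeasurableSpace Ω] {μ : MeasureTheory.Measure Ω} [SigmaFinite μ]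

lemma aemeasurable_iSup_ennreal {ν : MeasureTheory.Measure Ω} {g : ℕ → Ω → ENNReal}
    (h : ∀ k, AEMeasurable (g k) ν) : AEMeasurable (fun ω => ⨆ k, g k ω) ν := by
  refine ⟨fun ω => ⨆ k, (h k).mk _ ω, Measurable.iSup (fun k => (h k).measurable_mk), ?_⟩
  filter_upwards [MeasureTheory.ae_all_iff.2 fun k => (h k).ae_eq_mk] with ω hω
  exact iSup_congr hω

omit [SigmaFinite μ] in
open scoped Classical in
lemma mct_ereal {h : ℕ → Ω → ℝ} {g : Ω → EReal}
    (hint : ∀ j, Integrable (h j) μ)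
    (hmono : ∀ᵐ ω ∂μ, ∀ j, h j ω ≤ h (j+1) ω)
    (hsup : ∀ᵐ ω ∂μ, (⨆ j, ((h j ω : ℝ) : EReal)) = g ω) :
    (⨆ j, ((∫ ω, h j ω ∂μ : ℝ) : EReal))
      = if (∀ᵐ ω ∂μ, g ω ≠ ⊤) ∧ Integrable (fun ω => (g ω).toReal) μ
        then ((∫ ω, (g ω).toReal ∂μ : ℝ) : EReal) else ⊤ := by
  classical
  have hmono' : ∀ᵐ ω ∂μ, Monotone fun j => h j ω := by
    filter_upwards [hmono] with ω hω
    exact monotone_nat_of_le_succ hω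
  set F : ℕ → Ω → ENNReal := fun j ω => ENNReal.ofReal (h j ω - h 0 ω) with hFdef
  have hFmeas : ∀ j, AEMeasurable (F j) μ := fun j =>
    (((hint j).sub (hint 0)).aemeasurable).ennreal_ofReal
  have hFmono : ∀ᵐ ω ∂μ, Monotone fun j => F j ω := by
    filter_upwards [hmono'] with ω hω
    intro i j hij
    exact ENNReal.ofReal_le_ofReal (by have := hω hij; linarith)
  have hlin : ∫⁻ ω, (⨆ j, F j ω) ∂μ = ⨆ j, ∫⁻ ω, F j ω ∂μ := lintegral_iSup' hFmeas hFmono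
  have h0le : ∀ j, ∀ᵐ ω ∂μ, h 0 ω ≤ h j ω := fun j => by
    filter_upwards [hmono'] with ω hω
    exact hω (Nat.zero_le j)
  have hFj : ∀ j, ∫⁻ ω, F j ω ∂μ = ENNReal.ofReal (∫ ω, (h j ω - h 0 ω) ∂μ) := fun j =>
    (ofReal_integral_eq_lintegral_ofReal ((hint j).sub (hint 0))
      (by filter_upwards [h0le j] with ω hω; simp only [Pi.sub_apply, Pi.zero_apply]; linarith)).symm
  have hFfin : ∀ j, ∫⁻ ω, F j ω ∂μ ≠ ⊤ := fun j => by
    rw [hFj j]; exact ENNReal.ofReal_ne_top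
  have hIj : ∀ j, ∫ ω, h j ω ∂μ = ∫ ω, h 0 ω ∂μ + (∫⁻ ω, F j ω ∂μ).toReal := by
    intro j
    have hjnn : 0 ≤ ∫ ω, (h j ω - h 0 ω) ∂μ :=
      integral_nonneg_of_ae (by
        filter_upwards [h0le j] with ω hω
        simp only [Pi.zero_apply, Pi.sub_apply]
        linarith)
    rw [hFj j, ENNReal.toReal_ofReal hjnn, integral_sub (hint j) (hint 0)]
    ring
  set G : Ω → ENNReal := fun ω => ⨆ j, F j ω with hGdef
  have hGmeas : AEMeasurable G μ := aemeasurable_iSup_ennreal hFmeas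
  rcases eq_or_ne (∫⁻ ω, G ω ∂μ) ⊤ with hL | hL
  · -- infinite case : both sides ⊤
    have hsupF : (⨆ j, ∫⁻ ω, F j ω ∂μ) = ⊤ := by rw [← hlin]; exact hL
    have hunb : ∀ M : ℝ, ∃ j, M < (∫⁻ ω, F j ω ∂μ).toReal := by
      intro M
      by_contra hcon
      push_neg at hcon
      have hle : ∀ j, ∫⁻ ω, F j ω ∂μ ≤ ENNReal.ofReal M := fun j => by
        rw [← ENNReal.ofReal_toReal (hFfin j)]
        exact ENNReal.ofReal_le_ofReal (hcon j)
      have := iSup_le hle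
      rw [hsupF, top_le_iff] at this
      exact ENNReal.ofReal_ne_top this
    have hLHS : (⨆ j, ((∫ ω, h j ω ∂μ : ℝ) : EReal)) = ⊤ := by
      rw [iSup_eq_top]
      intro b hb
      induction b with
      | bot => exact ⟨0, bot_lt_iff_ne_bot.mpr (EReal.coe_ne_bot _)⟩
      | coe α =>
          obtain ⟨j, hj⟩ := hunb (α - ∫ ω, h 0 ω ∂μ)
          exact ⟨j, EReal.coe_lt_coe_iff.mpr (by rw [hIj j]; linarith)⟩
      | top => exact absurd hb (lt_irrefl _)
    have hcond : ¬((∀ᵐ ω ∂μ, g ω ≠ ⊤) ∧ Integrable (fun ω => (g ω).toReal) μ) := by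
      rintro ⟨hgtop, hgint⟩
      have hbd : ∀ᵐ ω ∂μ, G ω ≤ ENNReal.ofReal (|(g ω).toReal| + |h 0 ω|) := by
        filter_upwards [hsup, hgtop, hmono'] with ω h1 h2 h3
        refine iSup_le fun j => ?_
        have hgbot : g ω ≠ ⊥ := by
          rw [← h1]
          exact ne_bot_of_le_ne_bot (EReal.coe_ne_bot (h 0 ω))
            (le_iSup (fun j => ((h j ω : ℝ) : EReal)) 0)
        have hj_le : h j ω ≤ (g ω).toReal := by
          have hle : ((h j ω : ℝ) : EReal) ≤ g ω :=
            h1 ▸ le_iSup (fun j => ((h j ω : ℝ) : EReal)) j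
          rw [← EReal.coe_toReal h2 hgbot, EReal.coe_le_coe_iff] at hle
          exact hle
        refine ENNReal.ofReal_le_ofReal ?_
        have e1 := le_abs_self ((g ω).toReal)
        have e2 := neg_abs_le (h 0 ω)
        linarith
      have hintabs : Integrable (fun ω => |(g ω).toReal| + |h 0 ω|) μ := by
        refine (hgint.abs.add (hint 0).abs).congr ?_
        filter_upwards with ω
        simp [Pi.add_apply]
      have hfin : ∫⁻ ω, G ω ∂μ < ⊤ := by
        refine lt_of_le_of_lt (lintegral_mono_ae hbd) ?_
        rw [← ofReal_integral_eq_lintegral_ofReal hintabs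
          (by filter_upwards with ω; simp only [Pi.zero_apply]; positivity)]
        exact ENNReal.ofReal_lt_top
      exact hfin.ne hL
    rw [hLHS, if_neg hcond]
  · -- finite case
    have hGfin : ∀ᵐ ω ∂μ, G ω < ⊤ := ae_lt_top' hGmeas hL
    have hkey : ∀ᵐ ω ∂μ, g ω = ((h 0 ω + (G ω).toReal : ℝ) : EReal) := by
      filter_upwards [hsup, hmono', hGfin] with ω h1 h2 h3
      have hub : ∀ j, h j ω ≤ h 0 ω + (G ω).toReal := by
        intro j
        have hFle : F j ω ≤ G ω := le_iSup (fun j => F j ω) j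
        have h4 : (F j ω).toReal ≤ (G ω).toReal := ENNReal.toReal_mono h3.ne hFle
        have h5 : (F j ω).toReal = h j ω - h 0 ω := by
          rw [hFdef]
          exact ENNReal.toReal_ofReal (by have := h2 (Nat.zero_le j); linarith)
        linarith
      have hbdd : BddAbove (Set.range fun j => h j ω) := by
        refine ⟨h 0 ω + (G ω).toReal, ?_⟩
        rintro _ ⟨j, rfl⟩
        exact hub j
      rw [← h1, coe_ciSup hbdd]
      norm_cast
      apply le_antisymm (ciSup_le hub)
      have hsle : G ω ≤ ENNReal.ofReal ((⨆ j, h j ω) - h 0 ω) := by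
        refine iSup_le fun j => ENNReal.ofReal_le_ofReal ?_
        have := le_ciSup hbdd j
        linarith
      have h6 := ENNReal.toReal_mono ENNReal.ofReal_ne_top hsle
      rw [ENNReal.toReal_ofReal (by have := le_ciSup hbdd 0; linarith)] at h6
      linarith
    have hgtop : ∀ᵐ ω ∂μ, g ω ≠ ⊤ := by
      filter_upwards [hkey] with ω hω
      rw [hω]
      exact EReal.coe_ne_top _
    have hgtoReal : (fun ω => (g ω).toReal) =ᵐ[μ] fun ω => h 0 ω + (G ω).toReal := by
      filter_upwards [hkey] with ω hω
      rw [hω, EReal.toReal_coe]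
    have hGint : Integrable (fun ω => (G ω).toReal) μ :=
      integrable_toReal_of_lintegral_ne_top hGmeas hL
    have hgint : Integrable (fun ω => (g ω).toReal) μ :=
      ((hint 0).add hGint).congr hgtoReal.symm
    rw [if_pos ⟨hgtop, hgint⟩]
    have hIg : ∫ ω, (g ω).toReal ∂μ = ∫ ω, h 0 ω ∂μ + (∫⁻ ω, G ω ∂μ).toReal := by
      rw [integral_congr_ae hgtoReal, integral_add (hint 0) hGint,
        integral_toReal hGmeas hGfin]
    have htj_le : ∀ j, (∫⁻ ω, F j ω ∂μ).toReal ≤ (∫⁻ ω, G ω ∂μ).toReal := fun j =>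
      ENNReal.toReal_mono hL (hlin ▸ le_iSup (fun j => ∫⁻ ω, F j ω ∂μ) j)
    have hub2 : ∀ j, ∫ ω, h j ω ∂μ ≤ ∫ ω, h 0 ω ∂μ + (∫⁻ ω, G ω ∂μ).toReal := by
      intro j
      rw [hIj j]
      linarith [htj_le j]
    have hbdd2 : BddAbove (Set.range fun j => ∫ ω, h j ω ∂μ) := by
      refine ⟨∫ ω, h 0 ω ∂μ + (∫⁻ ω, G ω ∂μ).toReal, ?_⟩
      rintro _ ⟨j, rfl⟩
      exact hub2 j
    rw [coe_ciSup hbdd2, hIg]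
    norm_cast
    apply le_antisymm (ciSup_le hub2)
    have hsle2 : ∫⁻ ω, G ω ∂μ
        ≤ ENNReal.ofReal ((⨆ j, ∫ ω, h j ω ∂μ) - ∫ ω, h 0 ω ∂μ) := by
      rw [hlin]
      refine iSup_le fun j => ?_
      rw [hFj j, integral_sub (hint j) (hint 0)]
      refine ENNReal.ofReal_le_ofReal ?_
      have := le_ciSup hbdd2 j
      linarith
    have h7 := ENNReal.toReal_mono ENNReal.ofReal_ne_top hsle2
    rw [ENNReal.toReal_ofReal (by have := le_ciSup hbdd2 0; linarith)] at h7
    linarith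

lemma mul_norm_L1 {a b : Ω → ℝ} (ha : MemLp a 2 μ) (hb : MemLp b 2 μ) :
    Integrable (fun ω => a ω * b ω) μ := by
  have h := L2.integrable_inner (𝕜 := ℝ) (ha.toLp a) (hb.toLp b)
  have h2 : (fun ω => (⟪(ha.toLp a) ω, (hb.toLp b) ω⟫ : ℝ)) =ᵐ[μ] fun ω => a ω * b ω := by
    filter_upwards [ha.coeFn_toLp, hb.coeFn_toLp] with ω h1 h2
    simp [h1, h2, RCLike.inner_apply, conj_trivial, mul_comm]
  exact h.congr h2

variable {H : Type*} [NormedAddCommGroup H] [InnerProductSpace ℝ H]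

lemma inner_L1 {a b : Ω → H} (ha : MemLp a 2 μ) (hb : MemLp b 2 μ) :
    Integrable (fun ω => ⟪a ω, b ω⟫) μ := by
  refine (mul_norm_L1 ha.norm hb.norm).mono' (ha.1.inner hb.1) ?_
  filter_upwards with ω
  rw [Real.norm_eq_abs]
  exact abs_real_inner_le_norm _ _

lemma normsq_L1 {a : Ω → H} (ha : MemLp a 2 μ) :
    Integrable (fun ω => ‖a ω‖ ^ 2) μ := ha.norm.integrable_sq

lemma aemeasurable_iSup_ereal {ν : MeasureTheory.Measure Ω} {g : ℕ → Ω → EReal}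
    (h : ∀ k, AEMeasurable (g k) ν) : AEMeasurable (fun ω => ⨆ k, g k ω) ν := by
  refine ⟨fun ω => ⨆ k, (h k).mk _ ω, Measurable.iSup (fun k => (h k).measurable_mk), ?_⟩
  filter_upwards [MeasureTheory.ae_all_iff.2 fun k => (h k).ae_eq_mk] with ω hω
  exact iSup_congr hω

variable [CompleteSpace H] [SecondCountableTopology H]
variable {f : Ω → H → EReal} {P : Ω → H → H}
variable {r s x' : Ω → H} {θ : Ω → ℝ}

section Mem
variable
  (hf : ∀ ω, ProperLscConvex (f ω)) (hP : ∀ ω u, IsProxPt 1 (f ω) u (P ω u))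
  (hPmeas : ∀ x : Ω → H, MemLp x 2 μ → AEStronglyMeasurable (fun ω => P ω (x ω)) μ)
  (hr2 : MemLp r 2 μ) (hrtop : ∀ᵐ ω ∂μ, f ω (r ω) ≠ ⊤)
  (hri : Integrable (fun ω => (f ω (r ω)).toReal) μ)
  (hs2 : MemLp s 2 μ) (hθ : Integrable θ μ)
  (hminae : ∀ᵐ ω ∂μ, ∀ u, ((⟪u, s ω⟫ + θ ω : ℝ) : EReal) ≤ f ω u)
  (hx' : MemLp x' 2 μ)

include hf hP hPmeas hr2 hrtop hri hs2 hθ hminae hx'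

lemma q0_mem : MemLp (fun ω => P ω (r ω + x' ω)) 2 μ := by
  classical
  set u₀ : Ω → H := fun ω => r ω + x' ω with hu₀def
  have hu₀ : MemLp u₀ 2 μ := hr2.add hx'
  have hq₀m : AEStronglyMeasurable (fun ω => P ω (u₀ ω)) μ := hPmeas u₀ hu₀
  set R : Ω → ℝ := fun ω => (f ω (r ω)).toReal with hRdef
  set B : Ω → ℝ := fun ω =>
    |R ω| + ‖x' ω‖^2/2 + |θ ω| + ‖u₀ ω‖*‖s ω‖ + ‖s ω‖^2 with hBdef
  have hB0 : ∀ ω, 0 ≤ B ω := by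
    intro ω
    have : (0:ℝ) ≤ ‖u₀ ω‖*‖s ω‖ := mul_nonneg (norm_nonneg _) (norm_nonneg _)
    positivity
  have hBint : Integrable B μ := by
    refine ((((hri.abs.add ((normsq_L1 hx').div_const 2)).add hθ.abs).add
      (mul_norm_L1 hu₀.norm hs2.norm)).add (normsq_L1 hs2)).congr ?_
    filter_upwards with ω
    simp only [hBdef, Pi.add_apply]
  have hbound : ∀ᵐ ω ∂μ, ‖P ω (u₀ ω) - u₀ ω‖^2 ≤ 4 * B ω := by
    filter_upwards [hrtop, hminae] with ω h1 h2
    have hprox := prox_ineq_real (hf ω) (hP ω) (u₀ ω) (r ω) h1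
    have hmin := h2 (P ω (u₀ ω))
    rw [prox_eq_coe (hf ω) (hP ω), EReal.coe_le_coe_iff] at hmin
    have e0 : ‖u₀ ω - r ω‖ = ‖x' ω‖ := by simp [hu₀def]
    have e1 : ‖u₀ ω - P ω (u₀ ω)‖ = ‖P ω (u₀ ω) - u₀ ω‖ := norm_sub_rev _ _
    have e2 : -(‖P ω (u₀ ω)‖ * ‖s ω‖) ≤ ⟪P ω (u₀ ω), s ω⟫ :=
      neg_le_of_abs_le (abs_real_inner_le_norm _ _)
    have e3 : ‖P ω (u₀ ω)‖ ≤ ‖u₀ ω‖ + ‖P ω (u₀ ω) - u₀ ω‖ := by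
      have := norm_add_le (u₀ ω) (P ω (u₀ ω) - u₀ ω)
      simpa using this
    have e4 : -|θ ω| ≤ θ ω := neg_abs_le _
    have e5 : R ω ≤ |R ω| := le_abs_self _
    have e6 : ‖P ω (u₀ ω) - u₀ ω‖ * ‖s ω‖ ≤ ‖P ω (u₀ ω) - u₀ ω‖^2/4 + ‖s ω‖^2 := by
      nlinarith [sq_nonneg (‖P ω (u₀ ω) - u₀ ω‖ - 2*‖s ω‖)]
    have e7 : (0:ℝ) ≤ ‖s ω‖ := norm_nonneg _
    rw [e0, e1] at hprox
    simp only [hBdef]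
    nlinarith [hprox, hmin, mul_le_mul_of_nonneg_right e3 e7]
  have hgm : AEStronglyMeasurable (fun ω => Real.sqrt (4 * B ω)) μ :=
    Real.continuous_sqrt.comp_aestronglyMeasurable (hBint.1.const_mul 4)
  have hgmem : MemLp (fun ω => Real.sqrt (4 * B ω)) 2 μ := by
    rw [memLp_two_iff_integrable_sq hgm]
    refine (hBint.const_mul 4).congr ?_
    filter_upwards with ω
    rw [Real.sq_sqrt (by nlinarith [hB0 ω])]
  have hw : MemLp (fun ω => P ω (u₀ ω) - u₀ ω) 2 μ := by
    refine MemLp.of_le hgmem (hq₀m.sub hu₀.1) ?_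
    filter_upwards [hbound] with ω hω
    rw [Real.norm_eq_abs, abs_of_nonneg (Real.sqrt_nonneg _)]
    calc ‖P ω (u₀ ω) - u₀ ω‖ = Real.sqrt (‖P ω (u₀ ω) - u₀ ω‖^2) := by
          rw [Real.sqrt_sq (norm_nonneg _)]
      _ ≤ Real.sqrt (4 * B ω) := Real.sqrt_le_sqrt hω
  have hfin : MemLp (fun ω => (P ω (u₀ ω) - u₀ ω) + u₀ ω) 2 μ := hw.add hu₀
  simpa [sub_add_cancel] using hfin

lemma prox_mem {u : Ω → H} (hu : MemLp u 2 μ) :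
    MemLp (fun ω => P ω (u ω)) 2 μ := by
  have hq₀ := q0_mem hf hP hPmeas hr2 hrtop hri hs2 hθ hminae hx'
  refine MemLp.of_le (hq₀.norm.add (hu.sub (hr2.add hx')).norm) (hPmeas u hu) ?_
  filter_upwards with ω
  have h1 := prox_nonexpansive (hf ω) (hP ω) (u ω) (r ω + x' ω)
  have h2 : ‖P ω (u ω)‖ ≤ ‖P ω (r ω + x' ω)‖ + ‖P ω (u ω) - P ω (r ω + x' ω)‖ := by
    have := norm_add_le (P ω (r ω + x' ω)) (P ω (u ω) - P ω (r ω + x' ω))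
    simpa using this
  have h3 : (0:ℝ) ≤ ‖P ω (r ω + x' ω)‖ + ‖u ω - (r ω + x' ω)‖ :=
    add_nonneg (norm_nonneg _) (norm_nonneg _)
  simp only [Pi.add_apply, Pi.sub_apply, Real.norm_eq_abs]
  rw [abs_of_nonneg h3]
  exact le_trans h2 (by linarith)

omit hr2 hrtop hri hs2 hθ hminae hx' in
include hf hP hPmeas in
lemma envdiff_meas {u w : Ω → H} (hu : MemLp u 2 μ) (hw : MemLp w 2 μ) :
    AEMeasurable (fun ω => env (f ω) (P ω) (u ω) - env (f ω) (P ω) (w ω)) μ := by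
  set S : ℕ → Ω → ℝ := fun n ω => ∑ i ∈ Finset.range (n+1),
    ⟪(((n+1 : ℕ) : ℝ))⁻¹ • (u ω - w ω),
      (w ω + ((i:ℝ)/((n+1 : ℕ) : ℝ)) • (u ω - w ω))
        - P ω (w ω + ((i:ℝ)/((n+1 : ℕ) : ℝ)) • (u ω - w ω))⟫ with hS
  have hSmeas : ∀ n, AEMeasurable (S n) μ := by
    intro n
    apply Finset.aemeasurable_fun_sum
    intro i _
    have hseg : MemLp (fun ω => w ω + ((i:ℝ)/((n+1 : ℕ) : ℝ)) • (u ω - w ω)) 2 μ :=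
      hw.add ((hu.sub hw).const_smul _)
    have h1 : AEStronglyMeasurable
        (fun ω => (w ω + ((i:ℝ)/((n+1 : ℕ) : ℝ)) • (u ω - w ω))
          - P ω (w ω + ((i:ℝ)/((n+1 : ℕ) : ℝ)) • (u ω - w ω))) μ :=
      hseg.1.sub (hPmeas _ hseg)
    have h2 : AEStronglyMeasurable
        (fun ω => (((n+1 : ℕ) : ℝ))⁻¹ • (u ω - w ω)) μ :=
      ((hu.sub hw).const_smul _).1
    exact (h2.inner h1).aemeasurable
  refine aemeasurable_of_tendsto_metrizable_ae Filter.atTop hSmeas ?_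
  filter_upwards with ω
  rw [tendsto_iff_dist_tendsto_zero]
  have hbd : ∀ n : ℕ, dist (S n ω)
      (env (f ω) (P ω) (u ω) - env (f ω) (P ω) (w ω))
      ≤ ‖u ω - w ω‖^2 / (2*((n+1 : ℕ) : ℝ)) := by
    intro n
    rw [Real.dist_eq, abs_sub_comm]
    exact env_riemann (hf ω) (hP ω) (n+1) (Nat.succ_pos n) (w ω) (u ω)
  have h0 : Filter.Tendsto (fun n : ℕ => ‖u ω - w ω‖^2 / (2*((n+1 : ℕ) : ℝ)))
      Filter.atTop (nhds 0) := by
    have h1 : Filter.Tendsto (fun n : ℕ => 1 / ((n : ℝ) + 1)) Filter.atTop (nhds 0) :=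
      tendsto_one_div_add_atTop_nhds_zero_nat
    have h2 := h1.const_mul (‖u ω - w ω‖^2/2)
    rw [mul_zero] at h2
    refine h2.congr fun n => ?_
    push_cast
    field_simp
  exact squeeze_zero (fun n => dist_nonneg) hbd h0

include hf hP hPmeas hr2 hrtop in
omit hs2 hθ hminae hx' in
lemma env_r_meas : AEMeasurable (fun ω => env (f ω) (P ω) (r ω)) μ := by
  obtain ⟨d, hd⟩ := TopologicalSpace.exists_dense_seq H
  have key : ∀ m : ℕ, AEMeasurable (fun ω => env (f ω) (P ω) (r ω))
      (μ.restrict (spanningSets μ m)) := by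
    intro m
    have hIm : MeasurableSet (spanningSets μ m) := measurableSet_spanningSets μ m
    have hrk : ∀ k : ℕ, MemLp
        (fun ω => r ω + Set.indicator (spanningSets μ m) (fun _ => d k) ω) 2 μ :=
      fun k => hr2.add (memLp_indicator_const 2 hIm _
        (Or.inr (measure_spanningSets_lt_top μ m).ne))
    have hDk : ∀ k : ℕ, AEMeasurable (fun ω =>
        (((env (f ω) (P ω) (r ω + Set.indicator (spanningSets μ m) (fun _ => d k) ω)
          - env (f ω) (P ω) (r ω) - ‖d k‖^2/2 : ℝ)) : EReal)) μ := by
      intro k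
      exact measurable_coe_real_ereal.comp_aemeasurable
        ((envdiff_meas hf hP hPmeas (hrk k) hr2).sub_const _)
    have hW : AEMeasurable (fun ω => ⨆ k,
        (((env (f ω) (P ω) (r ω + Set.indicator (spanningSets μ m) (fun _ => d k) ω)
          - env (f ω) (P ω) (r ω) - ‖d k‖^2/2 : ℝ)) : EReal)) μ :=
      aemeasurable_iSup_ereal hDk
    have hae : ∀ᵐ ω ∂(μ.restrict (spanningSets μ m)),
        (fun ω => (f ω (r ω)).toReal - (⨆ k,
          (((env (f ω) (P ω) (r ω + Set.indicator (spanningSets μ m) (fun _ => d k) ω)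
            - env (f ω) (P ω) (r ω) - ‖d k‖^2/2 : ℝ)) : EReal)).toReal) ω
        = env (f ω) (P ω) (r ω) := by
      filter_upwards [ae_restrict_of_ae hrtop, ae_restrict_mem hIm] with ω htop hmem
      have hsup := anchor_sup (hf ω) (hP ω) d hd (r ω) htop
      simp only [Set.indicator_of_mem hmem]
      rw [hsup, EReal.toReal_coe]
      ring
    exact AEMeasurable.congr
      ((hri.aemeasurable.restrict).sub ((hW.restrict).ereal_toReal)) hae
  have h2 := (aemeasurable_iUnion_iff (μ := μ) (s := spanningSets μ)
    (f := fun ω => env (f ω) (P ω) (r ω))).mpr key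
  rwa [iUnion_spanningSets, Measure.restrict_univ] at h2

include hf hP hPmeas hr2 hrtop in
omit hs2 hθ hminae hx' in
lemma env_meas {u : Ω → H} (hu : MemLp u 2 μ) :
    AEMeasurable (fun ω => env (f ω) (P ω) (u ω)) μ := by
  have h1 := (envdiff_meas hf hP hPmeas hu hr2).add
    (env_r_meas hf hP hPmeas hr2 hrtop hri)
  refine h1.congr (by filter_upwards with ω; simp only [Pi.add_apply]; ring)

include hf hP hPmeas hr2 hrtop in
omit hs2 hθ hminae hx' in
lemma phi_meas {u : Ω → H} (hu : MemLp u 2 μ) :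
    AEMeasurable (fun ω => phi (f ω) (P ω) (u ω)) μ := by
  have h2 : AEMeasurable (fun ω => ‖u ω - P ω (u ω)‖^2/2) μ :=
    (((hu.1.sub (hPmeas u hu)).norm.aemeasurable).pow_const 2).div_const 2
  refine ((env_meas hf hP hPmeas hr2 hrtop hri hu).sub h2).congr ?_
  filter_upwards with ω
  simp only [env, Pi.sub_apply]
  ring

lemma phi_int {u : Ω → H} (hu : MemLp u 2 μ) :
    Integrable (fun ω => phi (f ω) (P ω) (u ω)) μ := by
  have hpm := prox_mem hf hP hPmeas hr2 hrtop hri hs2 hθ hminae hx' hu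
  have hG : Integrable (fun ω => |(f ω (r ω)).toReal| + ‖u ω - r ω‖^2/2
      + ‖P ω (u ω)‖*‖s ω‖ + |θ ω|) μ :=
    ((hri.abs.add ((normsq_L1 (hu.sub hr2)).div_const 2)).add
      (mul_norm_L1 hpm.norm hs2.norm)).add hθ.abs
  refine hG.mono'
    (aestronglyMeasurable_iff_aemeasurable.mpr (phi_meas hf hP hPmeas hr2 hrtop hri hu)) ?_
  filter_upwards [hrtop, hminae] with ω h1 h2
  have hup : phi (f ω) (P ω) (u ω) ≤ (f ω (r ω)).toReal + ‖u ω - r ω‖^2/2 := by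
    have h3 := env_le_real (hf ω) (hP ω) (u ω) (r ω) h1
    have h4 : (0:ℝ) ≤ ‖u ω - P ω (u ω)‖^2/2 := by positivity
    rw [env] at h3
    linarith
  have hlow : ⟪P ω (u ω), s ω⟫ + θ ω ≤ phi (f ω) (P ω) (u ω) := by
    have h5 := h2 (P ω (u ω))
    rw [prox_eq_coe (hf ω) (hP ω), EReal.coe_le_coe_iff] at h5
    exact h5
  have hinner : -(‖P ω (u ω)‖*‖s ω‖) ≤ ⟪P ω (u ω), s ω⟫ :=
    neg_le_of_abs_le (abs_real_inner_le_norm _ _)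
  rw [Real.norm_eq_abs, abs_le]
  have ha1 : (0:ℝ) ≤ |(f ω (r ω)).toReal| := abs_nonneg _
  have ha2 : (0:ℝ) ≤ ‖u ω - r ω‖^2/2 := by positivity
  have ha3 : -|θ ω| ≤ θ ω := neg_abs_le _
  have ha4 : θ ω ≤ |θ ω| := le_abs_self _
  have ha5 : (f ω (r ω)).toReal ≤ |(f ω (r ω)).toReal| := le_abs_self _
  have ha6 : (0:ℝ) ≤ ‖P ω (u ω)‖*‖s ω‖ := mul_nonneg (norm_nonneg _) (norm_nonneg _)
  constructor
  · linarith [hlow, hinner]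
  · linarith [hup]

end Mem

/-- pointwise candidate value -/
noncomputable def gvp (fω : H → EReal) (Pω : H → H) (rv x'v Dv : H) : ℝ :=
  ⟪Pω (rv + Dv + x'v), x'v⟫ - phi fω Pω (rv + Dv + x'v)

/-- candidate integrand associated to a shift field `D` -/
noncomputable def gv (f : Ω → H → EReal) (P : Ω → H → H) (r x' D : Ω → H) (ω : Ω) : ℝ :=
  gvp (f ω) (P ω) (r ω) (x' ω) (D ω)

section Mem2
variable
  (hf : ∀ ω, ProperLscConvex (f ω)) (hP : ∀ ω u, IsProxPt 1 (f ω) u (P ω u))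
  (hPmeas : ∀ x : Ω → H, MemLp x 2 μ → AEStronglyMeasurable (fun ω => P ω (x ω)) μ)
  (hr2 : MemLp r 2 μ) (hrtop : ∀ᵐ ω ∂μ, f ω (r ω) ≠ ⊤)
  (hri : Integrable (fun ω => (f ω (r ω)).toReal) μ)
  (hs2 : MemLp s 2 μ) (hθ : Integrable θ μ)
  (hminae : ∀ᵐ ω ∂μ, ∀ u, ((⟪u, s ω⟫ + θ ω : ℝ) : EReal) ≤ f ω u)
  (hx' : MemLp x' 2 μ)

include hf hP hPmeas hr2 hrtop hri hs2 hθ hminae hx'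

lemma gv_int {D : Ω → H} (hD : MemLp D 2 μ) :
    Integrable (gv f P r x' D) μ := by
  have huD : MemLp (fun ω => r ω + D ω + x' ω) 2 μ := (hr2.add hD).add hx'
  have h1 := inner_L1 (prox_mem hf hP hPmeas hr2 hrtop hri hs2 hθ hminae hx' huD) hx'
  have h2 := phi_int hf hP hPmeas hr2 hrtop hri hs2 hθ hminae hx' huD
  exact (h1.sub h2).congr (by filter_upwards with ω; rfl)

lemma gv_term {D : Ω → H} (hD : MemLp D 2 μ) :
    ((∫ ω, ⟪P ω (r ω + D ω + x' ω), x' ω⟫ ∂μ : ℝ) : EReal)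
      - intFun μ f (fun ω => P ω (r ω + D ω + x' ω))
      = ((∫ ω, gv f P r x' D ω ∂μ : ℝ) : EReal) := by
  have huD : MemLp (fun ω => r ω + D ω + x' ω) 2 μ := (hr2.add hD).add hx'
  have hcond : (∀ᵐ ω ∂μ, f ω (P ω (r ω + D ω + x' ω)) ≠ ⊤) ∧
      Integrable (fun ω => (f ω (P ω (r ω + D ω + x' ω))).toReal) μ := by
    constructor
    · exact Filter.Eventually.of_forall fun ω => prox_ne_top (hf ω) (hP ω) _
    · exact phi_int hf hP hPmeas hr2 hrtop hri hs2 hθ hminae hx' huD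
  have heq : (∫ ω, gv f P r x' D ω ∂μ)
      = ∫ ω, ⟪P ω (r ω + D ω + x' ω), x' ω⟫ ∂μ
        - ∫ ω, (f ω (P ω (r ω + D ω + x' ω))).toReal ∂μ := by
    rw [← integral_sub (inner_L1
      (prox_mem hf hP hPmeas hr2 hrtop hri hs2 hθ hminae hx' huD) hx') hcond.2]
    exact integral_congr_ae (by filter_upwards with ω; rfl)
  rw [intFun, if_pos hcond, ← EReal.coe_sub]
  exact congrArg Real.toEReal heq.symm

lemma glue {D1 D2 : Ω → H} (hD1 : MemLp D1 2 μ) (hD2 : MemLp D2 2 μ) :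
    ∃ D : Ω → H, MemLp D 2 μ ∧
      ∀ᵐ ω ∂μ, gv f P r x' D ω = max (gv f P r x' D1 ω) (gv f P r x' D2 ω) := by
  classical
  have hA := (gv_int hf hP hPmeas hr2 hrtop hri hs2 hθ hminae hx' hD1).aemeasurable
  have hB := (gv_int hf hP hPmeas hr2 hrtop hri hs2 hθ hminae hx' hD2).aemeasurable
  set E : Set Ω := {ω | hA.mk _ ω < hB.mk _ ω} with hE
  have hEm : MeasurableSet E := measurableSet_lt hA.measurable_mk hB.measurable_mk
  refine ⟨fun ω => Set.indicator E D2 ω + Set.indicator Eᶜ D1 ω,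
    ((hD2.indicator hEm).add (hD1.indicator hEm.compl)), ?_⟩
  filter_upwards [hA.ae_eq_mk, hB.ae_eq_mk] with ω h1 h2
  by_cases hmem : ω ∈ E
  · have hD : Set.indicator E D2 ω + Set.indicator Eᶜ D1 ω = D2 ω := by
      rw [Set.indicator_of_mem hmem, Set.indicator_of_notMem (by simpa using hmem),
        add_zero]
    have hlt : gv f P r x' D1 ω < gv f P r x' D2 ω := by
      have := hmem
      rw [hE, Set.mem_setOf_eq] at this
      rw [show gv f P r x' D1 ω = hA.mk _ ω from h1,
        show gv f P r x' D2 ω = hB.mk _ ω from h2]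
      exact this
    rw [max_eq_right hlt.le]
    show gvp (f ω) (P ω) (r ω) (x' ω)
      (Set.indicator E D2 ω + Set.indicator Eᶜ D1 ω) = gv f P r x' D2 ω
    rw [hD]
    rfl
  · have hD : Set.indicator E D2 ω + Set.indicator Eᶜ D1 ω = D1 ω := by
      rw [Set.indicator_of_notMem hmem, Set.indicator_of_mem (by simpa using hmem),
        zero_add]
    have hle : gv f P r x' D2 ω ≤ gv f P r x' D1 ω := by
      have : ¬ (hA.mk _ ω < hB.mk _ ω) := hmem
      rw [show gv f P r x' D1 ω = hA.mk _ ω from h1,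
        show gv f P r x' D2 ω = hB.mk _ ω from h2]
      linarith [not_lt.mp this]
    rw [max_eq_left hle]
    show gvp (f ω) (P ω) (r ω) (x' ω)
      (Set.indicator E D2 ω + Set.indicator Eᶜ D1 ω) = gv f P r x' D1 ω
    rw [hD]
    rfl

lemma ach (c : ℕ → H) (j n : ℕ) :
    ∃ D : Ω → H, MemLp D 2 μ ∧
      ∀ᵐ ω ∂μ, gv f P r x' D ω = (Finset.range (n+1)).sup'
        (by simp) (fun k => gv f P r x'
          (Set.indicator (spanningSets μ j) (fun _ => c k)) ω) := by
  classical
  have hDk : ∀ k : ℕ, MemLp (Set.indicator (spanningSets μ j) (fun _ => c k)) 2 μ :=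
    fun k => memLp_indicator_const 2 (measurableSet_spanningSets μ j) _
      (Or.inr (measure_spanningSets_lt_top μ j).ne)
  induction n with
  | zero =>
      refine ⟨_, hDk 0, ?_⟩
      filter_upwards with ω
      simp
  | succ n ih =>
      obtain ⟨D, hD, hae⟩ := ih
      obtain ⟨D', hD', hae'⟩ := glue hf hP hPmeas hr2 hrtop hri hs2 hθ hminae hx'
        hD (hDk (n+1))
      refine ⟨D', hD', ?_⟩
      filter_upwards [hae, hae'] with ω h1 h2
      rw [sup'_range_succ, h2, h1]

omit hP hPmeas hr2 hrtop hri hs2 hθ hminae in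
include hf hx' in
lemma part1 {x : Ω → H} (hx : MemLp x 2 μ) :
    ((∫ ω, ⟪x ω, x' ω⟫ ∂μ : ℝ) : EReal) - intFun μ f x
      ≤ intFun μ (fun ω u => conjFn (f ω) u) x' := by
  classical
  simp only [intFun]
  split_ifs with h1 h2 h2
  · -- both branches finite
    rw [← EReal.coe_sub, EReal.coe_le_coe_iff,
      ← integral_sub (inner_L1 hx hx') h1.2]
    refine integral_mono_ae ((inner_L1 hx hx').sub h1.2) h2.2 ?_
    filter_upwards [h1.1, h2.1] with ω hω1 hω2
    have h3 : ((⟪x ω, x' ω⟫ - (f ω (x ω)).toReal : ℝ) : EReal)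
        ≤ conjFn (f ω) (x' ω) := by
      have h4 := le_iSup (fun u => ((⟪u, x' ω⟫ : ℝ) : EReal) - f ω u) (x ω)
      rw [show f ω (x ω) = (((f ω (x ω)).toReal : ℝ) : EReal) from
        (EReal.coe_toReal hω1 ((hf ω).2.1 _)).symm, ← EReal.coe_sub] at h4
      exact h4
    have h5 : conjFn (f ω) (x' ω) ≠ ⊥ :=
      ne_bot_of_le_ne_bot (EReal.coe_ne_bot _) h3
    rw [← EReal.coe_toReal hω2 h5, EReal.coe_le_coe_iff] at h3
    exact h3
  · exact le_top
  · rw [show ((∫ ω, ⟪x ω, x' ω⟫ ∂μ : ℝ) : EReal) - ⊤ = ⊥ from rfl]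
    exact bot_le
  · exact le_top

end Mem2

omit [SigmaFinite μ] [CompleteSpace H] [SecondCountableTopology H] in
lemma sup_piece {χ : ℕ → ℝ} {S : ℕ → Prop} [∀ j, Decidable (S j)]
    (hSmono : ∀ i j, i ≤ j → S i → S j) (hex : ∃ j₀, S j₀) :
    (∀ j : ℕ, (Finset.range (j+1)).sup' (by simp) (fun k => if S j then χ k else χ 0)
      ≤ (Finset.range (j+2)).sup' (by simp) (fun k => if S (j+1) then χ k else χ 0)) ∧
    (⨆ j : ℕ, (((Finset.range (j+1)).sup' (by simp)
        (fun k => if S j then χ k else χ 0) : ℝ) : EReal))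
      = ⨆ k : ℕ, ((χ k : ℝ) : EReal) := by
  constructor
  · intro j
    by_cases hS1 : S (j+1)
    · by_cases hS : S j
      · simp only [if_pos hS, if_pos hS1]
        exact Finset.sup'_mono _ (Finset.range_subset_range.mpr (by omega)) _
      · simp only [if_neg hS, if_pos hS1]
        rw [Finset.sup'_const]
        exact Finset.le_sup'_of_le _ (Finset.mem_range.mpr (by omega)) le_rfl
    · have hS : ¬ S j := fun h => hS1 (hSmono j (j+1) (by omega) h)
      simp only [if_neg hS, if_neg hS1]
      rw [Finset.sup'_const, Finset.sup'_const]
  · apply le_antisymm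
    · refine iSup_le fun j => ?_
      obtain ⟨k0, _, hk0⟩ := Finset.exists_mem_eq_sup' (s := Finset.range (j+1))
        (by simp) (fun k => if S j then χ k else χ 0)
      rw [hk0]
      by_cases hS : S j
      · rw [if_pos hS]
        exact le_iSup (fun k => ((χ k : ℝ) : EReal)) k0
      · rw [if_neg hS]
        exact le_iSup (fun k => ((χ k : ℝ) : EReal)) 0
    · refine iSup_le fun k => ?_
      obtain ⟨j₀, hj₀⟩ := hex
      have hS : S (max k j₀) := hSmono j₀ (max k j₀) (le_max_right _ _) hj₀
      refine le_trans ?_ (le_iSup (fun j =>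
        (((Finset.range (j+1)).sup' (by simp)
          (fun k => if S j then χ k else χ 0) : ℝ) : EReal)) (max k j₀))
      rw [EReal.coe_le_coe_iff]
      have hmem : k ∈ Finset.range (max k j₀ + 1) := Finset.mem_range.mpr (by omega)
      have := Finset.le_sup' (fun k' => if S (max k j₀) then χ k' else χ 0) hmem
      rwa [if_pos hS] at this

end Glob

theorem main {Ω H : Type*} [MeasurableSpace Ω] {μ : MeasureTheory.Measure Ω}
    [SigmaFinite μ]
    [NormedAddCommGroup H] [InnerProductSpace ℝ H] [CompleteSpace H]
    [SecondCountableTopology H]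
    (f : Ω → H → EReal) (hf : ∀ ω, ProperLscConvex (f ω))
    (P : Ω → H → H) (hP : ∀ ω u, IsProxPt 1 (f ω) u (P ω u))
    (hPmeas : ∀ x : Ω → H, MemLp x 2 μ →
      AEStronglyMeasurable (fun ω => P ω (x ω)) μ)
    (hr : ∃ r : Ω → H, MemLp r 2 μ ∧ (∀ᵐ ω ∂μ, f ω (r ω) ≠ ⊤) ∧
      Integrable (fun ω => (f ω (r ω)).toReal) μ)
    (hmin : ∃ s : Ω → H, MemLp s 2 μ ∧ ∃ θ : Ω → ℝ, Integrable θ μ ∧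
      ∀ᵐ ω ∂μ, ∀ u : H, ((⟪u, s ω⟫ + θ ω : ℝ) : EReal) ≤ f ω u)
    (x' : Ω → H) (hx' : MemLp x' 2 μ) :
    (⨆ x : { x : Ω → H // MemLp x 2 μ },
        ((∫ ω, ⟪x.1 ω, x' ω⟫ ∂μ : ℝ) : EReal) - intFun μ f x.1)
      = intFun μ (fun ω u => conjFn (f ω) u) x' := by
  classical
  obtain ⟨r, hr2, hrtop, hri⟩ := hr
  obtain ⟨s, hs2, θ, hθ, hminae⟩ := hmin
  apply le_antisymm
  · exact iSup_le fun x => part1 hf hx' x.2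
  · have hne : Nonempty H := ⟨0⟩
    obtain ⟨d, hd⟩ := TopologicalSpace.exists_dense_seq H
    set c : ℕ → H := fun k => Nat.rec (0:H) (fun k' _ => d k') k with hcdef
    have hcd : DenseRange c := by
      have hsub : Set.range d ⊆ Set.range c := by
        rintro v ⟨k, rfl⟩
        exact ⟨k+1, rfl⟩
      exact hd.mono hsub
    choose D hD hDae using
      fun j => ach hf hP hPmeas hr2 hrtop hri hs2 hθ hminae hx' c j j
    have hint : ∀ j, Integrable (gv f P r x' (D j)) μ :=
      fun j => gv_int hf hP hPmeas hr2 hrtop hri hs2 hθ hminae hx' (hD j)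
    have hex : ∀ ω : Ω, ∃ j₀, ω ∈ spanningSets μ j₀ := by
      intro ω
      have hm : ω ∈ ⋃ i, spanningSets μ i := by
        rw [iUnion_spanningSets]
        trivial
      exact Set.mem_iUnion.mp hm
    have hSmono : ∀ ω : Ω, ∀ i j : ℕ, i ≤ j →
        ω ∈ spanningSets μ i → ω ∈ spanningSets μ j :=
      fun ω i j hij hm => monotone_spanningSets μ hij hm
    have hDkval : ∀ (j k : ℕ) (ω : Ω),
        gv f P r x' (Set.indicator (spanningSets μ j) (fun _ => c k)) ω
        = if ω ∈ spanningSets μ j then gvp (f ω) (P ω) (r ω) (x' ω) (c k)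
          else gvp (f ω) (P ω) (r ω) (x' ω) (c 0) := by
      intro j k ω
      by_cases hmem : ω ∈ spanningSets μ j
      · rw [if_pos hmem]
        show gvp (f ω) (P ω) (r ω) (x' ω)
          (Set.indicator (spanningSets μ j) (fun _ => c k) ω) = _
        rw [Set.indicator_of_mem hmem]
      · rw [if_neg hmem]
        show gvp (f ω) (P ω) (r ω) (x' ω)
          (Set.indicator (spanningSets μ j) (fun _ => c k) ω) = _
        rw [Set.indicator_of_notMem hmem]
        rfl
    have hform : ∀ (j : ℕ) (ω : Ω),
        (Finset.range (j+1)).sup' (by simp)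
          (fun k => gv f P r x' (Set.indicator (spanningSets μ j) (fun _ => c k)) ω)
        = (Finset.range (j+1)).sup' (by simp)
          (fun k => if ω ∈ spanningSets μ j then gvp (f ω) (P ω) (r ω) (x' ω) (c k)
            else gvp (f ω) (P ω) (r ω) (x' ω) (c 0)) :=
      fun j ω => Finset.sup'_congr _ rfl (fun k _ => hDkval j k ω)
    have hmono : ∀ᵐ ω ∂μ, ∀ j, gv f P r x' (D j) ω ≤ gv f P r x' (D (j+1)) ω := by
      rw [MeasureTheory.ae_all_iff]
      intro j
      filter_upwards [hDae j, hDae (j+1)] with ω e1 e2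
      rw [e1, e2, hform j ω, hform (j+1) ω]
      exact (sup_piece (χ := fun k => gvp (f ω) (P ω) (r ω) (x' ω) (c k))
        (S := fun j => ω ∈ spanningSets μ j) (hSmono ω) (hex ω)).1 j
    have hsup : ∀ᵐ ω ∂μ, (⨆ j, ((gv f P r x' (D j) ω : ℝ) : EReal))
        = conjFn (f ω) (x' ω) := by
      filter_upwards [MeasureTheory.ae_all_iff.mpr hDae] with ω hω
      have e3 : (⨆ j, ((gv f P r x' (D j) ω : ℝ) : EReal))
          = ⨆ j, (((Finset.range (j+1)).sup' (by simp)
            (fun k => if ω ∈ spanningSets μ j then gvp (f ω) (P ω) (r ω) (x' ω) (c k)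
              else gvp (f ω) (P ω) (r ω) (x' ω) (c 0)) : ℝ) : EReal) :=
        iSup_congr fun j => by rw [hω j, hform j ω]
      rw [e3, (sup_piece (χ := fun k => gvp (f ω) (P ω) (r ω) (x' ω) (c k))
        (S := fun j => ω ∈ spanningSets μ j) (hSmono ω) (hex ω)).2]
      exact conj_pointwise (hf ω) (hP ω) c hcd (r ω) (x' ω)
    have hmct := mct_ereal hint hmono hsup
    have hrw : intFun μ (fun ω u => conjFn (f ω) u) x'
        = ⨆ j, ((∫ ω, gv f P r x' (D j) ω ∂μ : ℝ) : EReal) := by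
      rw [intFun, ← hmct]
    rw [hrw]
    refine iSup_le fun j => ?_
    rw [← gv_term hf hP hPmeas hr2 hrtop hri hs2 hθ hminae hx' (hD j)]
    exact le_iSup (fun x : {x : Ω → H // MemLp x 2 μ} =>
      ((∫ ω, ⟪x.1 ω, x' ω⟫ ∂μ : ℝ) : EReal) - intFun μ f x.1)
      ⟨fun ω => P ω (r ω + D j ω + x' ω),
        prox_mem hf hP hPmeas hr2 hrtop hri hs2 hθ hminae hx'
          ((hr2.add (hD j)).add hx')⟩

end CJ

theorem conjugate_of_integral_functional
    {Ω H : Type*} [MeasurableSpace Ω] {μ : Measure Ω} [SigmaFinite μ]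
    [NormedAddCommGroup H] [InnerProductSpace ℝ H] [CompleteSpace H]
    [SecondCountableTopology H]
    (f : Ω → H → EReal) (hf : ∀ ω, ProperLscConvex (f ω))
    (P : Ω → H → H) (hP : ∀ ω u, IsProxPt 1 (f ω) u (P ω u))
    (hPmeas : ∀ x : Ω → H, MemLp x 2 μ →
      AEStronglyMeasurable (fun ω => P ω (x ω)) μ)
    (hr : ∃ r : Ω → H, MemLp r 2 μ ∧ (∀ᵐ ω ∂μ, f ω (r ω) ≠ ⊤) ∧
      Integrable (fun ω => (f ω (r ω)).toReal) μ)
    (hmin : ∃ s : Ω → H, MemLp s 2 μ ∧ ∃ θ : Ω → ℝ, Integrable θ μ ∧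
      ∀ᵐ ω ∂μ, ∀ u : H, ((⟪u, s ω⟫ + θ ω : ℝ) : EReal) ≤ f ω u)
    (x' : Ω → H) (hx' : MemLp x' 2 μ) :
    (⨆ x : { x : Ω → H // MemLp x 2 μ },
        ((∫ ω, ⟪x.1 ω, x' ω⟫ ∂μ : ℝ) : EReal) - intFun μ f x.1)
      = intFun μ (fun ω u => conjFn (f ω) u) x' :=
  CJ.main f hf P hP hPmeas hr hmin x' hx'
end

section
/- Let (Ω, F, μ) be a σ-finite measure space, H a separable real Hilbert space, G a separable real Hilbert space, and for each ω ∈ Ω let f_ω ∈ Γ₀(H) and L_ω : G → H bounded linear. Assume: each prox_{f_ω} defines a measurable field (ω ↦ prox_{f_ω}(x(ω)) measurable for x ∈ L², and in L² for some z ∈ L²); ω ↦ L_ω z is measurable for each z ∈ G; and ∫_Ω ‖L_ω‖² dμ(ω) ≤ 1. Then there exists g ∈ Γ₀(G) such that for every z ∈ G, prox_g(z) = ∫_Ω L_ω*( prox_{f_ω}(L_ω z) ) dμ(ω). In other words, the integral mixture z ↦ ∫ L_ω*(prox_{f_ω}(L_ω z)) dμ is itself a proximity operator on G. -/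
open MeasureTheory RealInnerProductSpace

set_option linter.unusedSectionVars false
open scoped ENNReal NNReal

section Pettis
variable {G : Type*} [NormedAddCommGroup G] [InnerProductSpace ℝ G]
  [SecondCountableTopology G]
variable {Ω : Type*} [MeasurableSpace Ω]

lemma norm_eq_iSup_inner (d : ℕ → G) (hd : DenseRange d) (x : G) :
    ‖x‖ = ⨆ n, ⟪x, d n⟫ / max ‖d n‖ 1 := by
  have hub : ∀ n, ⟪x, d n⟫ / max ‖d n‖ 1 ≤ ‖x‖ := by
    intro n
    rw [div_le_iff₀ (lt_of_lt_of_le one_pos (le_max_right _ _))]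
    calc ⟪x, d n⟫ ≤ ‖x‖ * ‖d n‖ := real_inner_le_norm _ _
      _ ≤ ‖x‖ * max ‖d n‖ 1 := by
        exact mul_le_mul_of_nonneg_left (le_max_left _ _) (norm_nonneg _)
  have hbdd : BddAbove (Set.range fun n => ⟪x, d n⟫ / max ‖d n‖ 1) := by
    refine ⟨‖x‖, ?_⟩
    rintro r ⟨n, rfl⟩
    exact hub n
  refine le_antisymm ?_ (ciSup_le hub)
  by_cases hx : x = 0
  · subst hx
    have h0 : (⟪(0:G), d 0⟫ : ℝ) / max ‖d 0‖ 1 = 0 := by simp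
    calc ‖(0:G)‖ = ⟪(0:G), d 0⟫ / max ‖d 0‖ 1 := by rw [h0]; simp
      _ ≤ _ := le_ciSup hbdd 0
  · refine le_of_forall_pos_le_add fun ε hε => ?_
    have hxn : (0:ℝ) < ‖x‖ := norm_pos_iff.2 hx
    set δ : ℝ := min 1 (ε / (2 * ‖x‖ + 1)) with hδdef
    have hδpos : 0 < δ := lt_min one_pos (div_pos hε (by linarith))
    have hδ1 : δ ≤ 1 := min_le_left _ _
    have hδ2 : δ ≤ ε / (2 * ‖x‖ + 1) := min_le_right _ _
    obtain ⟨n, hy⟩ := Metric.denseRange_iff.1 hd (‖x‖⁻¹ • x) δ hδpos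
    -- hy : dist (‖x‖⁻¹ • x) (d n) < δ
    have hnormunit : ‖‖x‖⁻¹ • x‖ = 1 := by
      rw [norm_smul, norm_inv, norm_norm, inv_mul_cancel₀ (ne_of_gt hxn)]
    have hdn_le : ‖d n‖ ≤ 1 + δ := by
      have := norm_sub_norm_le (d n) (‖x‖⁻¹ • x)
      have hdist : ‖d n - ‖x‖⁻¹ • x‖ < δ := by
        rw [← dist_eq_norm, dist_comm]; exact hy
      rw [hnormunit] at this
      linarith
    have hmax : max ‖d n‖ 1 ≤ 1 + δ := max_le hdn_le (by linarith)
    have hinner : ‖x‖ - ‖x‖ * δ ≤ ⟪x, d n⟫ := by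
      have h1 : ⟪x, d n⟫ = ⟪x, ‖x‖⁻¹ • x⟫ + ⟪x, d n - ‖x‖⁻¹ • x⟫ := by
        rw [← inner_add_right]; ring_nf
        congr 1
        abel
      have h2 : (⟪x, ‖x‖⁻¹ • x⟫ : ℝ) = ‖x‖ := by
        rw [real_inner_smul_right, real_inner_self_eq_norm_sq]
        field_simp
      have h3 : |⟪x, d n - ‖x‖⁻¹ • x⟫| ≤ ‖x‖ * δ := by
        calc |⟪x, d n - ‖x‖⁻¹ • x⟫| ≤ ‖x‖ * ‖d n - ‖x‖⁻¹ • x‖ := abs_real_inner_le_norm _ _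
          _ ≤ ‖x‖ * δ := by
            refine mul_le_mul_of_nonneg_left ?_ (norm_nonneg _)
            rw [← dist_eq_norm, dist_comm]
            exact le_of_lt hy
      have := neg_abs_le (⟪x, d n - ‖x‖⁻¹ • x⟫ : ℝ)
      rw [h1, h2]
      linarith
    have hterm : ‖x‖ - ε ≤ ⟪x, d n⟫ / max ‖d n‖ 1 := by
      have hmaxpos : (0:ℝ) < max ‖d n‖ 1 := lt_of_lt_of_le one_pos (le_max_right _ _)
      rw [le_div_iff₀ hmaxpos]
      have key : (‖x‖ - ε) * (1 + δ) ≤ ‖x‖ - ‖x‖ * δ := by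
        have hδε : δ * (2 * ‖x‖ + 1) ≤ ε := by
          rw [← le_div_iff₀ (by linarith : (0:ℝ) < 2 * ‖x‖ + 1)]
          exact hδ2
        nlinarith [hδpos, hxn]
      rcases le_or_gt 0 (‖x‖ - ε) with hc | hc
      · calc (‖x‖ - ε) * max ‖d n‖ 1 ≤ (‖x‖ - ε) * (1 + δ) :=
              mul_le_mul_of_nonneg_left hmax hc
          _ ≤ ‖x‖ - ‖x‖ * δ := key
          _ ≤ ⟪x, d n⟫ := hinner
      · have h0 : (0:ℝ) ≤ ‖x‖ - ‖x‖ * δ := by nlinarith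
        have h1 : (‖x‖ - ε) * max ‖d n‖ 1 < 0 := mul_neg_of_neg_of_pos hc hmaxpos
        linarith
    calc ‖x‖ ≤ ⟪x, d n⟫ / max ‖d n‖ 1 + ε := by linarith
      _ ≤ _ := by
        have := le_ciSup hbdd n
        linarith


/-- Pettis measurability, exact version with a fixed dense sequence. -/
lemma measurable_of_inner_denseSeq [MeasurableSpace G] [BorelSpace G]
    (d : ℕ → G) (hd : DenseRange d) (b : Ω → G)
    (h : ∀ n, Measurable fun ω => (⟪b ω, d n⟫ : ℝ)) : Measurable b := by
  have hnorm : ∀ c : G, Measurable fun ω => ‖b ω - c‖ := by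
    intro c
    have : (fun ω => ‖b ω - c‖) =
        fun ω => ⨆ n, (⟪b ω, d n⟫ - ⟪c, d n⟫) / max ‖d n‖ 1 := by
      funext ω
      rw [norm_eq_iSup_inner d hd (b ω - c)]
      congr 1; funext n; rw [inner_sub_left]
    rw [this]
    exact Measurable.iSup fun n => ((h n).sub measurable_const).div measurable_const
  refine measurable_of_isClosed fun F hF => ?_
  rcases Set.eq_empty_or_nonempty F with rfl | ⟨x₀, hx₀⟩
  · simp
  · -- dense sequence in F
    haveI : Nonempty F := ⟨⟨x₀, hx₀⟩⟩
    set e : ℕ → G := fun n => (TopologicalSpace.denseSeq F n : G) with he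
    have heF : ∀ n, e n ∈ F := fun n => (TopologicalSpace.denseSeq F n).2
    have hedense : ∀ x ∈ F, ∀ ε > 0, ∃ n, ‖x - e n‖ < ε := by
      intro x hx ε hε
      have := TopologicalSpace.denseRange_denseSeq F
      obtain ⟨n, hn⟩ := Metric.denseRange_iff.1 this ⟨x, hx⟩ ε hε
      refine ⟨n, ?_⟩
      have : dist x (e n) < ε := by
        simpa [Subtype.dist_eq] using hn
      rwa [dist_eq_norm] at this
    have hset : b ⁻¹' F = (fun ω => ⨅ n, ‖b ω - e n‖) ⁻¹' {0} := by
      ext ω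
      simp only [Set.mem_preimage, Set.mem_singleton_iff]
      constructor
      · intro hb
        refine le_antisymm ?_ (le_ciInf fun n => norm_nonneg _)
        refine le_of_forall_pos_le_add fun ε hε => ?_
        obtain ⟨n, hn⟩ := hedense _ hb ε hε
        calc (⨅ n, ‖b ω - e n‖) ≤ ‖b ω - e n‖ :=
              ciInf_le ⟨0, by rintro r ⟨m, rfl⟩; exact norm_nonneg _⟩ n
          _ ≤ 0 + ε := by linarith
      · intro h0
        have hmem : b ω ∈ closure F := by
          rw [Metric.mem_closure_iff]
          intro ε hε
          by_contra hcon
          push_neg at hcon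
          have : ε ≤ ⨅ n, ‖b ω - e n‖ := by
            refine le_ciInf fun n => ?_
            have := hcon (e n) (heF n)
            rwa [dist_eq_norm] at this
          rw [h0] at this
          linarith
        rwa [hF.closure_eq] at hmem
    rw [hset]
    exact Measurable.iInf (fun n => hnorm (e n)) (measurableSet_singleton 0)

/-- Pettis measurability: a.e. version. -/
lemma aestronglyMeasurable_of_inner {μ : Measure Ω} (a : Ω → G)
    (h : ∀ w : G, AEMeasurable (fun ω => (⟪a ω, w⟫ : ℝ)) μ) :
    AEStronglyMeasurable a μ := by
  classical
  borelize G
  haveI : Nonempty G := ⟨0⟩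
  set d : ℕ → G := TopologicalSpace.denseSeq G with hd
  have hdd : DenseRange d := TopologicalSpace.denseRange_denseSeq G
  choose m hm hme using fun n => (h (d n))
  -- exceptional set
  set N : Set Ω := toMeasurable μ {ω | ¬ ∀ n, (⟪a ω, d n⟫ : ℝ) = m n ω} with hN
  have hNmeas : MeasurableSet N := measurableSet_toMeasurable _ _
  have hNnull : μ N = 0 := by
    rw [hN, measure_toMeasurable]
    have : ∀ᵐ ω ∂μ, ∀ n, (⟪a ω, d n⟫ : ℝ) = m n ω := by
      rw [ae_all_iff]; exact fun n => (hme n)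
    simpa [ae_iff] using this
  set b : Ω → G := N.piecewise (fun _ => 0) a with hb
  have hbmeas : Measurable b := by
    refine measurable_of_inner_denseSeq d hdd b fun n => ?_
    have : (fun ω => (⟪b ω, d n⟫ : ℝ)) = N.piecewise (fun _ => 0) (m n) := by
      funext ω
      by_cases hω : ω ∈ N
      · simp [hb, Set.piecewise, hω]
      · have hgood : ∀ k, (⟪a ω, d k⟫ : ℝ) = m k ω := by
          by_contra hcon
          exact hω (subset_toMeasurable _ _ hcon)
        simp [hb, Set.piecewise, hω, hgood n]
    rw [this]
    exact Measurable.piecewise hNmeas measurable_const (hm n)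
  refine ⟨b, hbmeas.stronglyMeasurable, ?_⟩
  have : ∀ᵐ ω ∂μ, ω ∉ N := by
    rw [ae_iff]; simpa using hNnull
  filter_upwards [this] with ω hω
  simp [hb, Set.piecewise, hω]

end Pettis

section ProxBasic
variable {H : Type*} [NormedAddCommGroup H] [InnerProductSpace ℝ H]
variable {f : H → EReal} {u p : H}

lemma prox_val_ne_top (hf : ProperLscConvex f) (h : IsProxPt 1 f u p) : f p ≠ ⊤ := by
  obtain ⟨⟨v₀, hv₀⟩, hbot, _, _⟩ := hf
  intro htop
  have := h v₀
  rw [htop] at this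
  have hlt : f v₀ + ((‖u - v₀‖ ^ 2 / (2 * 1) : ℝ) : EReal) < ⊤ :=
    EReal.add_lt_top (lt_top_iff_ne_top.2 hv₀).ne (EReal.coe_ne_top _)
  have : (⊤ : EReal) ≤ f v₀ + ((‖u - v₀‖ ^ 2 / (2 * 1) : ℝ) : EReal) := by
    rw [EReal.top_add_of_ne_bot] at this
    · exact this
    · exact EReal.coe_ne_bot _
  exact absurd (lt_of_le_of_lt this hlt) (lt_irrefl _)

lemma prox_subgradient (hf : ProperLscConvex f) (h : IsProxPt 1 f u p)
    (v : H) (hv : f v ≠ ⊤) :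
    ⟪u - p, v - p⟫ ≤ (f v).toReal - (f p).toReal := by
  obtain ⟨hproper, hbot, _, hconv⟩ := hf
  have hpt : f p ≠ ⊤ := prox_val_ne_top ⟨hproper, hbot, ‹_›, hconv⟩ h
  set rp : ℝ := (f p).toReal with hrp
  set rv : ℝ := (f v).toReal with hrv
  have hfp : f p = (rp : EReal) := (EReal.coe_toReal hpt (hbot p)).symm
  have hfv : f v = (rv : EReal) := (EReal.coe_toReal hv (hbot v)).symm
  -- key inequality for each t ∈ (0,1]
  have key : ∀ t : ℝ, 0 < t → t ≤ 1 →
      ⟪u - p, v - p⟫ ≤ rv - rp + t * ‖v - p‖ ^ 2 / 2 := by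
    intro t ht ht1
    have hcv := hconv v p t (le_of_lt ht) ht1
    rw [hfp, hfv] at hcv
    have hcv' : f (t • v + (1 - t) • p) ≤ ((t * rv + (1 - t) * rp : ℝ) : EReal) := by
      rw [EReal.coe_add, EReal.coe_mul, EReal.coe_mul]
      exact hcv
    have hmidt : f (t • v + (1 - t) • p) ≠ ⊤ := by
      intro htop; rw [htop] at hcv'
      exact absurd (lt_of_le_of_lt hcv' (EReal.coe_lt_top _)) (lt_irrefl _)
    set rm : ℝ := (f (t • v + (1 - t) • p)).toReal with hrm
    have hfm : f (t • v + (1 - t) • p) = (rm : EReal) :=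
      (EReal.coe_toReal hmidt (hbot _)).symm
    have hrmle : rm ≤ t * rv + (1 - t) * rp := by
      rw [hfm] at hcv'; exact EReal.coe_le_coe_iff.1 hcv'
    have hpx := h (t • v + (1 - t) • p)
    rw [hfp, hfm, ← EReal.coe_add, ← EReal.coe_add] at hpx
    have hpx' : rp + ‖u - p‖ ^ 2 / (2 * 1) ≤
        rm + ‖u - (t • v + (1 - t) • p)‖ ^ 2 / (2 * 1) := EReal.coe_le_coe_iff.1 hpx
    have hexp : u - (t • v + (1 - t) • p) = (u - p) - t • (v - p) := by
      rw [smul_sub, sub_smul, one_smul]; abel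
    have hnorm : ‖u - (t • v + (1 - t) • p)‖ ^ 2 =
        ‖u - p‖ ^ 2 - 2 * t * ⟪u - p, v - p⟫ + t ^ 2 * ‖v - p‖ ^ 2 := by
      rw [hexp, @norm_sub_sq ℝ, real_inner_smul_right, norm_smul]
      simp [Real.norm_eq_abs, abs_of_pos ht]
      ring
    rw [hnorm] at hpx'
    have := hpx'
    have h2 : t * ⟪u - p, v - p⟫ ≤ t * (rv - rp) + t ^ 2 * ‖v - p‖ ^ 2 / 2 := by
      nlinarith [hrmle, this]
    have h2' : t * ⟪u - p, v - p⟫ ≤ t * ((rv - rp) + t * ‖v - p‖ ^ 2 / 2) := by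
      calc t * ⟪u - p, v - p⟫ ≤ t * (rv - rp) + t ^ 2 * ‖v - p‖ ^ 2 / 2 := h2
        _ = t * ((rv - rp) + t * ‖v - p‖ ^ 2 / 2) := by ring
    have h3 := (mul_le_mul_iff_right₀ ht).1 h2'
    linarith [h3]
  refine le_of_forall_pos_le_add fun ε hε => ?_
  rcases eq_or_ne (‖v - p‖ ^ 2) 0 with hz | hz
  · have := key 1 one_pos le_rfl
    rw [hz] at this
    simpa using le_trans this (by linarith)
  · have hpos : 0 < ‖v - p‖ ^ 2 := lt_of_le_of_ne (by positivity) (Ne.symm hz)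
    set t : ℝ := min 1 (ε / (‖v - p‖ ^ 2)) with htd
    have ht : 0 < t := lt_min one_pos (div_pos hε hpos)
    have ht1 : t ≤ 1 := min_le_left _ _
    have := key t ht ht1
    have htb : t * ‖v - p‖ ^ 2 ≤ ε := by
      calc t * ‖v - p‖ ^ 2 ≤ (ε / ‖v - p‖ ^ 2) * ‖v - p‖ ^ 2 :=
            mul_le_mul_of_nonneg_right (min_le_right _ _) (le_of_lt hpos)
        _ = ε := div_mul_cancel₀ ε hz
    linarith

lemma prox_firm (hf : ProperLscConvex f) {v q : H}
    (h1 : IsProxPt 1 f u p) (h2 : IsProxPt 1 f v q) :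
    ‖p - q‖ ^ 2 ≤ ⟪u - v, p - q⟫ := by
  have hpt : f p ≠ ⊤ := prox_val_ne_top hf h1
  have hqt : f q ≠ ⊤ := prox_val_ne_top hf h2
  have ha := prox_subgradient hf h1 q hqt
  have hb := prox_subgradient hf h2 p hpt
  have hsum : ⟪u - p, q - p⟫ + ⟪v - q, p - q⟫ ≤ 0 := by linarith
  have hexp : ⟪u - v, p - q⟫ - ‖p - q‖ ^ 2 = -(⟪u - p, q - p⟫ + ⟪v - q, p - q⟫) := by
    have e1 : ⟪u - p, q - p⟫ = ⟪u, q - p⟫ - ⟪p, q - p⟫ := by rw [inner_sub_left]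
    have e2 : ⟪v - q, p - q⟫ = ⟪v, p - q⟫ - ⟪q, p - q⟫ := by rw [inner_sub_left]
    have e3 : ⟪u - v, p - q⟫ = ⟪u, p - q⟫ - ⟪v, p - q⟫ := by rw [inner_sub_left]
    have e4 : ‖p - q‖ ^ 2 = ⟪p, p - q⟫ - ⟪q, p - q⟫ := by
      rw [← real_inner_self_eq_norm_sq, inner_sub_left]
    have e5 : (⟪u, q - p⟫ : ℝ) = -⟪u, p - q⟫ := by
      rw [← inner_neg_right]; congr 1; abel
    have e6 : (⟪p, q - p⟫ : ℝ) = -⟪p, p - q⟫ := by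
      rw [← inner_neg_right]; congr 1; abel
    rw [e1, e2, e3, e4, e5, e6]; ring
  linarith [hsum, hexp.symm.le, hexp.le]

lemma prox_nonexpansive (hf : ProperLscConvex f) {v q : H}
    (h1 : IsProxPt 1 f u p) (h2 : IsProxPt 1 f v q) :
    ‖p - q‖ ≤ ‖u - v‖ := by
  have hfirm := prox_firm hf h1 h2
  rcases eq_or_ne (p - q) 0 with hz | hz
  · rw [hz]; simp [norm_nonneg]
  · have hpos : 0 < ‖p - q‖ := norm_pos_iff.2 hz
    have hcs : ⟪u - v, p - q⟫ ≤ ‖u - v‖ * ‖p - q‖ := real_inner_le_norm _ _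
    have : ‖p - q‖ ^ 2 ≤ ‖u - v‖ * ‖p - q‖ := le_trans hfirm hcs
    nlinarith

end ProxBasic

section L2Helpers
variable {Ω : Type*} [MeasurableSpace Ω] {μ : Measure Ω}

lemma integrable_mul_of_L2 {φ ψ : Ω → ℝ} (hφ : MemLp φ 2 μ) (hψ : MemLp ψ 2 μ) :
    Integrable (fun ω => φ ω * ψ ω) μ := by
  have h2 : (1 : ℝ≥0∞) / 1 = 1 / 2 + 1 / 2 := by
    rw [ENNReal.div_add_div_same, one_add_one_eq_two, ENNReal.div_self two_ne_zero ENNReal.ofNat_ne_top, div_one]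
  haveI : ENNReal.HolderTriple 2 2 1 := ⟨by rw [ENNReal.inv_two_add_inv_two, inv_one]⟩
  have := MemLp.smul (r := 1) hψ hφ
  rw [memLp_one_iff_integrable] at this
  exact this

lemma integrable_inner_of_L2 {H : Type*} [NormedAddCommGroup H] [InnerProductSpace ℝ H]
    {x y : Ω → H} (hx : MemLp x 2 μ) (hy : MemLp y 2 μ) :
    Integrable (fun ω => (⟪x ω, y ω⟫ : ℝ)) μ := by
  refine Integrable.mono' (integrable_mul_of_L2 hx.norm hy.norm) (hx.1.inner hy.1) ?_
  filter_upwards with ω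
  rw [Real.norm_eq_abs]
  exact abs_real_inner_le_norm _ _

end L2Helpers

section Chain
variable {G : Type*} [NormedAddCommGroup G] [InnerProductSpace ℝ G]

noncomputable def chainVal (T : G → G) : List G → G → ℝ
  | [], v => ⟪(0:G) - T 0, v - T 0⟫
  | z :: l, v => ⟪z - T z, v - T z⟫ + chainVal T l (T z)

noncomputable def chainSeq (l : List G) : ℕ → G := fun i => (0 :: l.reverse).getD i 0

lemma chainSeq_zero (l : List G) : chainSeq l 0 = 0 := rfl

lemma chainSeq_of_ge (l : List G) {i : ℕ} (h : l.length + 1 ≤ i) : chainSeq l i = 0 := by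
  unfold chainSeq
  apply List.getD_eq_default
  simpa using h

lemma chainSeq_cons_of_le (z : G) (l : List G) {i : ℕ} (h : i ≤ l.length) :
    chainSeq (z :: l) i = chainSeq l i := by
  unfold chainSeq
  have : (0 :: (z :: l).reverse : List G) = (0 :: l.reverse) ++ [z] := by
    simp [List.reverse_cons]
  rw [this]
  exact List.getD_append _ _ _ _ (by simpa using Nat.lt_succ_of_le h)

lemma chainSeq_cons_last (z : G) (l : List G) :
    chainSeq (z :: l) (l.length + 1) = z := by
  unfold chainSeq
  have : (0 :: (z :: l).reverse : List G) = (0 :: l.reverse) ++ [z] := by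
    simp [List.reverse_cons]
  rw [this, List.getD_append_right _ _ _ _ (by simp)]
  simp

lemma chainVal_eq_sum (T : G → G) (l : List G) (v : G) :
    chainVal T l v = (∑ i ∈ Finset.range l.length,
      ⟪chainSeq l i - T (chainSeq l i), T (chainSeq l (i+1)) - T (chainSeq l i)⟫)
      + ⟪chainSeq l l.length - T (chainSeq l l.length), v - T (chainSeq l l.length)⟫ := by
  induction l generalizing v with
  | nil => simp [chainVal, chainSeq_zero]
  | cons z l ih =>
    have hlast := chainSeq_cons_last z l
    have hsum : ∀ i ∈ Finset.range l.length,
        (⟪chainSeq (z :: l) i - T (chainSeq (z :: l) i),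
          T (chainSeq (z :: l) (i+1)) - T (chainSeq (z :: l) i)⟫ : ℝ) =
        ⟪chainSeq l i - T (chainSeq l i), T (chainSeq l (i+1)) - T (chainSeq l i)⟫ := by
      intro i hi
      rw [Finset.mem_range] at hi
      rw [chainSeq_cons_of_le z l (le_of_lt hi), chainSeq_cons_of_le z l hi]
    show (⟪z - T z, v - T z⟫ : ℝ) + chainVal T l (T z) = _
    rw [ih (T z)]
    simp only [List.length_cons]
    rw [Finset.sum_range_succ, Finset.sum_congr rfl hsum,
      chainSeq_cons_of_le z l le_rfl, hlast]
    ring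

lemma chainVal_cons (T : G → G) (z : G) (l : List G) (v : G) :
    chainVal T (z :: l) v = ⟪z - T z, v - T z⟫ + chainVal T l (T z) := rfl

lemma chainVal_affine (T : G → G) (l : List G) (x y : G) (t : ℝ) :
    chainVal T l (t • x + (1 - t) • y) = t * chainVal T l x + (1 - t) * chainVal T l y := by
  have key : ∀ w c : G, (⟪w, t • x + (1 - t) • y - c⟫ : ℝ) =
      t * ⟪w, x - c⟫ + (1 - t) * ⟪w, y - c⟫ := by
    intro w c
    have : t • x + (1 - t) • y - c = t • (x - c) + (1 - t) • (y - c) := by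
      module
    rw [this, inner_add_right, real_inner_smul_right, real_inner_smul_right]
  cases l with
  | nil => show (⟪_, _⟫ : ℝ) = _; rw [key]; show _ = t * ⟪_,_⟫ + (1-t) * ⟪_,_⟫; ring
  | cons z l =>
    rw [chainVal_cons, chainVal_cons, chainVal_cons, key]
    ring

lemma chainVal_continuous (T : G → G) (l : List G) :
    Continuous fun v => chainVal T l v := by
  cases l with
  | nil =>
    exact (continuous_const.inner (continuous_id.sub continuous_const))
  | cons z l =>
    simp only [chainVal_cons]
    exact (continuous_const.inner (continuous_id.sub continuous_const)).add continuous_const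

end Chain

lemma ereal_mul_le_mul_left (t : ℝ) (ht : 0 ≤ t) {a b : EReal} (h : a ≤ b) :
    (t : EReal) * a ≤ (t : EReal) * b := by
  rw [mul_comm, mul_comm (t : EReal) b]
  exact mul_le_mul_of_nonneg_right h (by exact_mod_cast ht : (0:EReal) ≤ (t:EReal))



theorem integral_proximal_mixture_is_prox
    {Ω G H : Type*} [MeasurableSpace Ω] {μ : Measure Ω} [SigmaFinite μ]
    [NormedAddCommGroup G] [InnerProductSpace ℝ G] [CompleteSpace G]
    [SecondCountableTopology G]
    [NormedAddCommGroup H] [InnerProductSpace ℝ H] [CompleteSpace H]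
    [SecondCountableTopology H]
    (f : Ω → H → EReal) (hf : ∀ ω, ProperLscConvex (f ω))
    (P : Ω → H → H) (hP : ∀ ω u, IsProxPt 1 (f ω) u (P ω u))
    (hPmeas : ∀ x : Ω → H, MemLp x 2 μ →
      AEStronglyMeasurable (fun ω => P ω (x ω)) μ)
    (hPz : ∃ z : Ω → H, MemLp z 2 μ ∧ MemLp (fun ω => P ω (z ω)) 2 μ)
    (L : Ω → G →L[ℝ] H)
    (hLmeas : ∀ z : G, AEStronglyMeasurable (fun ω => L ω z) μ)
    (hLint : Integrable (fun ω => ‖L ω‖ ^ 2) μ)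
    (hL1 : (∫ ω, ‖L ω‖ ^ 2 ∂μ) ≤ 1) :
    ∃ g : G → EReal, ProperLscConvex g ∧
      ∀ z : G,
        IsProxPt 1 g z
          (∫ ω, ContinuousLinearMap.adjoint (L ω) (P ω (L ω z)) ∂μ) ∧
        ∀ v : G, IsProxPt 1 g z v →
          v = ∫ ω, ContinuousLinearMap.adjoint (L ω) (P ω (L ω z)) ∂μ := by
  classical
  obtain ⟨z₀, hz₀, hPz₀⟩ := hPz
  -- ‖L ω‖ is in L²
  have hLmeasn : AEStronglyMeasurable (fun ω => ‖L ω‖) μ := by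
    have h1 : AEStronglyMeasurable (fun ω => ‖L ω‖ ^ 2) μ := hLint.1
    have : (fun ω => ‖L ω‖) = fun ω => Real.sqrt (‖L ω‖ ^ 2) := by
      funext ω; rw [Real.sqrt_sq (norm_nonneg _)]
    rw [this]
    exact Real.continuous_sqrt.comp_aestronglyMeasurable h1
  have hLnorm : MemLp (fun ω => ‖L ω‖) 2 μ :=
    (memLp_two_iff_integrable_sq hLmeasn).2 (by simpa using hLint)
  -- L z is in L²
  have hLz : ∀ z : G, MemLp (fun ω => L ω z) 2 μ := by
    intro z
    refine (memLp_two_iff_integrable_sq_norm (hLmeas z)).2 ?_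
    refine Integrable.mono' (hLint.mul_const (‖z‖ ^ 2)) ((hLmeas z).norm.pow 2) ?_
    filter_upwards with ω
    rw [Real.norm_eq_abs, abs_of_nonneg (by positivity)]
    calc ‖L ω z‖ ^ 2 ≤ (‖L ω‖ * ‖z‖) ^ 2 := by
          have := (L ω).le_opNorm z
          have h0 : (0:ℝ) ≤ ‖L ω z‖ := norm_nonneg _
          nlinarith
      _ = ‖L ω‖ ^ 2 * ‖z‖ ^ 2 := by ring
  -- P (L z) is in L²
  have hQ : ∀ z : G, MemLp (fun ω => P ω (L ω z)) 2 μ := by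
    intro z
    refine MemLp.of_le (hPz₀.norm.add ((hLz z).sub hz₀).norm)
      (hPmeas _ (hLz z)) ?_
    filter_upwards with ω
    have hne := prox_nonexpansive (hf ω) (hP ω (L ω z)) (hP ω (z₀ ω))
    calc ‖P ω (L ω z)‖ ≤ ‖P ω (z₀ ω)‖ + ‖P ω (L ω z) - P ω (z₀ ω)‖ := by
          have := norm_add_le (P ω (z₀ ω)) (P ω (L ω z) - P ω (z₀ ω))
          simpa using this
      _ ≤ ‖P ω (z₀ ω)‖ + ‖L ω z - z₀ ω‖ := by linarith
      _ ≤ ‖(fun ω => ‖P ω (z₀ ω)‖ + ‖L ω z - z₀ ω‖) ω‖ := by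
          rw [Real.norm_eq_abs]
          exact le_abs_self _
  -- the integrand is AE strongly measurable
  have hAmeas : ∀ z : G,
      AEStronglyMeasurable (fun ω => ContinuousLinearMap.adjoint (L ω) (P ω (L ω z))) μ := by
    intro z
    refine aestronglyMeasurable_of_inner _ fun w => ?_
    have : (fun ω => (⟪ContinuousLinearMap.adjoint (L ω) (P ω (L ω z)), w⟫ : ℝ)) =
        fun ω => ⟪P ω (L ω z), L ω w⟫ := by
      funext ω
      rw [ContinuousLinearMap.adjoint_inner_left]
    rw [this]
    exact ((hQ z).1.inner (hLmeas w)).aemeasurable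
  -- the integrand is integrable
  have hAint : ∀ z : G,
      Integrable (fun ω => ContinuousLinearMap.adjoint (L ω) (P ω (L ω z))) μ := by
    intro z
    refine Integrable.mono' (integrable_mul_of_L2 hLnorm (hQ z).norm) (hAmeas z) ?_
    filter_upwards with ω
    calc ‖ContinuousLinearMap.adjoint (L ω) (P ω (L ω z))‖
        ≤ ‖ContinuousLinearMap.adjoint (L ω)‖ * ‖P ω (L ω z)‖ :=
          (ContinuousLinearMap.adjoint (L ω)).le_opNorm _
      _ = ‖L ω‖ * ‖P ω (L ω z)‖ := by
          rw [LinearIsometryEquiv.norm_map]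
  set T : G → G := fun z => ∫ ω, ContinuousLinearMap.adjoint (L ω) (P ω (L ω z)) ∂μ
    with hT
  have hTinner : ∀ z w : G, (⟪w, T z⟫ : ℝ) = ∫ ω, ⟪L ω w, P ω (L ω z)⟫ ∂μ := by
    intro z w
    rw [hT]
    rw [← integral_inner (hAint z) w]
    congr 1; funext ω
    rw [ContinuousLinearMap.adjoint_inner_right]
  -- key operator-norm estimate
  have hTdiff : ∀ z z' : G, ‖T z - T z'‖ ^ 2 ≤
      ∫ ω, ‖P ω (L ω z) - P ω (L ω z')‖ ^ 2 ∂μ := by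
    intro z z'
    set d : G := T z - T z' with hd
    set ΔQ : Ω → H := fun ω => P ω (L ω z) - P ω (L ω z') with hΔQdef
    have hΔQ : MemLp ΔQ 2 μ := (hQ z).sub (hQ z')
    have hdsq : ‖d‖ ^ 2 = ∫ ω, ⟪L ω d, ΔQ ω⟫ ∂μ := by
      have h1 := hTinner z d
      have h2 := hTinner z' d
      have h3 : (⟪d, d⟫ : ℝ) = ⟪d, T z⟫ - ⟪d, T z'⟫ := by
        rw [hd, inner_sub_right]
      rw [← real_inner_self_eq_norm_sq, h3, h1, h2,
        ← integral_sub (integrable_inner_of_L2 (hLz d) (hQ z))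
          (integrable_inner_of_L2 (hLz d) (hQ z'))]
      congr 1; funext ω
      rw [hΔQdef]
      simp only
      rw [inner_sub_right]
    have hstep1 : ∫ ω, (⟪L ω d, ΔQ ω⟫ : ℝ) ∂μ ≤
        ∫ ω, (‖L ω‖ * ‖ΔQ ω‖) * ‖d‖ ∂μ := by
      refine integral_mono (integrable_inner_of_L2 (hLz d) hΔQ)
        ((integrable_mul_of_L2 hLnorm hΔQ.norm).mul_const ‖d‖) ?_
      intro ω
      calc (⟪L ω d, ΔQ ω⟫ : ℝ) ≤ ‖L ω d‖ * ‖ΔQ ω‖ := real_inner_le_norm _ _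
        _ ≤ (‖L ω‖ * ‖d‖) * ‖ΔQ ω‖ :=
            mul_le_mul_of_nonneg_right ((L ω).le_opNorm d) (norm_nonneg _)
        _ = (‖L ω‖ * ‖ΔQ ω‖) * ‖d‖ := by ring
    have hpq : Real.HolderConjugate 2 2 := Real.HolderConjugate.two_two
    have h2e : ENNReal.ofReal (2:ℝ) = 2 := by
      rw [ENNReal.ofReal_ofNat]
    have hstep2 : ∫ ω, ‖L ω‖ * ‖ΔQ ω‖ ∂μ ≤
        (∫ ω, ‖L ω‖ ^ 2 ∂μ) ^ ((1:ℝ)/2) * (∫ ω, ‖ΔQ ω‖ ^ 2 ∂μ) ^ ((1:ℝ)/2) := by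
      have := integral_mul_le_Lp_mul_Lq_of_nonneg hpq
        (Filter.Eventually.of_forall fun ω => norm_nonneg (L ω))
        (Filter.Eventually.of_forall fun ω => norm_nonneg (ΔQ ω))
        (by rw [h2e]; exact hLnorm) (by rw [h2e]; exact hΔQ.norm)
      have hcast : ∀ (φ : Ω → ℝ), (∫ ω, φ ω ^ (2:ℝ) ∂μ) = ∫ ω, φ ω ^ 2 ∂μ := by
        intro φ; congr 1; funext ω
        rw [show (2:ℝ) = ((2:ℕ):ℝ) by norm_num, Real.rpow_natCast]
      rw [hcast, hcast] at this
      exact this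
    have hI : (0:ℝ) ≤ ∫ ω, ‖ΔQ ω‖ ^ 2 ∂μ := integral_nonneg fun ω => by positivity
    set I : ℝ := ∫ ω, ‖ΔQ ω‖ ^ 2 ∂μ with hIdef
    have hL12 : (∫ ω, ‖L ω‖ ^ 2 ∂μ) ^ ((1:ℝ)/2) ≤ 1 :=
      Real.rpow_le_one (integral_nonneg fun ω => by positivity) hL1 (by norm_num)
    have hIhalf : (0:ℝ) ≤ I ^ ((1:ℝ)/2) := Real.rpow_nonneg hI _
    have hmain : ‖d‖ ^ 2 ≤ I ^ ((1:ℝ)/2) * ‖d‖ := by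
      rw [hdsq]
      calc ∫ ω, (⟪L ω d, ΔQ ω⟫ : ℝ) ∂μ ≤ ∫ ω, (‖L ω‖ * ‖ΔQ ω‖) * ‖d‖ ∂μ := hstep1
        _ = (∫ ω, ‖L ω‖ * ‖ΔQ ω‖ ∂μ) * ‖d‖ := integral_mul_const _ _
        _ ≤ ((∫ ω, ‖L ω‖ ^ 2 ∂μ) ^ ((1:ℝ)/2) * I ^ ((1:ℝ)/2)) * ‖d‖ :=
            mul_le_mul_of_nonneg_right hstep2 (norm_nonneg _)
        _ ≤ (1 * I ^ ((1:ℝ)/2)) * ‖d‖ := by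
            refine mul_le_mul_of_nonneg_right
              (mul_le_mul_of_nonneg_right hL12 hIhalf) (norm_nonneg _)
        _ = I ^ ((1:ℝ)/2) * ‖d‖ := by ring
    have hsq : (I ^ ((1:ℝ)/2)) ^ 2 = I := by
      rw [← Real.rpow_natCast (I ^ ((1:ℝ)/2)) 2, ← Real.rpow_mul hI]
      norm_num
    rcases eq_or_ne d 0 with hd0 | hd0
    · rw [hd0]; simpa using hI
    · have hdn : (0:ℝ) < ‖d‖ := norm_pos_iff.2 hd0
      have : ‖d‖ ≤ I ^ ((1:ℝ)/2) := by nlinarith [hmain]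
      calc ‖d‖ ^ 2 ≤ (I ^ ((1:ℝ)/2)) ^ 2 := by nlinarith
        _ = I := hsq
  -- cyclic monotonicity of T
  have hB2 : ∀ a b : G, (⟪a, b - a⟫ : ℝ) = (‖b‖^2 - ‖a‖^2 - ‖b - a‖^2)/2 := by
    intro a b
    have hns := norm_sub_sq_real b a
    have h1 : (⟪a, b - a⟫ : ℝ) = ⟪a, b⟫ - ⟪a, a⟫ := inner_sub_right _ _ _
    have h2 : (⟪a, a⟫ : ℝ) = ‖a‖^2 := real_inner_self_eq_norm_sq a
    have hc := real_inner_comm a b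
    linarith
  have hB2' : ∀ a b : H, (⟪a, b - a⟫ : ℝ) = (‖b‖^2 - ‖a‖^2 - ‖b - a‖^2)/2 := by
    intro a b
    have hns := norm_sub_sq_real b a
    have h1 : (⟪a, b - a⟫ : ℝ) = ⟪a, b⟫ - ⟪a, a⟫ := inner_sub_right _ _ _
    have h2 : (⟪a, a⟫ : ℝ) = ‖a‖^2 := real_inner_self_eq_norm_sq a
    have hc := real_inner_comm a b
    linarith
  have cyc : ∀ (m : ℕ) (s : ℕ → G), s m = s 0 →
      ∑ i ∈ Finset.range m, (⟪s i - T (s i), T (s (i+1)) - T (s i)⟫ : ℝ) ≤ 0 := by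
    intro m s hs
    set Qs : ℕ → Ω → H := fun i ω => P ω (L ω (s i)) with hQs
    set ΔQ : ℕ → Ω → H := fun i ω => Qs (i+1) ω - Qs i ω with hΔQ
    have hΔQL2 : ∀ i, MemLp (ΔQ i) 2 μ := fun i => (hQ (s (i+1))).sub (hQ (s i))
    have hΔQsq_int : ∀ i, Integrable (fun ω => ‖ΔQ i ω‖ ^ 2) μ := fun i =>
      (memLp_two_iff_integrable_sq_norm (hΔQL2 i).1).1 (hΔQL2 i)
    -- part B : sum of ⟪T s i, ΔT i⟫ telescopes
    have hBsum : ∑ i ∈ Finset.range m, (⟪T (s i), T (s (i+1)) - T (s i)⟫ : ℝ)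
        = -(1/2) * ∑ i ∈ Finset.range m, ‖T (s (i+1)) - T (s i)‖^2 := by
      rw [Finset.sum_congr rfl (fun i _ => hB2 (T (s i)) (T (s (i+1))))]
      have htel : ∑ i ∈ Finset.range m, (‖T (s (i+1))‖^2 - ‖T (s i)‖^2) = 0 := by
        rw [Finset.sum_range_sub (fun i => ‖T (s i)‖^2), hs, sub_self]
      have hre : ∀ i ∈ Finset.range m,
          (‖T (s (i+1))‖^2 - ‖T (s i)‖^2 - ‖T (s (i+1)) - T (s i)‖^2)/2
          = (‖T (s (i+1))‖^2 - ‖T (s i)‖^2)/2 - ‖T (s (i+1)) - T (s i)‖^2/2 := by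
        intro i _; ring
      rw [Finset.sum_congr rfl hre, Finset.sum_sub_distrib, ← Finset.sum_div,
        ← Finset.sum_div, htel]
      ring
    -- part A : sum of ⟪s i, ΔT i⟫ as an integral
    have hAi : ∀ i, (⟪s i, T (s (i+1)) - T (s i)⟫ : ℝ) = ∫ ω, ⟪L ω (s i), ΔQ i ω⟫ ∂μ := by
      intro i
      rw [inner_sub_right, hTinner (s (i+1)) (s i), hTinner (s i) (s i),
        ← integral_sub (integrable_inner_of_L2 (hLz (s i)) (hQ (s (i+1))))
          (integrable_inner_of_L2 (hLz (s i)) (hQ (s i)))]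
      congr 1; funext ω
      rw [hΔQ]; simp only [hQs]
      rw [inner_sub_right]
    have hInnerInt : ∀ i, Integrable (fun ω => (⟪L ω (s i), ΔQ i ω⟫ : ℝ)) μ := fun i =>
      integrable_inner_of_L2 (hLz (s i)) (hΔQL2 i)
    have hAsum : ∑ i ∈ Finset.range m, (⟪s i, T (s (i+1)) - T (s i)⟫ : ℝ)
        = ∫ ω, ∑ i ∈ Finset.range m, (⟪L ω (s i), ΔQ i ω⟫ : ℝ) ∂μ := by
      rw [Finset.sum_congr rfl (fun i _ => hAi i),
        ← integral_finset_sum _ (fun i _ => hInnerInt i)]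
    -- pointwise bound
    have hptwise : ∀ ω, ∑ i ∈ Finset.range m, (⟪L ω (s i), ΔQ i ω⟫ : ℝ)
        ≤ -(1/2) * ∑ i ∈ Finset.range m, ‖ΔQ i ω‖^2 := by
      intro ω
      have hsplit : ∀ i, (⟪L ω (s i), ΔQ i ω⟫ : ℝ)
          = ⟪L ω (s i) - Qs i ω, ΔQ i ω⟫ + ⟪Qs i ω, ΔQ i ω⟫ := by
        intro i; rw [inner_sub_left]; ring
      rw [Finset.sum_congr rfl (fun i _ => hsplit i), Finset.sum_add_distrib]
      have hfirst : ∑ i ∈ Finset.range m, (⟪L ω (s i) - Qs i ω, ΔQ i ω⟫ : ℝ)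
          ≤ ∑ i ∈ Finset.range m,
            ((f ω (Qs (i+1) ω)).toReal - (f ω (Qs i ω)).toReal) := by
        refine Finset.sum_le_sum fun i _ => ?_
        exact prox_subgradient (hf ω) (hP ω (L ω (s i))) (Qs (i+1) ω)
          (prox_val_ne_top (hf ω) (hP ω (L ω (s (i+1)))))
      have hfirst0 : ∑ i ∈ Finset.range m,
          ((f ω (Qs (i+1) ω)).toReal - (f ω (Qs i ω)).toReal) = 0 := by
        rw [Finset.sum_range_sub (fun i => (f ω (Qs i ω)).toReal)]
        have : Qs m ω = Qs 0 ω := by rw [hQs]; simp only; rw [hs]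
        rw [this, sub_self]
      have hsecond : ∑ i ∈ Finset.range m, (⟪Qs i ω, ΔQ i ω⟫ : ℝ)
          = -(1/2) * ∑ i ∈ Finset.range m, ‖ΔQ i ω‖^2 := by
        rw [Finset.sum_congr rfl (fun i _ => hB2' (Qs i ω) (Qs (i+1) ω))]
        have htel : ∑ i ∈ Finset.range m, (‖Qs (i+1) ω‖^2 - ‖Qs i ω‖^2) = 0 := by
          rw [Finset.sum_range_sub (fun i => ‖Qs i ω‖^2)]
          have : Qs m ω = Qs 0 ω := by rw [hQs]; simp only; rw [hs]
          rw [this, sub_self]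
        have hre : ∀ i ∈ Finset.range m,
            (‖Qs (i+1) ω‖^2 - ‖Qs i ω‖^2 - ‖Qs (i+1) ω - Qs i ω‖^2)/2
            = (‖Qs (i+1) ω‖^2 - ‖Qs i ω‖^2)/2 - ‖ΔQ i ω‖^2/2 := by
          intro i _; rw [hΔQ]; ring
        rw [Finset.sum_congr rfl hre, Finset.sum_sub_distrib, ← Finset.sum_div,
          ← Finset.sum_div, htel]
        ring
      linarith [hfirst, hfirst0, hsecond.le, hsecond.ge]
    -- integrate the pointwise bound
    have hint2 : Integrable (fun ω => -(1/2) * ∑ i ∈ Finset.range m, ‖ΔQ i ω‖^2) μ := by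
      exact (integrable_finset_sum _ (fun i _ => hΔQsq_int i)).const_mul _
    have hAle : ∫ ω, ∑ i ∈ Finset.range m, (⟪L ω (s i), ΔQ i ω⟫ : ℝ) ∂μ
        ≤ ∫ ω, -(1/2) * ∑ i ∈ Finset.range m, ‖ΔQ i ω‖^2 ∂μ :=
      integral_mono (integrable_finset_sum _ (fun i _ => hInnerInt i)) hint2
        hptwise
    have hrhs : ∫ ω, -(1/2) * ∑ i ∈ Finset.range m, ‖ΔQ i ω‖^2 ∂μ
        = -(1/2) * ∑ i ∈ Finset.range m, ∫ ω, ‖ΔQ i ω‖^2 ∂μ := by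
      rw [integral_const_mul, integral_finset_sum _ (fun i _ => hΔQsq_int i)]
    -- assemble
    have hgoal : ∑ i ∈ Finset.range m, (⟪s i - T (s i), T (s (i+1)) - T (s i)⟫ : ℝ)
        = (∑ i ∈ Finset.range m, (⟪s i, T (s (i+1)) - T (s i)⟫ : ℝ))
          - ∑ i ∈ Finset.range m, (⟪T (s i), T (s (i+1)) - T (s i)⟫ : ℝ) := by
      rw [← Finset.sum_sub_distrib]
      refine Finset.sum_congr rfl fun i _ => ?_
      rw [inner_sub_left]
    have hTd : ∑ i ∈ Finset.range m, ‖T (s (i+1)) - T (s i)‖^2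
        ≤ ∑ i ∈ Finset.range m, ∫ ω, ‖ΔQ i ω‖^2 ∂μ := by
      refine Finset.sum_le_sum fun i _ => ?_
      have := hTdiff (s (i+1)) (s i)
      simpa [hΔQ, hQs] using this
    rw [hgoal, hBsum, hAsum]
    have := le_trans hAle (le_of_eq hrhs)
    linarith [this, hTd]
  -- Rockafellar potential
  set g : G → EReal := fun v => ⨆ l : List G, ((chainVal T l v : ℝ) : EReal) with hg
  have hle : ∀ (l : List G) (v : G), ((chainVal T l v : ℝ) : EReal) ≤ g v := by
    intro l v
    exact le_iSup (fun l => ((chainVal T l v : ℝ) : EReal)) l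
  have hg_ne_bot : ∀ v, g v ≠ ⊥ := by
    intro v h
    have := hle [] v
    rw [h, le_bot_iff] at this
    exact (EReal.coe_ne_bot _) this
  have hcyc0 : ∀ l : List G, chainVal T l (T 0) ≤ 0 := by
    intro l
    have hseq := chainVal_eq_sum T l (T 0)
    have hzero : chainSeq l (l.length + 1) = (0 : G) := chainSeq_of_ge l le_rfl
    have hs0 : chainSeq l (l.length + 1) = chainSeq l 0 := by
      rw [chainSeq_zero, hzero]
    have hcy := cyc (l.length + 1) (chainSeq l) hs0
    rw [Finset.sum_range_succ, hzero] at hcy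
    rw [hseq]
    exact hcy
  have hgT0 : g (T 0) = 0 := by
    refine le_antisymm (iSup_le fun l => ?_) ?_
    · rw [show ((0:EReal) = ((0:ℝ) : EReal)) by simp]
      exact EReal.coe_le_coe_iff.2 (hcyc0 l)
    · have h1 := hle [] (T 0)
      have hv : chainVal T [] (T 0) = 0 := by
        show (⟪(0:G) - T 0, T 0 - T 0⟫ : ℝ) = 0
        rw [sub_self, inner_zero_right]
      rw [hv] at h1
      rw [show (((0:ℝ) : EReal) = (0:EReal)) by simp] at h1
      exact h1
  have hgTtop : ∀ w, g (T w) ≠ ⊤ := by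
    intro w
    have hub : ∀ l : List G, chainVal T l (T w) ≤ -⟪w - T w, T 0 - T w⟫ := by
      intro l
      have h := hcyc0 (w :: l)
      rw [chainVal_cons] at h
      linarith
    intro htop
    have h2 : g (T w) ≤ ((-⟪w - T w, T 0 - T w⟫ : ℝ) : EReal) :=
      iSup_le fun l => EReal.coe_le_coe_iff.2 (hub l)
    rw [htop, top_le_iff] at h2
    exact (EReal.coe_ne_top _) h2
  have hgTreal : ∀ w, g (T w) = (((g (T w)).toReal : ℝ) : EReal) := fun w =>
    (EReal.coe_toReal (hgTtop w) (hg_ne_bot _)).symm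
  have hsub : ∀ w v : G, g v ≠ ⊤ →
      (g (T w)).toReal + ⟪w - T w, v - T w⟫ ≤ (g v).toReal := by
    intro w v hv
    have hvreal : g v = (((g v).toReal : ℝ) : EReal) :=
      (EReal.coe_toReal hv (hg_ne_bot v)).symm
    have hlb : ∀ l : List G, chainVal T l (T w) ≤ (g v).toReal - ⟪w - T w, v - T w⟫ := by
      intro l
      have h1 := hle (w :: l) v
      rw [chainVal_cons, hvreal] at h1
      have h2 := EReal.coe_le_coe_iff.1 h1
      linarith
    have h3 : g (T w) ≤ (((g v).toReal - ⟪w - T w, v - T w⟫ : ℝ) : EReal) :=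
      iSup_le fun l => EReal.coe_le_coe_iff.2 (hlb l)
    rw [hgTreal w] at h3
    have h4 := EReal.coe_le_coe_iff.1 h3
    linarith
  refine ⟨g, ⟨⟨T 0, by rw [hgT0]; simp⟩, hg_ne_bot, ?_, ?_⟩, ?_⟩
  · -- lower semicontinuity
    rw [hg]
    apply lowerSemicontinuous_iSup
    intro l
    exact (continuous_coe_real_ereal.comp (chainVal_continuous T l)).lowerSemicontinuous
  · -- convexity
    intro x y t ht ht1
    have : g (t • x + (1 - t) • y)
        = ⨆ l : List G, ((chainVal T l (t • x + (1 - t) • y) : ℝ) : EReal) := by rw [hg]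
    rw [this]
    refine iSup_le fun l => ?_
    rw [chainVal_affine, EReal.coe_add, EReal.coe_mul, EReal.coe_mul]
    exact add_le_add (ereal_mul_le_mul_left t ht (hle l x))
      (ereal_mul_le_mul_left (1-t) (by linarith) (hle l y))
  · intro z
    have hpint : T z = ∫ ω, ContinuousLinearMap.adjoint (L ω) (P ω (L ω z)) ∂μ := by
      rw [hT]
    rw [← hpint]
    constructor
    · intro v
      rcases eq_or_ne (g v) ⊤ with hv | hv
      · rw [hv, EReal.top_add_of_ne_bot (EReal.coe_ne_bot _)]
        exact le_top
      · have hs := hsub z v hv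
        have hvreal : g v = (((g v).toReal : ℝ) : EReal) :=
          (EReal.coe_toReal hv (hg_ne_bot v)).symm
        rw [hgTreal z, hvreal, ← EReal.coe_add, ← EReal.coe_add, EReal.coe_le_coe_iff]
        have hexp : ‖z - v‖^2 = ‖z - T z‖^2 - 2*⟪z - T z, v - T z⟫ + ‖v - T z‖^2 := by
          have h0 : z - v = (z - T z) - (v - T z) := by abel
          rw [h0, @norm_sub_sq_real]
        have hnn : (0:ℝ) ≤ ‖v - T z‖^2 := by positivity
        have h21 : (2*1 : ℝ) = 2 := by norm_num
        rw [h21]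
        linarith
    · intro v hv
      have h1 := hv (T z)
      have hvt : g v ≠ ⊤ := by
        intro htop
        rw [htop, EReal.top_add_of_ne_bot (EReal.coe_ne_bot _), top_le_iff] at h1
        have h2 : g (T z) + ((‖z - T z‖ ^ 2 / (2 * 1) : ℝ) : EReal) ≠ ⊤ := by
          rw [hgTreal z, ← EReal.coe_add]
          exact EReal.coe_ne_top _
        exact h2 h1
      have hs := hsub z v hvt
      have hvreal : g v = (((g v).toReal : ℝ) : EReal) :=
        (EReal.coe_toReal hvt (hg_ne_bot v)).symm
      rw [hgTreal z, hvreal, ← EReal.coe_add, ← EReal.coe_add, EReal.coe_le_coe_iff] at h1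
      have hexp : ‖z - v‖^2 = ‖z - T z‖^2 - 2*⟪z - T z, v - T z⟫ + ‖v - T z‖^2 := by
        have h0 : z - v = (z - T z) - (v - T z) := by abel
        rw [h0, @norm_sub_sq_real]
      have h21 : (2*1 : ℝ) = 2 := by norm_num
      rw [h21] at h1
      have hsq : ‖v - T z‖^2 ≤ 0 := by linarith
      have hz : ‖v - T z‖^2 = 0 := le_antisymm hsq (by positivity)
      have : v - T z = 0 := by
        have := pow_eq_zero_iff (n := 2) (by norm_num) |>.1 hz
        exact norm_eq_zero.1 this
      have hvp : v = T z := by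
        have := sub_eq_zero.1 this
        exact this
      rw [hvp, hpint]
end

section
/- Let (Ω, F, μ) be a σ-finite measure space and H a separable real Hilbert space, and for each ω ∈ Ω let C_ω be a nonempty closed convex subset of H. Define C = { x ∈ L²(Ω, μ; H) : x(ω) ∈ C_ω for μ-a.e. ω }, and suppose C ≠ ∅ and that ω ↦ proj_{C_ω}(x(ω)) is measurable for each x ∈ L². Then C is a nonempty closed convex subset of L²(Ω, μ; H), and the projection onto C acts fiberwise: for every x ∈ L², (proj_C x)(ω) = proj_{C_ω}(x(ω)) for μ-a.e. ω; moreover d_C(x)² = ∫_Ω d_{C_ω}(x(ω))² dμ(ω). -/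
open MeasureTheory RealInnerProductSpace

private lemma le_infDist_aux {α : Type*} [PseudoMetricSpace α] {s : Set α} {x : α} {b : ℝ}
    (hs : s.Nonempty) (h : ∀ y ∈ s, b ≤ dist x y) : b ≤ Metric.infDist x s := by
  by_contra hlt
  push_neg at hlt
  obtain ⟨y, hy, hd⟩ := (Metric.infDist_lt_iff hs).mp hlt
  exact absurd (h y hy) (not_le.mpr hd)

private lemma proj_dist_le {H : Type*} [NormedAddCommGroup H] [InnerProductSpace ℝ H]
    {K : Set H} {p u : H} (hvar : ∀ c ∈ K, ⟪c - p, u - p⟫ ≤ 0) :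
    ∀ c ∈ K, ‖u - p‖ ≤ ‖u - c‖ := by
  intro c hc
  have h := hvar c hc
  have key : ‖u - p‖ ^ 2 ≤ ‖u - c‖ ^ 2 := by
    have e : u - c = (u - p) - (c - p) := by abel
    rw [e]
    have hexp : ‖(u - p) - (c - p)‖ ^ 2
        = ‖u - p‖ ^ 2 - 2 * ⟪u - p, c - p⟫ + ‖c - p‖ ^ 2 := norm_sub_sq_real _ _
    have hcomm := real_inner_comm (c - p) (u - p)
    nlinarith [sq_nonneg ‖c - p‖]
  have h1 := Real.sqrt_le_sqrt key
  rwa [Real.sqrt_sq (norm_nonneg _), Real.sqrt_sq (norm_nonneg _)] at h1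

private lemma proj_lip {H : Type*} [NormedAddCommGroup H] [InnerProductSpace ℝ H]
    {K : Set H} {p q u v : H} (hp : p ∈ K) (hq : q ∈ K)
    (hvu : ∀ c ∈ K, ⟪c - p, u - p⟫ ≤ 0) (hvv : ∀ c ∈ K, ⟪c - q, v - q⟫ ≤ 0) :
    ‖p - q‖ ≤ ‖u - v‖ := by
  have h1 := hvu q hq
  have h2 := hvv p hp
  have e : ‖p - q‖ ^ 2 ≤ ⟪p - q, u - v⟫ := by
    have hn : (‖p - q‖ : ℝ) ^ 2 = ⟪p - q, p - q⟫ := (real_inner_self_eq_norm_sq _).symm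
    rw [hn]
    simp only [inner_sub_left, inner_sub_right] at h1 h2 ⊢
    linarith
  rcases eq_or_lt_of_le (norm_nonneg (p - q)) with h0 | h0
  · rw [← h0]; exact norm_nonneg _
  · have hcs := real_inner_le_norm (p - q) (u - v)
    have h3 : ‖p - q‖ * ‖p - q‖ ≤ ‖p - q‖ * ‖u - v‖ := by nlinarith
    exact le_of_mul_le_mul_left h3 h0

theorem integral_of_convex_sets_projection
    {Ω H : Type*} [MeasurableSpace Ω] {μ : Measure Ω} [SigmaFinite μ]
    [NormedAddCommGroup H] [InnerProductSpace ℝ H] [CompleteSpace H]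
    [SecondCountableTopology H]
    (C : Ω → Set H)
    (hC : ∀ ω, (C ω).Nonempty ∧ IsClosed (C ω) ∧ Convex ℝ (C ω))
    -- `P ω` is the metric projection onto `C ω`, given by its variational
    -- characterization
    (P : Ω → H → H)
    (hP : ∀ ω, ∀ u : H, P ω u ∈ C ω ∧ ∀ c ∈ C ω, ⟪c - P ω u, u - P ω u⟫ ≤ 0)
    (hPmeas : ∀ x : Ω → H, MemLp x 2 μ →
      AEStronglyMeasurable (fun ω => P ω (x ω)) μ)
    (hCne : {x : Lp H 2 μ | ∀ᵐ ω ∂μ, x ω ∈ C ω}.Nonempty) :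
    Convex ℝ {x : Lp H 2 μ | ∀ᵐ ω ∂μ, x ω ∈ C ω} ∧
      IsClosed {x : Lp H 2 μ | ∀ᵐ ω ∂μ, x ω ∈ C ω} ∧
      ∀ x : Lp H 2 μ,
        MemLp (fun ω => P ω (x ω)) 2 μ ∧
        (∀ᵐ ω ∂μ, P ω (x ω) ∈ C ω) ∧
        (∀ y : Lp H 2 μ, (∀ᵐ ω ∂μ, y ω ∈ C ω) →
          (∫ ω, ⟪y ω - P ω (x ω), x ω - P ω (x ω)⟫ ∂μ) ≤ 0) ∧
        (Metric.infDist x {z : Lp H 2 μ | ∀ᵐ ω ∂μ, z ω ∈ C ω}) ^ 2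
          = ∫ ω, (Metric.infDist (x ω) (C ω)) ^ 2 ∂μ := by
  set S := {x : Lp H 2 μ | ∀ᵐ ω ∂μ, x ω ∈ C ω} with hSdef
  -- fixed points of the projection
  have hfix : ∀ ω, ∀ u ∈ C ω, P ω u = u := by
    intro ω u hu
    have h := (hP ω u).2 u hu
    have : ‖u - P ω u‖ ^ 2 ≤ 0 := by
      rw [← real_inner_self_eq_norm_sq]; exact h
    have h0 : ‖u - P ω u‖ = 0 := le_antisymm (by nlinarith [norm_nonneg (u - P ω u)]) (norm_nonneg _)
    have := norm_eq_zero.mp h0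
    rw [sub_eq_zero] at this
    exact this.symm
  -- `P ∘ x` is in L² for every `x` in L²
  have hmem : ∀ x : Lp H 2 μ, MemLp (fun ω => P ω (x ω)) 2 μ := by
    obtain ⟨x₀, hx₀⟩ := hCne
    intro x
    have hg : MemLp (fun ω => ‖x ω‖ + 2 * ‖x₀ ω‖) 2 μ :=
      (Lp.memLp x).norm.add (((Lp.memLp x₀).norm).const_mul 2)
    refine MemLp.of_le hg (hPmeas x (Lp.memLp x)) ?_
    filter_upwards [hx₀] with ω h0
    have hPfix : P ω (x₀ ω) = x₀ ω := hfix ω _ h0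
    have hlip : ‖P ω (x ω) - P ω (x₀ ω)‖ ≤ ‖x ω - x₀ ω‖ :=
      proj_lip (hP ω (x ω)).1 (hP ω (x₀ ω)).1 (hP ω (x ω)).2 (hP ω (x₀ ω)).2
    have h1 : ‖P ω (x ω)‖ ≤ ‖x ω‖ + 2 * ‖x₀ ω‖ := by
      have := norm_sub_norm_le (P ω (x ω)) (P ω (x₀ ω))
      have htri := norm_sub_le (x ω) (x₀ ω)
      rw [hPfix] at hlip
      calc ‖P ω (x ω)‖ ≤ ‖P ω (x ω) - x₀ ω‖ + ‖x₀ ω‖ := by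
            simpa using norm_add_le (P ω (x ω) - x₀ ω) (x₀ ω)
        _ ≤ ‖x ω - x₀ ω‖ + ‖x₀ ω‖ := by linarith
        _ ≤ ‖x ω‖ + 2 * ‖x₀ ω‖ := by linarith
    calc ‖P ω (x ω)‖ ≤ ‖x ω‖ + 2 * ‖x₀ ω‖ := h1
      _ ≤ ‖‖x ω‖ + 2 * ‖x₀ ω‖‖ := le_abs_self _
  -- ‖f‖² = ∫ ‖f ω‖² for f in L²
  have hnormsq : ∀ f : Lp H 2 μ, ‖f‖ ^ 2 = ∫ ω, ‖f ω‖ ^ 2 ∂μ := by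
    intro f
    have h1 : ⟪f, f⟫ = ∫ ω, ⟪f ω, f ω⟫ ∂μ := L2.inner_def f f
    rw [real_inner_self_eq_norm_sq] at h1
    rw [h1]
    exact integral_congr_ae (Filter.Eventually.of_forall fun ω => real_inner_self_eq_norm_sq _)
  have hint : ∀ f : Lp H 2 μ, Integrable (fun ω => ‖f ω‖ ^ 2) μ := by
    intro f
    exact (L2.integrable_inner (𝕜 := ℝ) f f).congr
      (Filter.Eventually.of_forall fun ω => real_inner_self_eq_norm_sq _)
  -- key construction: the fiberwise projection, as an element of L², realizes infDist
  have hkey : ∀ x : Lp H 2 μ, ∃ p : Lp H 2 μ,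
      (p : Ω → H) =ᵐ[μ] (fun ω => P ω (x ω)) ∧ p ∈ S ∧ ∀ y ∈ S, dist x p ≤ dist x y := by
    intro x
    refine ⟨(hmem x).toLp _, (hmem x).coeFn_toLp, ?_, ?_⟩
    · filter_upwards [(hmem x).coeFn_toLp] with ω h
      rw [hSdef] at *
      rw [h]
      exact (hP ω (x ω)).1
    · intro y hy
      set p : Lp H 2 μ := (hmem x).toLp _ with hp
      have hsq : ‖x - p‖ ^ 2 ≤ ‖x - y‖ ^ 2 := by
        rw [hnormsq, hnormsq]
        refine integral_mono_ae (hint _) (hint _) ?_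
        filter_upwards [Lp.coeFn_sub x p, Lp.coeFn_sub x y, (hmem x).coeFn_toLp, hy]
          with ω h1 h2 h3 h4
        simp only [Pi.sub_apply] at h1 h2
        rw [h1, h2, h3]
        have hle : ‖x ω - P ω (x ω)‖ ≤ ‖x ω - y ω‖ :=
          proj_dist_le (hP ω (x ω)).2 (y ω) h4
        exact pow_le_pow_left₀ (norm_nonneg _) hle 2
      rw [dist_eq_norm, dist_eq_norm]
      have h1 := Real.sqrt_le_sqrt hsq
      rwa [Real.sqrt_sq (norm_nonneg _), Real.sqrt_sq (norm_nonneg _)] at h1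
  refine ⟨?_, ?_, ?_⟩
  · -- convexity
    intro x hx y hy a b ha hb hab
    show ∀ᵐ ω ∂μ, _ ∈ C ω
    filter_upwards [hx, hy, Lp.coeFn_add (a • x) (b • y), Lp.coeFn_smul a x, Lp.coeFn_smul b y]
      with ω h1 h2 h3 h4 h5
    rw [h3]
    simp only [Pi.add_apply]
    rw [h4, h5]
    exact (hC ω).2.2 h1 h2 ha hb hab
  · -- closedness
    refine isClosed_of_closure_subset ?_
    intro x hx
    obtain ⟨p, _, hpS, hmin⟩ := hkey x
    have h0 : Metric.infDist x S = 0 := (Metric.mem_closure_iff_infDist_zero hCne).mp hx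
    have hle : dist x p ≤ Metric.infDist x S := le_infDist_aux ⟨p, hpS⟩ hmin
    have : dist x p = 0 := le_antisymm (h0 ▸ hle) dist_nonneg
    rw [dist_eq_zero] at this
    rw [this]
    exact hpS
  · intro x
    obtain ⟨p, hcoe, hpS, hmin⟩ := hkey x
    refine ⟨hmem x, ?_, ?_, ?_⟩
    · filter_upwards with ω
      exact (hP ω (x ω)).1
    · intro y hy
      refine integral_nonpos_of_ae ?_
      filter_upwards [hy] with ω h
      exact (hP ω (x ω)).2 (y ω) h
    · have hd : Metric.infDist x S = dist x p :=
        le_antisymm (Metric.infDist_le_dist_of_mem (x := x) hpS)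
          (le_infDist_aux ⟨p, hpS⟩ hmin)
      rw [hd, dist_eq_norm, hnormsq]
      refine integral_congr_ae ?_
      filter_upwards [Lp.coeFn_sub x p, hcoe] with ω h1 h2
      simp only [Pi.sub_apply] at h1
      rw [h1, h2]
      congr 1
      refine le_antisymm ?_ ?_
      · refine le_infDist_aux (hC ω).1 ?_
        intro c hc
        rw [dist_eq_norm]
        exact proj_dist_le (hP ω (x ω)).2 c hc
      · have := Metric.infDist_le_dist_of_mem (x := x ω) (hP ω (x ω)).1
        rwa [dist_eq_norm] at this
end

section
/- Let (Ω, F, μ) be a σ-finite measure space and H a separable real Hilbert space, and suppose (C_ω) are nonempty closed convex cones in H with C = {x ∈ L²(Ω, μ; H) : x(ω) ∈ C_ω a.e.} nonempty and fiberwise-measurable projections. Then C is a nonempty closed convex cone in L²(Ω, μ; H) and its polar cone satisfies C^⊖ = { x* ∈ L²(Ω, μ; H) : x*(ω) ∈ C_ω^⊖ for μ-a.e. ω }, where K^⊖ = { u* : ⟨u, u*⟩ ≤ 0 for all u ∈ K }. -/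
open MeasureTheory RealInnerProductSpace Filter

theorem integral_of_cones_polar
    {Ω H : Type*} [MeasurableSpace Ω] {μ : Measure Ω} [SigmaFinite μ]
    [NormedAddCommGroup H] [InnerProductSpace ℝ H] [CompleteSpace H]
    [SecondCountableTopology H]
    (C : Ω → Set H)
    (hC : ∀ ω, (C ω).Nonempty ∧ IsClosed (C ω) ∧ Convex ℝ (C ω) ∧
      ∀ u ∈ C ω, ∀ t : ℝ, 0 ≤ t → t • u ∈ C ω)
    (P : Ω → H → H)
    (hP : ∀ ω, ∀ u : H, P ω u ∈ C ω ∧ ∀ c ∈ C ω, ⟪c - P ω u, u - P ω u⟫ ≤ 0)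
    (hPmeas : ∀ x : Ω → H, MemLp x 2 μ →
      AEStronglyMeasurable (fun ω => P ω (x ω)) μ)
    (hCne : {x : Lp H 2 μ | ∀ᵐ ω ∂μ, x ω ∈ C ω}.Nonempty) :
    Convex ℝ {x : Lp H 2 μ | ∀ᵐ ω ∂μ, x ω ∈ C ω} ∧
      IsClosed {x : Lp H 2 μ | ∀ᵐ ω ∂μ, x ω ∈ C ω} ∧
      (∀ x : Lp H 2 μ, (∀ᵐ ω ∂μ, x ω ∈ C ω) → ∀ t : ℝ, 0 ≤ t →
        ∀ᵐ ω ∂μ, (t • x : Lp H 2 μ) ω ∈ C ω) ∧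
      {x' : Lp H 2 μ |
          ∀ y : Lp H 2 μ, (∀ᵐ ω ∂μ, y ω ∈ C ω) → ⟪y, x'⟫ ≤ 0}
        = {x' : Lp H 2 μ |
            ∀ᵐ ω ∂μ, x' ω ∈ {u' : H | ∀ u ∈ C ω, ⟪u, u'⟫ ≤ 0}} := by
  -- 0 is in each fiber
  have h0 : ∀ ω, (0 : H) ∈ C ω := by
    intro ω
    obtain ⟨u, hu⟩ := (hC ω).1
    simpa using (hC ω).2.2.2 u hu 0 le_rfl
  -- ⟪P ω u, u - P ω u⟫ = 0
  have hPorth : ∀ ω u, ⟪P ω u, u - P ω u⟫ = 0 := by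
    intro ω u
    have h1 := (hP ω u).2 0 (h0 ω)
    have h2 := (hP ω u).2 ((2 : ℝ) • P ω u)
      ((hC ω).2.2.2 _ (hP ω u).1 2 (by norm_num))
    rw [zero_sub, inner_neg_left, neg_nonpos] at h1
    have h3 : (2 : ℝ) • P ω u - P ω u = P ω u := by
      rw [two_smul]; abel
    rw [h3] at h2
    exact le_antisymm h2 h1
  have hPinner : ∀ ω u, ⟪P ω u, u⟫ = ‖P ω u‖ ^ 2 := by
    intro ω u
    have := hPorth ω u
    rw [inner_sub_right] at this
    rw [sub_eq_zero] at this
    rw [this, real_inner_self_eq_norm_sq]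
  have hPnorm : ∀ ω u, ‖P ω u‖ ≤ ‖u‖ := by
    intro ω u
    rcases eq_or_lt_of_le (norm_nonneg (P ω u)) with h | h
    · rw [← h]; exact norm_nonneg u
    · have h1 : ‖P ω u‖ ^ 2 ≤ ‖P ω u‖ * ‖u‖ := by
        rw [← hPinner ω u]; exact real_inner_le_norm _ _
      nlinarith
  refine ⟨?_, ?_, ?_, ?_⟩
  · -- convex
    intro x hx y hy a b ha hb hab
    have hs := Lp.coeFn_smul a x
    filter_upwards [hx, hy, Lp.coeFn_add (a • x) (b • y), Lp.coeFn_smul a x,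
      Lp.coeFn_smul b y] with ω h1 h2 h3 h4 h5
    show ((a • x + b • y : Lp H 2 μ) : Ω → H) ω ∈ C ω
    rw [h3, Pi.add_apply, h4, h5, Pi.smul_apply, Pi.smul_apply]
    exact (hC ω).2.2.1 h1 h2 ha hb hab
  · -- closed
    refine IsSeqClosed.isClosed ?_
    intro f x hf hfx
    have htend : Tendsto (fun n => eLpNorm (⇑(f n) - ⇑x) 2 μ) atTop (nhds 0) :=
      (Lp.tendsto_Lp_iff_tendsto_eLpNorm' f x).mp hfx
    have hmeas : TendstoInMeasure μ (fun n => ⇑(f n)) atTop ⇑x :=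
      tendstoInMeasure_of_tendsto_eLpNorm (by norm_num)
        (fun n => Lp.aestronglyMeasurable (f n)) (Lp.aestronglyMeasurable x) htend
    obtain ⟨ns, _, hae⟩ := hmeas.exists_seq_tendsto_ae
    have hall : ∀ᵐ ω ∂μ, ∀ n, (f (ns n)) ω ∈ C ω := ae_all_iff.mpr fun n => hf (ns n)
    filter_upwards [hae, hall] with ω h1 h2
    exact (hC ω).2.1.mem_of_tendsto h1 (Eventually.of_forall h2)
  · -- cone
    intro x hx t ht
    filter_upwards [hx, Lp.coeFn_smul t x] with ω h1 h2
    rw [h2, Pi.smul_apply]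
    exact (hC ω).2.2.2 _ h1 t ht
  · -- polar cone
    ext x'
    simp only [Set.mem_setOf_eq]
    constructor
    · intro hx'
      -- projection of x' pointwise
      set p : Ω → H := fun ω => P ω (x' ω) with hp
      have hpmeas : AEStronglyMeasurable p μ := hPmeas _ (Lp.memLp x')
      have hpmem : MemLp p 2 μ :=
        MemLp.of_le (Lp.memLp x') hpmeas (Eventually.of_forall fun ω => hPnorm ω (x' ω))
      set y : Lp H 2 μ := hpmem.toLp p with hy
      have hyp : ⇑y =ᵐ[μ] p := MemLp.coeFn_toLp hpmem
      have hyC : ∀ᵐ ω ∂μ, y ω ∈ C ω := by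
        filter_upwards [hyp] with ω h1
        rw [h1]; exact (hP ω (x' ω)).1
      have hle := hx' y hyC
      rw [L2.inner_def] at hle
      have heq : (fun ω => ⟪y ω, x' ω⟫) =ᵐ[μ] fun ω => ‖p ω‖ ^ 2 := by
        filter_upwards [hyp] with ω h1
        rw [h1]; exact hPinner ω (x' ω)
      rw [integral_congr_ae heq] at hle
      have hint : Integrable (fun ω => ‖p ω‖ ^ 2) μ := by
        have := L2.integrable_inner (𝕜 := ℝ) y y
        refine this.congr ?_
        filter_upwards [hyp] with ω h1
        rw [h1, real_inner_self_eq_norm_sq]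
      have hzero : ∫ ω, ‖p ω‖ ^ 2 ∂μ = 0 :=
        le_antisymm hle (integral_nonneg fun ω => sq_nonneg _)
      have hp0 : (fun ω => ‖p ω‖ ^ 2) =ᵐ[μ] 0 :=
        (integral_eq_zero_iff_of_nonneg (fun ω => sq_nonneg _) hint).mp hzero
      filter_upwards [hp0] with ω h1
      intro u hu
      have hpz : p ω = 0 := by
        have : ‖p ω‖ ^ 2 = 0 := h1
        simpa [pow_eq_zero_iff] using this
      have := (hP ω (x' ω)).2 u hu
      rw [hp] at hpz
      simp only [hpz, sub_zero] at this
      exact this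
    · intro hx' y hy
      rw [L2.inner_def]
      refine integral_nonpos_of_ae ?_
      filter_upwards [hx', hy] with ω h1 h2
      exact h1 _ h2
end
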